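/- arXiv:1401.2257 — 9 statements merged into one kernel-verified Lean document; each statement's English description precedes it below -/
import Mathlib

section
/- Let X be a paracompact Hausdorff topological space, B a real Banach space, and F a multivalued mapping from X to B which is lower semicontinuous and such that for every x ∈ X the value F(x) is a nonempty closed convex subset of B. Then F admits a continuous singlevalued selection, i.e. a continuous map f : X → B with f(x) ∈ F(x) for every x ∈ X. -/
open Set Metric Filter Topology Pointwise

section aux
variable {X B : Type*} [TopologicalSpace X] [ParacompactSpace X] [T2Space X]
    [NormedAddCommGroup B] [NormedSpace ℝ B]
    (F : X → Set B)
    (hLSC : ∀ U : Set B, IsOpen U → IsOpen {x : X | (F x ∩ U).Nonempty})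
    (hne : ∀ x : X, (F x).Nonempty)
    (hconv : ∀ x : X, Convex ℝ (F x))

include hLSC hne hconv in
/-- base approximate selection -/
theorem michael_aux_base : ∃ g : X → B, Continuous g ∧
    ∀ x, ∃ z ∈ F x, dist (g x) z < 1 := by
  obtain ⟨g, hg⟩ := exists_continuous_forall_mem_convex_of_local_const
    (t := fun x => F x + ball (0 : B) 1)
    (fun x => ((hconv x).add (convex_ball _ _)))
    (fun x => by
      obtain ⟨z, hz⟩ := hne x
      refine ⟨z, ?_⟩
      have hopen := hLSC (ball z 1) isOpen_ball
      have hxmem : x ∈ {x : X | (F x ∩ ball z 1).Nonempty} := ⟨z, hz, by simp⟩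
      filter_upwards [hopen.mem_nhds hxmem] with y hy
      obtain ⟨w, hwF, hwb⟩ := hy
      exact ⟨w, hwF, z - w, by simpa [dist_comm, dist_eq_norm] using hwb, by module⟩)
  refine ⟨g, g.continuous, fun x => ?_⟩
  obtain ⟨a, ha, b, hb, hab⟩ := hg x
  exact ⟨a, ha, by simp only [← hab]; simpa [dist_eq_norm] using hb⟩

include hLSC hconv in
/-- iteration step -/
theorem michael_aux_step {ε δ : ℝ} (hε : 0 < ε) (hδ : 0 < δ)
    (g : X → B) (hgc : Continuous g) (hg : ∀ x, ∃ z ∈ F x, dist (g x) z < ε) :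
    ∃ g' : X → B, Continuous g' ∧ (∀ x, ∃ z ∈ F x, dist (g' x) z < δ) ∧
      ∀ x, dist (g' x) (g x) < ε + δ := by
  obtain ⟨g', hg'⟩ := exists_continuous_forall_mem_convex_of_local_const
    (t := fun x => (F x ∩ ball (g x) ε) + ball (0 : B) δ)
    (fun x => (((hconv x).inter (convex_ball _ _)).add (convex_ball _ _)))
    (fun x => by
      obtain ⟨z, hzF, hzd⟩ := hg x
      set r : ℝ := ε - dist (g x) z with hr
      have hr0 : 0 < r := by simp [hr]; linarith
      have hm0 : 0 < min (r / 2) δ := lt_min (by linarith) hδ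
      refine ⟨z, ?_⟩
      have hopen := hLSC (ball z (min (r / 2) δ)) isOpen_ball
      have hxmem : x ∈ {x : X | (F x ∩ ball z (min (r / 2) δ)).Nonempty} :=
        ⟨z, hzF, by simpa using hm0⟩
      have h2 : ∀ᶠ y in 𝓝 x, dist (g y) (g x) < r / 2 := by
        have := (hgc.tendsto x) (ball_mem_nhds (g x) (by linarith : (0:ℝ) < r/2))
        filter_upwards [this] with y hy using by simpa using hy
      filter_upwards [hopen.mem_nhds hxmem, h2] with y hy hgy
      obtain ⟨w, hwF, hwb⟩ := hy
      have hwz : dist w z < min (r / 2) δ := by simpa using hwb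
      refine ⟨w, ⟨hwF, ?_⟩, z - w, ?_, by module⟩
      · have : dist w (g y) ≤ dist w z + dist z (g x) + dist (g x) (g y) :=
          dist_triangle4 _ _ _ _
        have h3 : dist z (g x) = ε - r := by rw [hr, dist_comm]; ring
        have h4 : dist (g x) (g y) < r / 2 := by rwa [dist_comm]
        have h5 : dist w z < r / 2 := lt_of_lt_of_le hwz (min_le_left _ _)
        simp only [mem_ball]
        calc dist w (g y) ≤ dist w z + dist z (g x) + dist (g x) (g y) := this
          _ < r / 2 + (ε - r) + r / 2 := by rw [h3]; linarith
          _ = ε := by ring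
      · have : dist z w < δ := lt_of_lt_of_le (by rwa [dist_comm]) (min_le_right _ _)
        simpa [dist_eq_norm] using this)
  refine ⟨g', g'.continuous, fun x => ?_, fun x => ?_⟩
  · obtain ⟨a, ⟨haF, _⟩, b, hb, hab⟩ := hg' x
    exact ⟨a, haF, by simp only [← hab]; simpa [dist_eq_norm] using hb⟩
  · obtain ⟨a, ⟨haF, hab'⟩, b, hb, hab⟩ := hg' x
    have h1 : dist (g' x) a < δ := by
      simp only [← hab]; simpa [dist_eq_norm] using hb
    have h2 : dist a (g x) < ε := by simpa [dist_comm] using hab'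
    calc dist (g' x) (g x) ≤ dist (g' x) a + dist a (g x) := dist_triangle _ _ _
      _ < δ + ε := add_lt_add h1 h2
      _ = ε + δ := by ring

end aux

/-- Michael's convexvalued selection theorem: every lower semicontinuous
multivalued mapping from a paracompact Hausdorff space into a real Banach space,
with nonempty closed convex values, admits a continuous singlevalued selection. -/
theorem michael_convexvalued_selection
    {X B : Type*} [TopologicalSpace X] [ParacompactSpace X] [T2Space X]
    [NormedAddCommGroup B] [NormedSpace ℝ B] [CompleteSpace B]
    (F : X → Set B)
    (hLSC : ∀ U : Set B, IsOpen U → IsOpen {x : X | (F x ∩ U).Nonempty})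
    (hne : ∀ x : X, (F x).Nonempty)
    (hclosed : ∀ x : X, IsClosed (F x))
    (hconv : ∀ x : X, Convex ℝ (F x)) :
    ∃ f : X → B, Continuous f ∧ ∀ x : X, f x ∈ F x := by
  classical
  obtain ⟨g0, hg0c, hg0⟩ := michael_aux_base F hLSC hne hconv
  have step : ∀ n : ℕ, ∀ g : X → B, Continuous g →
      (∀ x, ∃ z ∈ F x, dist (g x) z < (1/2 : ℝ) ^ n) →
      ∃ g' : X → B, Continuous g' ∧ (∀ x, ∃ z ∈ F x, dist (g' x) z < (1/2 : ℝ) ^ (n+1)) ∧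
        ∀ x, dist (g' x) (g x) < (1/2 : ℝ) ^ n + (1/2 : ℝ) ^ (n+1) := fun n g hc hg =>
    michael_aux_step F hLSC hconv (by positivity) (by positivity) g hc hg
  choose! G hGc hGs hGd using step
  set f : ℕ → X → B := fun n => Nat.rec g0 (fun n g => G n g) n with hf
  have inv : ∀ n : ℕ, Continuous (f n) ∧ ∀ x, ∃ z ∈ F x, dist (f n x) z < (1/2 : ℝ) ^ n := by
    intro n
    induction n with
    | zero => exact ⟨hg0c, fun x => by have := hg0 x; rw [pow_zero]; exact this⟩
    | succ n ih =>
      have h1 : f (n+1) = G n (f n) := rfl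
      rw [h1]
      exact ⟨hGc n (f n) ih.1 ih.2, hGs n (f n) ih.1 ih.2⟩
  have hd : ∀ n : ℕ, ∀ x : X, dist (f n x) (f (n+1) x) ≤ 2 * (1/2 : ℝ) ^ n := by
    intro n x
    have h1 : f (n+1) = G n (f n) := rfl
    have := hGd n (f n) (inv n).1 (inv n).2 x
    rw [h1, dist_comm]
    calc dist (G n (f n) x) (f n x) ≤ (1/2 : ℝ) ^ n + (1/2 : ℝ) ^ (n+1) := this.le
      _ ≤ 2 * (1/2 : ℝ) ^ n := by rw [pow_succ]; nlinarith [pow_pos (by norm_num : (0:ℝ) < 1/2) n]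
  have hcauchy : ∀ x : X, CauchySeq (fun n => f n x) := fun x =>
    cauchySeq_of_le_geometric (1/2) 2 (by norm_num) (fun n => hd n x)
  choose flim hflim using fun x => cauchySeq_tendsto_of_complete (hcauchy x)
  have hbound : ∀ n : ℕ, ∀ x : X, dist (f n x) (flim x) ≤ 4 * (1/2 : ℝ) ^ n := by
    intro n x
    have := dist_le_of_le_geometric_of_tendsto (1/2) 2 (by norm_num) (fun n => hd n x)
      (hflim x) n
    calc dist (f n x) (flim x) ≤ 2 * (1/2 : ℝ) ^ n / (1 - 1/2) := this
      _ = 4 * (1/2 : ℝ) ^ n := by ring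
  have hunif : TendstoUniformly (fun n x => f n x) flim Filter.atTop := by
    rw [Metric.tendstoUniformly_iff]
    intro ε hε
    obtain ⟨N, hN⟩ := exists_pow_lt_of_lt_one (show (0:ℝ) < ε/4 by positivity)
      (by norm_num : (1/2 : ℝ) < 1)
    filter_upwards [Filter.eventually_ge_atTop N] with n hn x
    have h1 : (1/2 : ℝ) ^ n ≤ (1/2 : ℝ) ^ N :=
      pow_le_pow_of_le_one (by norm_num) (by norm_num) hn
    calc dist (flim x) (f n x) = dist (f n x) (flim x) := dist_comm _ _
      _ ≤ 4 * (1/2 : ℝ) ^ n := hbound n x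
      _ ≤ 4 * (1/2 : ℝ) ^ N := by linarith
      _ < ε := by linarith
  refine ⟨flim, hunif.continuous (Filter.Eventually.of_forall fun n => (inv n).1).frequently, fun x => ?_⟩
  rw [← (hclosed x).closure_eq]
  rw [Metric.mem_closure_iff]
  intro ε hε
  obtain ⟨n, hn⟩ := exists_pow_lt_of_lt_one (show (0:ℝ) < ε/5 by positivity)
    (by norm_num : (1/2 : ℝ) < 1)
  obtain ⟨z, hzF, hzd⟩ := (inv n).2 x
  refine ⟨z, hzF, ?_⟩
  calc dist (flim x) z ≤ dist (flim x) (f n x) + dist (f n x) z := dist_triangle _ _ _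
    _ ≤ 4 * (1/2 : ℝ) ^ n + (1/2 : ℝ) ^ n := by
        have := hbound n x; rw [dist_comm]; linarith
    _ = 5 * (1/2 : ℝ) ^ n := by ring
    _ < ε := by linarith
end

section
/- Let X be a paracompact Hausdorff space which is zero-dimensional in the covering-dimension sense, meaning that every open cover of X admits a refinement consisting of pairwise disjoint open sets. Let (Y,d) be a complete metric space and let F be a lower semicontinuous multivalued mapping from X to Y such that every value F(x) is a nonempty closed subset of Y. Then F admits a continuous singlevalued selection. -/
open Metric Filter Topology

/-- Abstract one-step selection lemma for zero-dimensional spaces. -/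
lemma michael_aux_step_s1 {X Y : Type*} [TopologicalSpace X] [TopologicalSpace Y] [Nonempty Y]
    (hdim : ∀ 𝒰 : Set (Set X), (∀ U ∈ 𝒰, IsOpen U) → ⋃₀ 𝒰 = Set.univ →
      ∃ 𝒱 : Set (Set X), (∀ V ∈ 𝒱, IsOpen V) ∧
        𝒱.Pairwise Disjoint ∧ ⋃₀ 𝒱 = Set.univ ∧ ∀ V ∈ 𝒱, ∃ U ∈ 𝒰, V ⊆ U)
    (P : X → Y → Prop)
    (hopen : ∀ y, IsOpen {x | P x y}) (hex : ∀ x, ∃ y, P x y) :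
    ∃ f : X → Y, Continuous f ∧ ∀ x, P x (f x) := by
  classical
  set 𝒰 : Set (Set X) := {U | ∃ y, U = {x | P x y}} with h𝒰
  have hUopen : ∀ U ∈ 𝒰, IsOpen U := by rintro U ⟨y, rfl⟩; exact hopen y
  have hUcov : ⋃₀ 𝒰 = Set.univ := by
    apply Set.eq_univ_of_forall
    intro x
    obtain ⟨y, hy⟩ := hex x
    exact ⟨{x | P x y}, ⟨y, rfl⟩, hy⟩
  obtain ⟨𝒱, hVopen, hVdisj, hVcov, hVsub⟩ := hdim 𝒰 hUopen hUcov
  have hVy : ∀ V ∈ 𝒱, ∃ y, V ⊆ {x | P x y} := by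
    intro V hV
    obtain ⟨U, ⟨y, rfl⟩, hsub⟩ := hVsub V hV
    exact ⟨y, hsub⟩
  choose! yF hyF using hVy
  have hx : ∀ x : X, ∃ V ∈ 𝒱, x ∈ V := by
    intro x
    have : x ∈ ⋃₀ 𝒱 := hVcov ▸ Set.mem_univ x
    exact this
  choose Vx hVmem hVx using hx
  refine ⟨fun x => yF (Vx x), ?_, fun x => hyF _ (hVmem x) (hVx x)⟩
  apply IsLocallyConstant.continuous
  rw [IsLocallyConstant.iff_exists_open]
  intro x
  refine ⟨Vx x, hVopen _ (hVmem x), hVx x, fun x' hx' => ?_⟩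
  have : Vx x' = Vx x := by
    by_contra hne
    exact Set.disjoint_iff.mp (hVdisj (hVmem x') (hVmem x) hne) ⟨hVx x', hx'⟩
  rw [this]

/-- Michael's zero-dimensional selection theorem: every lower semicontinuous
closed-valued multivalued mapping from a zero-dimensional (in the covering sense)
paracompact Hausdorff space into a complete metric space admits a continuous
singlevalued selection. -/
theorem michael_zero_dimensional_selection
    {X Y : Type*} [TopologicalSpace X] [ParacompactSpace X] [T2Space X]
    [MetricSpace Y] [CompleteSpace Y]
    (hdim : ∀ 𝒰 : Set (Set X), (∀ U ∈ 𝒰, IsOpen U) → ⋃₀ 𝒰 = Set.univ →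
      ∃ 𝒱 : Set (Set X), (∀ V ∈ 𝒱, IsOpen V) ∧
        𝒱.Pairwise Disjoint ∧ ⋃₀ 𝒱 = Set.univ ∧ ∀ V ∈ 𝒱, ∃ U ∈ 𝒰, V ⊆ U)
    (F : X → Set Y)
    (hLSC : ∀ U : Set Y, IsOpen U → IsOpen {x : X | (F x ∩ U).Nonempty})
    (hne : ∀ x : X, (F x).Nonempty)
    (hclosed : ∀ x : X, IsClosed (F x)) :
    ∃ f : X → Y, Continuous f ∧ ∀ x : X, f x ∈ F x := by
  classical
  rcases isEmpty_or_nonempty X with hX | hX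
  · exact ⟨isEmptyElim, continuous_iff_continuousAt.mpr fun x => isEmptyElim x,
      fun x => isEmptyElim x⟩
  haveI : Nonempty Y := ⟨(hne (Classical.arbitrary X)).choose⟩
  -- approximation property
  set r : ℝ := (1/2 : ℝ) with hr
  have hr0 : (0:ℝ) < r := by norm_num [hr]
  -- base
  have base : ∃ g : X → Y, Continuous g ∧ ∀ x, (F x ∩ ball (g x) (r ^ 0)).Nonempty := by
    apply michael_aux_step_s1 hdim (fun x y => (F x ∩ ball y (r ^ 0)).Nonempty)
    · intro y; exact hLSC _ isOpen_ball
    · intro x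
      obtain ⟨z, hz⟩ := hne x
      exact ⟨z, z, hz, by simp [mem_ball, hr0, pow_pos]⟩
  -- step
  have key : ∀ (n : ℕ) (g : X → Y), Continuous g →
      (∀ x, (F x ∩ ball (g x) (r ^ n)).Nonempty) →
      ∃ g' : X → Y, Continuous g' ∧
        (∀ x, (F x ∩ ball (g' x) (r ^ (n+1))).Nonempty) ∧
        ∀ x, dist (g x) (g' x) < r ^ n := by
    intro n g hg hgx
    have := michael_aux_step_s1 hdim
      (fun x y => (F x ∩ ball y (r ^ (n+1))).Nonempty ∧ dist (g x) y < r ^ n)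
      (fun y => by
        apply IsOpen.inter (hLSC _ isOpen_ball)
        have : Continuous fun x => dist (g x) y := hg.dist continuous_const
        exact isOpen_lt this continuous_const)
      (fun x => by
        obtain ⟨z, hzF, hzd⟩ := hgx x
        exact ⟨z, ⟨z, hzF, by simp [mem_ball, pow_pos hr0]⟩, mem_ball'.mp hzd⟩)
    obtain ⟨g', hg', hP⟩ := this
    exact ⟨g', hg', fun x => (hP x).1, fun x => (hP x).2⟩
  -- build the sequence
  choose g0 hg0c hg0 using base
  let T : ℕ → Type _ := fun n => {g : X → Y // Continuous g ∧ ∀ x, (F x ∩ ball (g x) (r ^ n)).Nonempty}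
  let step : ∀ n, T n → T (n+1) := fun n g =>
    ⟨(key n g.1 g.2.1 g.2.2).choose, (key n g.1 g.2.1 g.2.2).choose_spec.1,
      (key n g.1 g.2.1 g.2.2).choose_spec.2.1⟩
  let seq : ∀ n, T n := fun n => Nat.rec ⟨g0, hg0c, hg0⟩ step n
  have hseq_succ : ∀ n, seq (n+1) = step n (seq n) := fun n => rfl
  have hdist : ∀ n x, dist ((seq n).1 x) ((seq (n+1)).1 x) < r ^ n := by
    intro n x
    exact (key n (seq n).1 (seq n).2.1 (seq n).2.2).choose_spec.2.2 x
  -- pointwise Cauchy and limit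
  have hcauchy : ∀ x : X, CauchySeq fun n => (seq n).1 x := by
    intro x
    apply cauchySeq_of_le_geometric r 1 (by norm_num [hr])
    intro n
    calc dist ((seq n).1 x) ((seq (n+1)).1 x) ≤ r ^ n := (hdist n x).le
    _ = 1 * r ^ n := (one_mul _).symm
  choose glim hglim using fun x => cauchySeq_tendsto_of_complete (hcauchy x)
  have hbound : ∀ n x, dist ((seq n).1 x) (glim x) ≤ 1 * r ^ n / (1 - r) := by
    intro n x
    apply dist_le_of_le_geometric_of_tendsto r 1 (by norm_num [hr])
      (fun m => by rw [one_mul]; exact (hdist m x).le) (hglim x)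
  have hb2 : ∀ n x, dist ((seq n).1 x) (glim x) ≤ 2 * r ^ n := by
    intro n x
    calc dist ((seq n).1 x) (glim x) ≤ 1 * r ^ n / (1 - r) := hbound n x
    _ = 2 * r ^ n := by rw [hr]; ring
  have hrpow : Tendsto (fun n : ℕ => r ^ n) atTop (𝓝 0) :=
    tendsto_pow_atTop_nhds_zero_of_lt_one hr0.le (by norm_num [hr])
  -- uniform convergence
  have huc : TendstoUniformly (fun n x => (seq n).1 x) glim atTop := by
    rw [Metric.tendstoUniformly_iff]
    intro ε hε
    have : ∀ᶠ n in atTop, 2 * r ^ n < ε := by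
      have : Tendsto (fun n : ℕ => 2 * r ^ n) atTop (𝓝 (2 * 0)) :=
        hrpow.const_mul 2
      rw [mul_zero] at this
      exact this.eventually (eventually_lt_nhds hε)  -- maybe wrong name
    filter_upwards [this] with n hn x
    calc dist (glim x) ((seq n).1 x) = dist ((seq n).1 x) (glim x) := dist_comm _ _
    _ ≤ 2 * r ^ n := hb2 n x
    _ < ε := hn
  have hgc : Continuous glim :=
    huc.continuous (Eventually.of_forall (f := atTop) fun n => (seq n).2.1).frequently
  refine ⟨glim, hgc, fun x => ?_⟩
  rw [← (hclosed x).closure_eq]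
  rw [Metric.mem_closure_iff]
  intro ε hε
  have : ∀ᶠ n in atTop, 3 * r ^ n < ε := by
    have h3 : Tendsto (fun n : ℕ => 3 * r ^ n) atTop (𝓝 (3 * 0)) := hrpow.const_mul 3
    rw [mul_zero] at h3
    exact h3.eventually (eventually_lt_nhds hε)
  obtain ⟨n, hn⟩ := this.exists
  obtain ⟨z, hzF, hzd⟩ := (seq n).2.2 x
  refine ⟨z, hzF, ?_⟩
  calc dist (glim x) z ≤ dist (glim x) ((seq n).1 x) + dist ((seq n).1 x) z :=
        dist_triangle _ _ _
  _ ≤ 2 * r ^ n + r ^ n := by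
      gcongr
      · rw [dist_comm]; exact hb2 n x
      · exact (mem_ball'.mpr hzd).le  -- hzd : z ∈ ball ((seq n).1 x) (r^n)
  _ = 3 * r ^ n := by ring
  _ < ε := hn
end

section
/- Let X be a paracompact Hausdorff space, (Y,d) a complete metric space, and F a lower semicontinuous multivalued mapping from X to Y such that every value F(x) is a nonempty closed subset of Y. Then there exist multivalued mappings G and H from X to Y such that for every x ∈ X the sets G(x) and H(x) are nonempty compact, G(x) ⊆ H(x) ⊆ F(x), G is lower semicontinuous, and H is upper semicontinuous. -/
open Set Metric Topology Filter

namespace MCV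

noncomputable def r (n : ℕ) : ℝ := (2:ℝ)⁻¹ ^ n

lemma r_pos (n : ℕ) : 0 < r n := pow_pos (by norm_num) n

lemma r_succ (n : ℕ) : r (n+1) = r n / 2 := by
  simp only [r, pow_succ]; ring

lemma r_anti {m n : ℕ} (h : m ≤ n) : r n ≤ r m :=
  pow_le_pow_of_le_one (by norm_num) (by norm_num) h

lemma r_lt {ε : ℝ} (hε : 0 < ε) : ∃ n, r n < ε := by
  obtain ⟨n, hn⟩ := exists_pow_lt_of_lt_one hε (by norm_num : (2:ℝ)⁻¹ < 1)
  exact ⟨n, hn⟩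

lemma sum_r (i j : ℕ) : ∑ m ∈ Finset.Ico i j, r m ≤ 2 * r i := by
  rw [Finset.sum_Ico_eq_sum_range]
  have h : ∀ m : ℕ, r (i + m) = r i * (2⁻¹:ℝ)^m := fun m => pow_add _ _ _
  calc ∑ m ∈ Finset.range (j - i), r (i + m)
      = r i * ∑ m ∈ Finset.range (j - i), (2⁻¹:ℝ)^m := by
        rw [Finset.mul_sum]; exact Finset.sum_congr rfl fun m _ => h m
    _ ≤ r i * 2 := by
        refine mul_le_mul_of_nonneg_left ?_ (r_pos i).le
        have := sum_geometric_two_le (j - i)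
        simpa [one_div] using this
    _ = 2 * r i := mul_comm _ _

lemma sum_r_le (i j : ℕ) : ∑ m ∈ Finset.Ico i j, (r m + r (m+1)) ≤ 3 * r i := by
  have h1 : ∀ m ∈ Finset.Ico i j, r m + r (m+1) = (3/2) * r m := by
    intro m _; rw [r_succ]; ring
  rw [Finset.sum_congr rfl h1, ← Finset.mul_sum]
  have h2 := sum_r i j
  nlinarith [r_pos i]


variable {X Y : Type*} [TopologicalSpace X] [ParacompactSpace X] [T2Space X]
  [MetricSpace Y] [CompleteSpace Y]

/-- The basic open sets: `F x` meets all the balls prescribed by the node `ν`. -/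
def good (F : X → Set Y) (n : ℕ) (ν : Fin (n+1) → Y) : Set X :=
  {x | (F x ∩ ⋂ m : Fin (n+1), ball (ν m) (r m)).Nonempty}

lemma mem_good {F : X → Set Y} {n : ℕ} {ν : Fin (n+1) → Y} {x : X} :
    x ∈ good F n ν ↔ ∃ p ∈ F x, ∀ m : Fin (n+1), dist p (ν m) < r m := by
  constructor
  · rintro ⟨p, hpF, hpB⟩
    exact ⟨p, hpF, fun m => by simpa using mem_iInter.1 hpB m⟩
  · rintro ⟨p, hpF, hp⟩
    exact ⟨p, hpF, mem_iInter.2 fun m => by simpa using hp m⟩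

lemma isOpen_good {F : X → Set Y}
    (hLSC : ∀ U : Set Y, IsOpen U → IsOpen {x : X | (F x ∩ U).Nonempty})
    (n : ℕ) (ν : Fin (n+1) → Y) : IsOpen (good F n ν) :=
  hLSC _ (isOpen_iInter_of_finite fun _ => isOpen_ball)

/-- Data for one level of the tree. -/
structure LD (F : X → Set Y) (n : ℕ) where
  T : (Fin (n+1) → Y) → Set X
  N : (Fin (n+1) → Y) → Set X
  oT : ∀ ν, IsOpen (T ν)
  oN : ∀ ν, IsOpen (N ν)
  lf : LocallyFinite T
  Tgood : ∀ ν, closure (T ν) ⊆ good F n ν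
  NT : ∀ ν, closure (N ν) ⊆ T ν

structure Tower (F : X → Set Y) where
  L : ∀ n, LD F n
  link1 : ∀ n (σ : Fin (n+1) → Y) (y : Y), (L (n+1)).T (Fin.snoc σ y) ⊆ (L n).T σ
  link2 : ∀ n (σ : Fin (n+1) → Y),
    closure ((L n).N σ) ⊆ ⋃ y : Y, (L (n+1)).N (Fin.snoc σ y)
  cover0 : ⋃ ν, (L 0).N ν = univ

section Construction

variable {F : X → Set Y}

lemma root_exists (hLSC : ∀ U : Set Y, IsOpen U → IsOpen {x : X | (F x ∩ U).Nonempty})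
    (hne : ∀ x : X, (F x).Nonempty) : ∃ d : LD F 0, ⋃ ν, d.N ν = univ := by
  have uc : ⋃ ν : Fin 1 → Y, good F 0 ν = univ := by
    refine eq_univ_of_forall fun x => ?_
    obtain ⟨p, hp⟩ := hne x
    exact mem_iUnion.2 ⟨fun _ => p, mem_good.2 ⟨p, hp, fun m => by
      simpa using r_pos (m : ℕ)⟩⟩
  obtain ⟨P, Po, Pc, Plf, Psub⟩ := precise_refinement (fun ν : Fin 1 → Y => good F 0 ν)
    (fun ν => isOpen_good hLSC 0 ν) uc
  obtain ⟨T, hT1, hT2, hT3⟩ := exists_subset_iUnion_closure_subset isClosed_univ Po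
    (fun x _ => Plf.point_finite x) (Pc ▸ subset_rfl)
  have Tlf : LocallyFinite T := Plf.subset fun ν => subset_closure.trans (hT3 ν)
  obtain ⟨N, hN1, hN2, hN3⟩ := exists_subset_iUnion_closure_subset isClosed_univ hT2
    (fun x _ => Tlf.point_finite x) hT1
  refine ⟨⟨T, N, hT2, hN2, Tlf, fun ν => (hT3 ν).trans (Psub ν), hN3⟩,
    univ_subset_iff.1 hN1⟩

lemma step_exists (hLSC : ∀ U : Set Y, IsOpen U → IsOpen {x : X | (F x ∩ U).Nonempty}) (n : ℕ) (d : LD F n) :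
    ∃ d' : LD F (n+1),
      (∀ σ y, d'.T (Fin.snoc σ y) ⊆ d.T σ) ∧
      (∀ σ, closure (d.N σ) ⊆ ⋃ y : Y, d'.N (Fin.snoc σ y)) := by
  classical
  -- per-parent precise refinements
  have hcov : ∀ σ : Fin (n+1) → Y, ∃ w : Option Y → Set X,
      (∀ o, IsOpen (w o)) ∧ LocallyFinite w ∧
      (∀ y, w (some y) ⊆ good F (n+1) (Fin.snoc σ y) ∩ d.T σ) ∧
      (closure (d.N σ) ⊆ ⋃ y, w (some y)) := by
    intro σ
    set u : Option Y → Set X := fun o =>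
      Option.elim o (closure (d.N σ))ᶜ
        (fun y => good F (n+1) (Fin.snoc σ y) ∩ d.T σ) with hu
    have uo : ∀ o, IsOpen (u o) := by
      rintro (_ | y)
      · exact isClosed_closure.isOpen_compl
      · exact (isOpen_good hLSC _ _).inter (d.oT σ)
    have uc : ⋃ o, u o = univ := by
      refine eq_univ_of_forall fun x => ?_
      by_cases hx : x ∈ closure (d.N σ)
      · have hxT : x ∈ d.T σ := d.NT σ hx
        have hxg : x ∈ good F n σ := d.Tgood σ (subset_closure hxT)
        obtain ⟨p, hpF, hp⟩ := mem_good.1 hxg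
        refine mem_iUnion.2 ⟨some p, ⟨mem_good.2 ⟨p, hpF, fun m => ?_⟩, hxT⟩⟩
        refine Fin.lastCases ?_ (fun i => ?_) m
        · simpa [Fin.snoc_last] using r_pos (n+1)
        · simpa [Fin.snoc_castSucc] using hp i
      · exact mem_iUnion.2 ⟨none, hx⟩
    obtain ⟨w, wo, wc, wlf, wsub⟩ := precise_refinement u uo uc
    refine ⟨w, wo, wlf, fun y => wsub (some y), fun x hx => ?_⟩
    have : x ∈ ⋃ o, w o := wc ▸ mem_univ x
    rcases mem_iUnion.1 this with ⟨o, ho⟩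
    match o with
    | none => exact absurd (wsub none ho) (by simpa [hu] using hx)
    | some y => exact mem_iUnion.2 ⟨y, ho⟩
  choose w wo wlf wsub wcov using hcov
  -- first shrinking
  have hshr1 : ∀ σ : Fin (n+1) → Y, ∃ t : Y → Set X,
      closure (d.N σ) ⊆ ⋃ y, t y ∧ (∀ y, IsOpen (t y)) ∧
      ∀ y, closure (t y) ⊆ w σ (some y) := by
    intro σ
    have pf : ∀ x ∈ closure (d.N σ), {y : Y | x ∈ w σ (some y)}.Finite := by
      intro x _
      exact ((wlf σ).point_finite x).preimage
        ((Option.some_injective Y).injOn)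
    obtain ⟨t, h1, h2, h3⟩ := exists_subset_iUnion_closure_subset isClosed_closure
      (fun y => wo σ (some y)) pf (wcov σ)
    exact ⟨t, h1, h2, h3⟩
  choose t ht1 ht2 ht3 using hshr1
  -- second shrinking
  have hshr2 : ∀ σ : Fin (n+1) → Y, ∃ Nf : Y → Set X,
      closure (d.N σ) ⊆ ⋃ y, Nf y ∧ (∀ y, IsOpen (Nf y)) ∧
      ∀ y, closure (Nf y) ⊆ t σ y := by
    intro σ
    have pf : ∀ x ∈ closure (d.N σ), {y : Y | x ∈ t σ y}.Finite := by
      intro x _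
      refine (((wlf σ).point_finite x).preimage
        ((Option.some_injective Y).injOn)).subset ?_
      intro y hy
      exact (subset_closure.trans (ht3 σ y)) hy
    obtain ⟨Nf, h1, h2, h3⟩ := exists_subset_iUnion_closure_subset isClosed_closure
      (ht2 σ) pf (ht1 σ)
    exact ⟨Nf, h1, h2, h3⟩
  choose Nf hN1 hN2 hN3 using hshr2
  have tsubT : ∀ σ y, t σ y ⊆ d.T σ := fun σ y =>
    (subset_closure.trans (ht3 σ y)).trans ((wsub σ y).trans inter_subset_right)
  refine ⟨⟨fun ν => t (Fin.init ν) (ν (Fin.last (n+1))),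
          fun ν => Nf (Fin.init ν) (ν (Fin.last (n+1))),
          fun ν => ht2 _ _, fun ν => hN2 _ _, ?_, ?_, fun ν => hN3 _ _⟩, ?_, ?_⟩
  · -- local finiteness
    intro x
    obtain ⟨V, hV, hVfin⟩ := d.lf x
    obtain ⟨V', hV'sub, hV'o, hxV'⟩ := mem_nhds_iff.1 hV
    set S := {σ : Fin (n+1) → Y | (d.T σ ∩ V).Nonempty} with hS
    have hWs : ∀ σ : Fin (n+1) → Y, ∃ W ∈ 𝓝 x, {o : Option Y | (w σ o ∩ W).Nonempty}.Finite :=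
      fun σ => wlf σ x
    choose Wf hWf hWffin using hWs
    refine ⟨V' ∩ ⋂ σ ∈ S, Wf σ, inter_mem (hV'o.mem_nhds hxV')
      ((biInter_mem hVfin).2 fun σ _ => hWf σ), ?_⟩
    have hsub : {ν : Fin (n+2) → Y |
        (t (Fin.init ν) (ν (Fin.last (n+1))) ∩ (V' ∩ ⋂ σ ∈ S, Wf σ)).Nonempty}
        ⊆ ⋃ σ ∈ S, (fun y => Fin.snoc σ y) '' {y | (w σ (some y) ∩ Wf σ).Nonempty} := by
      rintro ν ⟨x', hx't, hx'W⟩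
      have hσS : Fin.init ν ∈ S :=
        ⟨x', tsubT _ _ hx't, hV'sub hx'W.1⟩
      refine mem_biUnion hσS ⟨ν (Fin.last (n+1)), ⟨x',
        (subset_closure.trans (ht3 _ _)) hx't, ?_⟩, Fin.snoc_init_self ν⟩
      exact mem_iInter₂.1 hx'W.2 _ hσS
    refine (hVfin.biUnion fun σ hσ => ?_).subset hsub
    exact ((hWffin σ).preimage ((Option.some_injective Y).injOn)).image _
  · -- Tgood
    intro ν
    refine (ht3 _ _).trans ?_
    refine ((wsub _ _).trans inter_subset_left).trans ?_
    rw [Fin.snoc_init_self]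
  · -- link1
    intro σ y
    simp only [Fin.init_snoc, Fin.snoc_last]
    exact tsubT σ y
  · -- link2
    intro σ
    refine (hN1 σ).trans ?_
    refine iUnion_mono' fun y => ⟨y, ?_⟩
    simp only [Fin.init_snoc, Fin.snoc_last]
    exact subset_rfl

lemma tower_exists (hLSC : ∀ U : Set Y, IsOpen U → IsOpen {x : X | (F x ∩ U).Nonempty}) (hne : ∀ x : X, (F x).Nonempty) : Nonempty (Tower F) := by
  obtain ⟨d0, hd0⟩ := root_exists hLSC hne
  choose step hs1 hs2 using step_exists (F := F) hLSC
  exact ⟨⟨fun n => Nat.rec d0 step n, fun n => hs1 n _, fun n => hs2 n _, hd0⟩⟩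

end Construction

section Branches

variable {F : X → Set Y} (tw : Tower F)

/-- The level-`n` node determined by a branch `τ`. -/
def pref (τ : ℕ → Y) (n : ℕ) : Fin (n+1) → Y := fun m => τ m

lemma pref_succ (τ : ℕ → Y) (n : ℕ) :
    pref τ (n+1) = Fin.snoc (pref τ n) (τ (n+1)) := by
  funext m
  refine Fin.lastCases ?_ (fun i => ?_) m
  · simp [pref, Fin.snoc_last]
  · simp [pref, Fin.snoc_castSucc]

/-- A branch `τ` is alive at `x` from level `k` on. -/
def alive (k : ℕ) (x : X) (τ : ℕ → Y) : Prop :=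
  ∀ n, k ≤ n → x ∈ closure ((tw.L n).N (pref τ n))

lemma exists_branch {k : ℕ} {ν : Fin (k+1) → Y} {x : X}
    (h : x ∈ closure ((tw.L k).N ν)) :
    ∃ τ : ℕ → Y, pref τ k = ν ∧ alive tw k x τ := by
  classical
  have hstep : ∀ (m : ℕ) (v : Fin (m+1) → Y), x ∈ closure ((tw.L m).N v) →
      ∃ y, x ∈ closure ((tw.L (m+1)).N (Fin.snoc v y)) := by
    intro m v hv
    rcases mem_iUnion.1 (tw.link2 m v hv) with ⟨y, hy⟩
    exact ⟨y, subset_closure hy⟩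
  choose eY hEY using hstep
  let E : ∀ m : ℕ, Σ' v : Fin (k+m+1) → Y, x ∈ closure ((tw.L (k+m)).N v) :=
    fun m => Nat.rec ⟨ν, h⟩
      (fun m p => ⟨Fin.snoc p.1 (eY (k+m) p.1 p.2), hEY (k+m) p.1 p.2⟩) m
  have hE : ∀ (m : ℕ) (i : Fin (k+m+1)), (E (m+1)).1 i.castSucc = (E m).1 i := by
    intro m i
    show (Fin.snoc (E m).1 (eY (k+m) (E m).1 (E m).2) : Fin (k+m+2) → Y) i.castSucc
      = (E m).1 i
    exact Fin.snoc_castSucc _ _ i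
  set τ : ℕ → Y := fun j => (E (j - k)).1 ⟨j, by omega⟩ with hτ
  have hgen : ∀ (m M : ℕ) (hmM : m ≤ M), ∀ (j : ℕ) (hj : j < k + m + 1),
      (E M).1 ⟨j, by omega⟩ = (E m).1 ⟨j, hj⟩ := by
    intro m M hmM
    induction M, hmM using Nat.le_induction with
    | base => intro j hj; rfl
    | succ M hmM IH =>
      intro j hj
      have hj' : j < k + M + 1 := by omega
      have : (⟨j, by omega⟩ : Fin (k+M+2)) = (⟨j, hj'⟩ : Fin (k+M+1)).castSucc := rfl
      rw [this, hE M ⟨j, hj'⟩]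
      exact IH j hj
  have hpref : ∀ m : ℕ, pref τ (k + m) = (E m).1 := by
    intro m
    funext i
    have hik : (i : ℕ) < k + (i - k) + 1 := by omega
    have h1 : pref τ (k+m) i = (E ((i : ℕ) - k)).1 ⟨i, hik⟩ := rfl
    have h2 : (E m).1 ⟨(i : ℕ), i.isLt⟩ = (E ((i : ℕ) - k)).1 ⟨i, hik⟩ := by
      have hle : (i : ℕ) - k ≤ m := by omega
      exact hgen ((i : ℕ) - k) m hle i hik
    rw [h1, ← h2]
  refine ⟨τ, ?_, ?_⟩
  · have := hpref 0
    exact this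
  · intro n hn
    have hmn : n = k + (n - k) := by omega
    rw [hmn, hpref (n - k)]
    exact (E (n-k)).2

variable {tw}

lemma alive_T {k : ℕ} {x : X} {τ : ℕ → Y} (h : alive tw k x τ) (n : ℕ) :
    x ∈ (tw.L n).T (pref τ n) := by
  have down : ∀ a b : ℕ, a ≤ b → x ∈ (tw.L b).T (pref τ b) →
      x ∈ (tw.L a).T (pref τ a) := by
    intro a b hab
    induction b, hab using Nat.le_induction with
    | base => exact id
    | succ b hab IH =>
      intro hx
      apply IH
      have hl := tw.link1 b (pref τ b) (τ (b+1))
      rw [← pref_succ] at hl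
      exact hl hx
  exact down n (max k n) (le_max_right _ _)
    ((tw.L _).NT _ (h _ (le_max_left _ _)))

lemma alive_good {k : ℕ} {x : X} {τ : ℕ → Y} (h : alive tw k x τ) (n : ℕ) :
    x ∈ good F n (pref τ n) :=
  (tw.L n).Tgood _ (subset_closure (alive_T h n))

lemma alive_dist {k : ℕ} {x : X} {τ : ℕ → Y} (h : alive tw k x τ) (j : ℕ) :
    dist (τ j) (τ (j+1)) ≤ r j + r (j+1) := by
  obtain ⟨p, _, hp⟩ := mem_good.1 (alive_good h (j+1))
  have h1 := hp ⟨j, by omega⟩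
  have h2 := hp (Fin.last (j+1))
  have e1 : pref τ (j+1) ⟨j, by omega⟩ = τ j := rfl
  have e2 : pref τ (j+1) (Fin.last (j+1)) = τ (j+1) := rfl
  rw [e1] at h1
  rw [e2] at h2
  have : dist (τ j) (τ (j+1)) ≤ dist p (τ j) + dist p (τ (j+1)) :=
    dist_triangle_left _ _ _
  have hv1 : ((⟨j, by omega⟩ : Fin (j+2)) : ℕ) = j := rfl
  have hv2 : ((Fin.last (j+1) : Fin (j+2)) : ℕ) = j+1 := rfl
  rw [hv1] at h1
  rw [hv2] at h2
  linarith

lemma alive_dist_le {k : ℕ} {x : X} {τ : ℕ → Y} (h : alive tw k x τ)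
    {i j : ℕ} (hij : i ≤ j) : dist (τ i) (τ j) ≤ 3 * r i := by
  calc dist (τ i) (τ j) ≤ ∑ m ∈ Finset.Ico i j, dist (τ m) (τ (m+1)) :=
        dist_le_Ico_sum_dist τ hij
    _ ≤ ∑ m ∈ Finset.Ico i j, (r m + r (m+1)) :=
        Finset.sum_le_sum fun m _ => alive_dist h m
    _ ≤ 3 * r i := sum_r_le i j

lemma alive_cauchy {k : ℕ} {x : X} {τ : ℕ → Y} (h : alive tw k x τ) :
    CauchySeq τ := by
  refine cauchySeq_of_le_tendsto_0 (fun n => 6 * r n) (fun a b N hNa hNb => ?_) ?_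
  · have h1 : dist (τ N) (τ a) ≤ 3 * r N := alive_dist_le h hNa
    have h2 : dist (τ N) (τ b) ≤ 3 * r N := alive_dist_le h hNb
    have := dist_triangle_left (τ a) (τ b) (τ N)
    show dist (τ a) (τ b) ≤ 6 * r N
    linarith
  · have : Tendsto (fun n : ℕ => (2:ℝ)⁻¹ ^ n) atTop (𝓝 0) :=
      tendsto_pow_atTop_nhds_zero_of_lt_one (by norm_num) (by norm_num)
    simpa [r] using this.const_mul (6:ℝ)

lemma alive_lim {k : ℕ} {x : X} {τ : ℕ → Y} {z : Y} (h : alive tw k x τ)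
    (hz : Tendsto τ atTop (𝓝 z)) (j : ℕ) : dist (τ j) z ≤ 3 * r j := by
  have hd : Tendsto (fun m => dist (τ j) (τ m)) atTop (𝓝 (dist (τ j) z)) :=
    tendsto_const_nhds.dist hz
  refine le_of_tendsto hd (eventually_atTop.2 ⟨j, fun m hm => alive_dist_le h hm⟩)

lemma alive_lim_F (hclosed : ∀ x : X, IsClosed (F x)) {k : ℕ} {x : X} {τ : ℕ → Y}
    {z : Y} (h : alive tw k x τ) (hz : Tendsto τ atTop (𝓝 z)) : z ∈ F x := by
  rw [← (hclosed x).closure_eq]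
  rw [Metric.mem_closure_iff]
  intro ε hε
  obtain ⟨n, hn⟩ := r_lt (show (0:ℝ) < ε/4 by linarith)
  obtain ⟨p, hpF, hp⟩ := mem_good.1 (alive_good h n)
  refine ⟨p, hpF, ?_⟩
  have h1 := hp (Fin.last n)
  have e : pref τ n (Fin.last n) = τ n := rfl
  rw [e] at h1
  have hv : ((Fin.last n : Fin (n+1)) : ℕ) = n := rfl
  rw [hv] at h1
  have h2 : dist (τ n) z ≤ 3 * r n := alive_lim h hz n
  have := dist_triangle_left z p (τ n)
  have := dist_comm (τ n) z
  have := dist_comm (τ n) p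
  calc dist z p ≤ dist (τ n) z + dist (τ n) p := dist_triangle_left z p (τ n)
    _ < 3 * r n + r n := by rw [dist_comm p (τ n)] at h1; linarith [dist_comm (τ n) z ▸ h2]
    _ = 4 * r n := by ring
    _ < ε := by linarith

end Branches
section Maps

variable {F : X → Set Y} (tw : Tower F)

def An (n : ℕ) (x : X) : Set (Fin (n+1) → Y) :=
  {ν | x ∈ closure ((tw.L n).T ν)}

lemma An_finite (n : ℕ) (x : X) : (An tw n x).Finite :=
  ((tw.L n).lf.closure).point_finite x

def Phi (n : ℕ) (x : X) : Set Y :=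
  ⋃ ν ∈ An tw n x, closedBall (ν (Fin.last n)) (4 * r n)

lemma Phi_closed (n : ℕ) (x : X) : IsClosed (Phi tw n x) :=
  (An_finite tw n x).isClosed_biUnion fun _ _ => Metric.isClosed_closedBall

/-- The upper semicontinuous compact-valued selection. -/
def Hset (x : X) : Set Y := F x ∩ ⋂ n, Phi tw n x

def limset (x : X) : Set Y :=
  {z | ∃ k τ, alive tw k x τ ∧ Tendsto τ atTop (𝓝 z)}

/-- The lower semicontinuous compact-valued selection. -/
def Gset (x : X) : Set Y := closure (limset tw x)

variable {tw}

lemma limset_subset_H (hclosed : ∀ x : X, IsClosed (F x)) (x : X) :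
    limset tw x ⊆ Hset tw x := by
  rintro z ⟨k, τ, ha, hz⟩
  refine ⟨alive_lim_F hclosed ha hz, mem_iInter.2 fun n => ?_⟩
  refine mem_iUnion₂.2 ⟨pref τ n, subset_closure (alive_T ha n), ?_⟩
  have e : pref τ n (Fin.last n) = τ n := rfl
  rw [mem_closedBall, e]
  have h1 : dist (τ n) z ≤ 3 * r n := alive_lim ha hz n
  have := r_pos n
  rw [dist_comm]
  linarith

lemma Hset_closed (hclosed : ∀ x : X, IsClosed (F x)) (x : X) :
    IsClosed (Hset tw x) :=
  (hclosed x).inter (isClosed_iInter fun n => Phi_closed tw n x)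

lemma Gset_subset_H (hclosed : ∀ x : X, IsClosed (F x)) (x : X) :
    Gset tw x ⊆ Hset tw x :=
  closure_minimal (limset_subset_H hclosed x) (Hset_closed hclosed x)

lemma Hset_subset_F (x : X) : Hset tw x ⊆ F x := inter_subset_left

lemma Hset_compact (hclosed : ∀ x : X, IsClosed (F x)) (x : X) :
    IsCompact (Hset tw x) := by
  refine TotallyBounded.isCompact_of_isClosed ?_ (Hset_closed hclosed x)
  rw [totallyBounded_iff]
  intro ε hε
  obtain ⟨n, hn⟩ := r_lt (show (0:ℝ) < ε/5 by linarith)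
  refine ⟨(fun ν => ν (Fin.last n)) '' An tw n x, (An_finite tw n x).image _, ?_⟩
  intro z hz
  have hzPhi : z ∈ Phi tw n x := mem_iInter.1 hz.2 n
  obtain ⟨ν, hν, hzball⟩ := mem_iUnion₂.1 hzPhi
  refine mem_iUnion₂.2 ⟨ν (Fin.last n), mem_image_of_mem _ hν, ?_⟩
  rw [mem_ball]
  rw [mem_closedBall] at hzball
  have := r_pos n
  linarith

lemma Gset_compact (hclosed : ∀ x : X, IsClosed (F x)) (x : X) :
    IsCompact (Gset tw x) :=
  (Hset_compact hclosed x).of_isClosed_subset isClosed_closure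
    (Gset_subset_H hclosed x)

lemma limset_nonempty (x : X) : (limset tw x).Nonempty := by
  have hx : x ∈ ⋃ ν, (tw.L 0).N ν := tw.cover0 ▸ mem_univ x
  obtain ⟨ν, hν⟩ := mem_iUnion.1 hx
  obtain ⟨τ, -, ha⟩ := exists_branch tw (subset_closure hν)
  obtain ⟨z, hz⟩ := cauchySeq_tendsto_of_complete (alive_cauchy ha)
  exact ⟨z, 0, τ, ha, hz⟩

lemma Gset_nonempty (x : X) : (Gset tw x).Nonempty :=
  (limset_nonempty x).mono subset_closure

lemma Hset_nonempty (hclosed : ∀ x : X, IsClosed (F x)) (x : X) :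
    (Hset tw x).Nonempty :=
  (limset_nonempty x).mono (limset_subset_H hclosed x)

lemma Gset_lsc (U : Set Y) (hU : IsOpen U) :
    IsOpen {x : X | (Gset tw x ∩ U).Nonempty} := by
  rw [isOpen_iff_forall_mem_open]
  rintro x₀ ⟨z₀, hz₀G, hz₀U⟩
  obtain ⟨ε, hε, hball⟩ := Metric.isOpen_iff.1 hU z₀ hz₀U
  obtain ⟨z', hz'lim, hz'd⟩ := Metric.mem_closure_iff.1 hz₀G (ε/2) (by linarith)
  obtain ⟨k, τ, ha, hlim⟩ := hz'lim
  obtain ⟨n₀, hn₀⟩ := r_lt (show (0:ℝ) < ε/12 by linarith)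
  set n := max k n₀ with hn
  have hrn : r n < ε/12 := lt_of_le_of_lt (r_anti (le_max_right _ _)) hn₀
  have hx₀ : x₀ ∈ closure ((tw.L n).N (pref τ n)) := ha n (le_max_left _ _)
  obtain ⟨y', hy'⟩ := mem_iUnion.1 (tw.link2 n _ hx₀)
  set c : Fin (n+2) → Y := Fin.snoc (pref τ n) y' with hc
  refine ⟨(tw.L (n+1)).N c, ?_, (tw.L (n+1)).oN c, hy'⟩
  intro x hx
  obtain ⟨ρ, hρpre, hρal⟩ := exists_branch tw (subset_closure hx)
  obtain ⟨z'', hz''⟩ := cauchySeq_tendsto_of_complete (alive_cauchy hρal)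
  refine ⟨z'', ⟨subset_closure ⟨n+1, ρ, hρal, hz''⟩, hball ?_⟩⟩
  rw [mem_ball]
  -- distances
  have hd1 : dist z'' (ρ (n+1)) ≤ 3 * r (n+1) := by
    rw [dist_comm]; exact alive_lim hρal hz'' (n+1)
  have hρc : ρ (n+1) = y' := by
    have := congrFun hρpre (Fin.last (n+1))
    simpa [pref, hc, Fin.snoc_last] using this
  -- x good at node c
  have hxg : x ∈ good F (n+1) c :=
    (tw.L (n+1)).Tgood c (subset_closure ((tw.L (n+1)).NT c (subset_closure hx)))
  obtain ⟨p, -, hp⟩ := mem_good.1 hxg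
  have hp1 : dist p y' < r (n+1) := by
    have := hp (Fin.last (n+1))
    simpa [hc, Fin.snoc_last] using this
  have hp2 : dist p (τ n) < r n := by
    have h := hp ⟨n, by omega⟩
    have e : c ⟨n, by omega⟩ = τ n := by
      have : (⟨n, by omega⟩ : Fin (n+2)) = (Fin.last n).castSucc := rfl
      rw [this, hc, Fin.snoc_castSucc]
      rfl
    rw [e] at h
    exact h
  have hd2 : dist y' (τ n) ≤ r (n+1) + r n := by
    have := dist_triangle_left y' (τ n) p
    linarith
  have hd3 : dist (τ n) z' ≤ 3 * r n := alive_lim ha hlim n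
  have hr2 : r (n+1) = r n / 2 := r_succ n
  rw [hρc] at hd1
  have hdz : dist z' z₀ < ε/2 := by rw [dist_comm] at hz'd; exact hz'd
  have h4 := dist_triangle4 z'' y' (τ n) z'
  have h5 := dist_triangle z'' z' z₀
  have hrp := r_pos n
  linarith

lemma Hset_usc (hclosed : ∀ x : X, IsClosed (F x)) (U : Set Y) (hU : IsOpen U) :
    IsOpen {x : X | Hset tw x ⊆ U} := by
  rw [isOpen_iff_forall_mem_open]
  intro x₀ hx₀
  -- Step A
  have stepA : ∃ n : ℕ, (⋂ m ∈ Finset.range (n+1), Phi tw m x₀) ⊆ U := by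
    by_contra hcon
    push_neg at hcon
    have hex : ∀ n : ℕ, ∃ z, z ∈ (⋂ m ∈ Finset.range (n+1), Phi tw m x₀) ∧ z ∉ U := by
      intro n
      rcases not_subset.1 (hcon n) with ⟨z, h1, h2⟩
      exact ⟨z, h1, h2⟩
    choose z hz1 hz2 using hex
    have hzPhi : ∀ m n : ℕ, m ≤ n → z n ∈ Phi tw m x₀ := by
      intro m n hmn
      exact mem_iInter₂.1 (hz1 n) m (Finset.mem_range.2 (by omega))
    -- z j is near F x₀
    have hzF : ∀ j : ℕ, ∃ p ∈ F x₀, dist (z j) p ≤ 5 * r j := by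
      intro j
      obtain ⟨ν, hν, hb⟩ := mem_iUnion₂.1 (hzPhi j j le_rfl)
      have hg : x₀ ∈ good F j ν := (tw.L j).Tgood ν hν
      obtain ⟨p, hpF, hp⟩ := mem_good.1 hg
      refine ⟨p, hpF, ?_⟩
      have h1 := hp (Fin.last j)
      have hv : ((Fin.last j : Fin (j+1)) : ℕ) = j := rfl
      rw [hv] at h1
      rw [mem_closedBall] at hb
      calc dist (z j) p ≤ dist (z j) (ν (Fin.last j)) + dist (ν (Fin.last j)) p :=
            dist_triangle _ _ _
        _ ≤ 4 * r j + r j := by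
            rw [dist_comm (ν (Fin.last j)) p]; linarith
        _ = 5 * r j := by ring
    -- totally bounded range
    have htb : TotallyBounded (range z) := by
      rw [totallyBounded_iff]
      intro ε hε
      obtain ⟨n, hn⟩ := r_lt (show (0:ℝ) < ε/5 by linarith)
      refine ⟨(fun ν => ν (Fin.last n)) '' An tw n x₀ ∪ z '' (Iio n),
        ((An_finite tw n x₀).image _).union ((finite_Iio n).image _), ?_⟩
      rintro _ ⟨j, rfl⟩
      by_cases hj : j < n
      · exact mem_iUnion₂.2 ⟨z j, subset_union_right (mem_image_of_mem _ hj),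
          mem_ball_self hε⟩
      · push_neg at hj
        obtain ⟨ν, hν, hb⟩ := mem_iUnion₂.1 (hzPhi n j hj)
        refine mem_iUnion₂.2 ⟨ν (Fin.last n),
          subset_union_left (mem_image_of_mem _ hν), ?_⟩
        rw [mem_ball, mem_closedBall] at *
        have := r_pos n
        linarith
    obtain ⟨zs, -, φ, hφ, hφt⟩ :=
      (TotallyBounded.isCompact_of_isClosed htb.closure isClosed_closure).tendsto_subseq
        (fun j => subset_closure (mem_range_self j) : ∀ j, z j ∈ closure (range z))
    have hφge : ∀ j, j ≤ φ j := fun j => hφ.le_apply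
    have hzsPhi : ∀ m : ℕ, zs ∈ Phi tw m x₀ := by
      intro m
      refine (Phi_closed tw m x₀).mem_of_tendsto hφt
        (eventually_atTop.2 ⟨m, fun j hj => hzPhi m (φ j) (le_trans hj (hφge j))⟩)
    have hzsF : zs ∈ F x₀ := by
      rw [← (hclosed x₀).closure_eq, Metric.mem_closure_iff]
      intro ε hε
      obtain ⟨n₁, hn₁⟩ := r_lt (show (0:ℝ) < ε/10 by linarith)
      have hev : ∀ᶠ j in atTop, (z ∘ φ) j ∈ ball zs (ε/2) :=
        hφt (Metric.ball_mem_nhds zs (by linarith))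
      obtain ⟨j, hj1, hj2⟩ := (hev.and (eventually_ge_atTop n₁)).exists
      obtain ⟨p, hpF, hpd⟩ := hzF (φ j)
      refine ⟨p, hpF, ?_⟩
      have hr1 : r (φ j) ≤ r n₁ := r_anti (le_trans hj2 (hφge j))
      have hd : dist zs (z (φ j)) < ε/2 := by
        have := mem_ball.1 hj1
        rw [dist_comm] at this
        exact this
      have hrp := r_pos n₁
      calc dist zs p ≤ dist zs (z (φ j)) + dist (z (φ j)) p := dist_triangle _ _ _
        _ < ε/2 + 5 * r n₁ := by linarith
        _ ≤ ε/2 + ε/2 := by linarith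
        _ = ε := by ring
    have hzsH : zs ∈ Hset tw x₀ := ⟨hzsF, mem_iInter.2 hzsPhi⟩
    have hzsU : zs ∈ U := hx₀ hzsH
    have hzsUc : zs ∈ Uᶜ :=
      hU.isClosed_compl.mem_of_tendsto hφt
        (Eventually.of_forall fun j => hz2 (φ j))
    exact hzsUc hzsU
  obtain ⟨n, hn⟩ := stepA
  -- Step B : transfer neighbourhood
  have hVs : ∀ m : ℕ, ∃ V : Set X, IsOpen V ∧ x₀ ∈ V ∧
      {ν : Fin (m+1) → Y | ((tw.L m).T ν ∩ V).Nonempty}.Finite := by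
    intro m
    obtain ⟨V, hVmem, hfin⟩ := (tw.L m).lf x₀
    obtain ⟨V', hsub, hopen, hx⟩ := mem_nhds_iff.1 hVmem
    refine ⟨V', hopen, hx, hfin.subset ?_⟩
    rintro ν ⟨x', h1, h2⟩
    exact ⟨x', h1, hsub h2⟩
  choose V hVo hVx hVfin using hVs
  set W : Set X := ⋂ m ∈ Finset.range (n+1), V m with hW
  have hWo : IsOpen W := isOpen_biInter_finset fun m _ => hVo m
  have hWx : x₀ ∈ W := mem_iInter₂.2 fun m _ => hVx m
  set Bad : Set X := ⋃ m ∈ Finset.range (n+1),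
    ⋃ ν ∈ {ν : Fin (m+1) → Y | ((tw.L m).T ν ∩ V m).Nonempty ∧
      x₀ ∉ closure ((tw.L m).T ν)}, closure ((tw.L m).T ν) with hBad
  have hBadc : IsClosed Bad := by
    refine Finset.range (n+1) |>.finite_toSet.isClosed_biUnion fun m _ => ?_
    refine Set.Finite.isClosed_biUnion ((hVfin m).subset fun ν hν => hν.1)
      fun ν _ => isClosed_closure
  have hx₀Bad : x₀ ∉ Bad := by
    intro hmem
    obtain ⟨m, -, hm⟩ := mem_iUnion₂.1 hmem
    obtain ⟨ν, hν, hm'⟩ := mem_iUnion₂.1 hm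
    exact hν.2 hm'
  refine ⟨W \ Bad, ?_, hWo.sdiff hBadc, hWx, hx₀Bad⟩
  rintro x ⟨hxW, hxB⟩
  intro zz hzz
  apply hn
  refine mem_iInter₂.2 fun m hm => ?_
  obtain ⟨ν, hν, hd⟩ := mem_iUnion₂.1 (mem_iInter.1 hzz.2 m)
  have hxVm : x ∈ V m := mem_iInter₂.1 hxW m hm
  have h1 : ((tw.L m).T ν ∩ V m).Nonempty := by
    obtain ⟨x', hx'1, hx'2⟩ := _root_.mem_closure_iff.1 hν (V m) (hVo m) hxVm
    exact ⟨x', hx'2, hx'1⟩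
  have h2 : x₀ ∈ closure ((tw.L m).T ν) := by
    by_contra hno
    refine hxB (mem_iUnion₂.2 ⟨m, hm, mem_iUnion₂.2 ⟨ν, ⟨h1, hno⟩, hν⟩⟩)
  exact mem_iUnion₂.2 ⟨ν, h2, hd⟩

end Maps
end MCV

/-- Michael's compactvalued selection theorem: every lower semicontinuous
closed-valued multivalued mapping from a paracompact Hausdorff space into a
complete metric space admits a compactvalued upper semicontinuous selection `H`,
which in turn admits a compactvalued lower semicontinuous selection `G`. -/
theorem michael_compactvalued_selection
    {X Y : Type*} [TopologicalSpace X] [ParacompactSpace X] [T2Space X]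
    [MetricSpace Y] [CompleteSpace Y]
    (F : X → Set Y)
    (hLSC : ∀ U : Set Y, IsOpen U → IsOpen {x : X | (F x ∩ U).Nonempty})
    (hne : ∀ x : X, (F x).Nonempty)
    (hclosed : ∀ x : X, IsClosed (F x)) :
    ∃ G H : X → Set Y,
      (∀ x : X, (G x).Nonempty ∧ IsCompact (G x)) ∧
      (∀ x : X, (H x).Nonempty ∧ IsCompact (H x)) ∧
      (∀ x : X, G x ⊆ H x) ∧ (∀ x : X, H x ⊆ F x) ∧
      (∀ U : Set Y, IsOpen U → IsOpen {x : X | (G x ∩ U).Nonempty}) ∧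
      (∀ U : Set Y, IsOpen U → IsOpen {x : X | H x ⊆ U}) := by
  obtain ⟨tw⟩ := MCV.tower_exists hLSC hne
  refine ⟨MCV.Gset tw, MCV.Hset tw, ?_, ?_, ?_, ?_, ?_, ?_⟩
  · exact fun x => ⟨MCV.Gset_nonempty x, MCV.Gset_compact hclosed x⟩
  · exact fun x => ⟨MCV.Hset_nonempty hclosed x, MCV.Hset_compact hclosed x⟩
  · exact fun x => MCV.Gset_subset_H hclosed x
  · exact fun x => MCV.Hset_subset_F x
  · exact fun U hU => MCV.Gset_lsc U hU
  · exact fun U hU => MCV.Hset_usc hclosed U hU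
end

section
/- Localization Principle: let X be a paracompact Hausdorff space, Y a topological vector space over ℝ (addition and scalar multiplication continuous), and F a multivalued mapping from X to Y all of whose values F(x) are nonempty convex subsets of Y. Suppose there exists an open cover 𝒰 of X such that for every U ∈ 𝒰 there is a continuous map s_U : U → Y with s_U(x) ∈ F(x) for all x ∈ U. Then there exists a continuous map f : X → Y with f(x) ∈ F(x) for all x ∈ X. -/
/-- Localization Principle: if a convexvalued multivalued mapping from a paracompact
Hausdorff space into a real topological vector space admits a continuous singlevalued
selection over each member of some open cover of the domain, then it admits a global
continuous singlevalued selection. -/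
theorem localization_principle
    {X Y : Type*} [TopologicalSpace X] [ParacompactSpace X] [T2Space X]
    [AddCommGroup Y] [Module ℝ Y] [TopologicalSpace Y]
    [IsTopologicalAddGroup Y] [ContinuousSMul ℝ Y]
    (F : X → Set Y)
    (hne : ∀ x : X, (F x).Nonempty)
    (hconv : ∀ x : X, Convex ℝ (F x))
    (𝒰 : Set (Set X))
    (hopen : ∀ U ∈ 𝒰, IsOpen U)
    (hcover : ⋃₀ 𝒰 = Set.univ)
    (hloc : ∀ U ∈ 𝒰, ∃ s : X → Y, ContinuousOn s U ∧ ∀ x ∈ U, s x ∈ F x) :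
    ∃ f : X → Y, Continuous f ∧ ∀ x : X, f x ∈ F x := by
  obtain ⟨g, hg⟩ := exists_continuous_forall_mem_convex_of_local hconv (fun x => by
    have hx : x ∈ ⋃₀ 𝒰 := hcover ▸ Set.mem_univ x
    obtain ⟨U, hU, hxU⟩ := hx
    obtain ⟨s, hs, hsF⟩ := hloc U hU
    exact ⟨U, (hopen U hU).mem_nhds hxU, s, hs, hsF⟩)
  exact ⟨g, g.continuous, hg⟩
end

section
/- Let B be a real Banach space, G ⊆ B an open subset, and C ⊆ G a convex subset which is closed in G (that is, C = closure(C) ∩ G). Then for every compact subset K ⊆ C, the closure of the convex hull of K (taken in B) is contained in C. -/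
open Set Metric

/-- The convex join of two compact sets is compact. -/
lemma isCompact_convexJoin {E : Type*} [NormedAddCommGroup E] [NormedSpace ℝ E]
    {s t : Set E} (hs : IsCompact s) (ht : IsCompact t) :
    IsCompact (convexJoin ℝ s t) := by
  have : convexJoin ℝ s t =
      (fun p : ℝ × E × E => (1 - p.1) • p.2.1 + p.1 • p.2.2) ''
        (Set.Icc (0:ℝ) 1 ×ˢ s ×ˢ t) := by
    ext z
    constructor
    · rintro hz
      rw [mem_convexJoin] at hz
      obtain ⟨x, hx, y, hy, hseg⟩ := hz
      rw [segment_eq_image] at hseg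
      obtain ⟨θ, hθ, rfl⟩ := hseg
      exact ⟨(θ, x, y), ⟨hθ, hx, hy⟩, rfl⟩
    · rintro ⟨⟨θ, x, y⟩, ⟨hθ, hx, hy⟩, rfl⟩
      rw [mem_convexJoin]
      refine ⟨x, hx, y, hy, ?_⟩
      rw [segment_eq_image]
      exact ⟨θ, hθ, rfl⟩
  rw [this]
  exact (isCompact_Icc.prod (hs.prod ht)).image (by fun_prop)

/-- The convex hull of a finite union of compact, convex, nonempty sets is compact. -/
lemma isCompact_convexHull_finite_union {E : Type*} [NormedAddCommGroup E] [NormedSpace ℝ E]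
    {ι : Type*} (T : Finset ι) (D : ι → Set E)
    (hcpt : ∀ i ∈ T, IsCompact (D i)) (hconv : ∀ i ∈ T, Convex ℝ (D i))
    (hne : ∀ i ∈ T, (D i).Nonempty) :
    IsCompact (convexHull ℝ (⋃ i ∈ T, D i)) := by
  classical
  induction T using Finset.induction with
  | empty => simp
  | @insert a T ha ih =>
    have hunion : (⋃ i ∈ insert a T, D i) = D a ∪ ⋃ i ∈ T, D i := by
      simp [Set.iUnion_or, Set.iUnion_union_distrib]
    rw [hunion]
    rcases T.eq_empty_or_nonempty with rfl | hTne
    · simpa [(hconv a (Finset.mem_insert_self a _)).convexHull_eq] using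
        hcpt a (Finset.mem_insert_self a _)
    · have hDane : (D a).Nonempty := hne a (Finset.mem_insert_self a T)
      have hUne : (⋃ i ∈ T, D i).Nonempty := by
        obtain ⟨b, hb⟩ := hTne
        obtain ⟨x, hx⟩ := hne b (Finset.mem_insert_of_mem hb)
        exact ⟨x, Set.mem_biUnion hb hx⟩
      rw [convexHull_union hDane hUne,
        (hconv a (Finset.mem_insert_self a T)).convexHull_eq]
      exact isCompact_convexJoin (hcpt a (Finset.mem_insert_self a T))
        (ih (fun i hi => hcpt i (Finset.mem_insert_of_mem hi))
          (fun i hi => hconv i (Finset.mem_insert_of_mem hi))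
          (fun i hi => hne i (Finset.mem_insert_of_mem hi)))

/-- For any compact subset `K` of a convex subset `C` which is closed in an open
subset `G` of a Banach space `B`, the closed (in `B`) convex hull of `K` also
lies in `C`. -/
theorem closed_convexHull_of_compact_subset
    {B : Type*} [NormedAddCommGroup B] [NormedSpace ℝ B] [CompleteSpace B]
    (G : Set B) (hG : IsOpen G)
    (C : Set B) (hCconv : Convex ℝ C) (hCG : C ⊆ G)
    (hCclosed : C = closure C ∩ G)
    (K : Set B) (hK : IsCompact K) (hKC : K ⊆ C) :
    closure (convexHull ℝ K) ⊆ C := by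
  classical
  -- the compact set `K` has a positive distance `δ` from the complement of `G`
  obtain ⟨δ, hδpos, hthick⟩ := hK.exists_thickening_subset_open hG (hKC.trans hCG)
  -- cover `K` by finitely many balls of radius `δ/2` centered in `K`
  obtain ⟨t, htK, htfin, hcover⟩ := hK.finite_cover_balls (e := δ / 2) (by positivity)
  -- for each center `k`, consider the closed convex hull of the piece of `K` near `k`
  set D : B → Set B := fun k => closure (convexHull ℝ (K ∩ closedBall k (δ / 2))) with hD
  have hDsubC : ∀ k ∈ t, D k ⊆ C := by
    intro k hk
    have h1 : D k ⊆ closure C :=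
      closure_mono (convexHull_min (fun x hx => hKC hx.1) hCconv)
    have h2 : D k ⊆ closedBall k (δ / 2) :=
      closure_minimal (convexHull_min (fun x hx => hx.2) (convex_closedBall _ _))
        Metric.isClosed_closedBall
    have h3 : closedBall k (δ / 2) ⊆ G := by
      refine subset_trans ?_ hthick
      intro x hx
      rw [mem_thickening_iff]
      exact ⟨k, htK hk, lt_of_le_of_lt (mem_closedBall.1 hx) (by linarith)⟩
    rw [hCclosed]
    exact fun x hx => ⟨h1 hx, h3 (h2 hx)⟩
  have hDcpt : ∀ k ∈ t, IsCompact (D k) := by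
    intro k _
    exact TotallyBounded.isCompact_of_isClosed
      ((totallyBounded_convexHull.2 (hK.totallyBounded.subset inter_subset_left)).closure)
      isClosed_closure
  have hDconv : ∀ k ∈ t, Convex ℝ (D k) := fun k _ => (convex_convexHull ℝ _).closure
  have hDne : ∀ k ∈ t, (D k).Nonempty := by
    intro k hk
    exact ⟨k, subset_closure (subset_convexHull ℝ _
      ⟨htK hk, mem_closedBall_self (by positivity)⟩)⟩
  -- the convex hull of the union of the pieces is compact, hence closed
  have hMcpt : IsCompact (convexHull ℝ (⋃ k ∈ htfin.toFinset, D k)) :=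
    isCompact_convexHull_finite_union htfin.toFinset D
      (fun k hk => hDcpt k (htfin.mem_toFinset.1 hk))
      (fun k hk => hDconv k (htfin.mem_toFinset.1 hk))
      (fun k hk => hDne k (htfin.mem_toFinset.1 hk))
  -- `K` is contained in the union of the pieces
  have hKsub : K ⊆ ⋃ k ∈ htfin.toFinset, D k := by
    intro x hx
    obtain ⟨k, hk, hxk⟩ := Set.mem_iUnion₂.1 (hcover hx)
    exact Set.mem_biUnion (htfin.mem_toFinset.2 hk)
      (subset_closure (subset_convexHull ℝ _ ⟨hx, ball_subset_closedBall hxk⟩))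
  have hMC : convexHull ℝ (⋃ k ∈ htfin.toFinset, D k) ⊆ C :=
    convexHull_min (Set.iUnion₂_subset fun k hk => hDsubC k (htfin.mem_toFinset.1 hk)) hCconv
  calc closure (convexHull ℝ K)
      ⊆ closure (convexHull ℝ (⋃ k ∈ htfin.toFinset, D k)) :=
        closure_mono (convexHull_mono hKsub)
    _ = convexHull ℝ (⋃ k ∈ htfin.toFinset, D k) := hMcpt.isClosed.closure_eq
    _ ⊆ C := hMC
end

section
/- Let X be a paracompact Hausdorff space, B a real Banach space, (G_n)_{n∈ℕ} a sequence of open convex subsets of B, and Y = ⋂_{n∈ℕ} G_n. Let F be a lower semicontinuous multivalued mapping from X to B such that every value F(x) is a nonempty convex subset of Y which is closed in Y (that is, F(x) = closure(F(x)) ∩ Y). Then F admits a continuous singlevalued selection f : X → B with f(x) ∈ F(x) for all x ∈ X. -/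
set_option linter.unusedSectionVars false
set_option linter.unusedVariables false

open Metric Set Filter Topology

namespace MichaelSel

section
variable {B : Type*} [NormedAddCommGroup B] [NormedSpace ℝ B]

/-- `dist (·, Gᶜ)` is concave on a convex set `G`. -/
lemma infDist_compl_concave {G : Set B} (hG : Convex ℝ G) {y0 y1 : B}
    (h0 : y0 ∈ G) (h1 : y1 ∈ G) {a b : ℝ} (ha : 0 ≤ a) (hb : 0 ≤ b) (hab : a + b = 1) :
    a * infDist y0 Gᶜ + b * infDist y1 Gᶜ ≤ infDist (a • y0 + b • y1) Gᶜ := by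
  rcases Set.eq_empty_or_nonempty Gᶜ with hc | hc
  · simp [hc, infDist_empty]
  by_contra hlt
  push_neg at hlt
  obtain ⟨z, hz, hdlt⟩ := (infDist_lt_iff hc).1 hlt
  set D0 := infDist y0 Gᶜ with hD0
  set D1 := infDist y1 Gᶜ with hD1
  have hD0n : 0 ≤ D0 := infDist_nonneg
  have hD1n : 0 ≤ D1 := infDist_nonneg
  set R := a * D0 + b * D1 with hR
  have hdist : dist (a • y0 + b • y1) z < R := hdlt
  have hRpos : 0 < R := lt_of_le_of_lt dist_nonneg hdist
  set w := z - (a • y0 + b • y1) with hw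
  have hwn : ‖w‖ < R := by
    rw [hw, ← dist_eq_norm']
    exact hdist
  set z0 := y0 + (D0 / R) • w with hz0
  set z1 := y1 + (D1 / R) • w with hz1
  have hz0G : z0 ∈ G := by
    rcases eq_or_lt_of_le hD0n with h | h
    · have : z0 = y0 := by rw [hz0, ← h]; simp
      rw [this]; exact h0
    · by_contra hzc
      have : D0 ≤ dist y0 z0 := infDist_le_dist_of_mem (by simpa using hzc)
      have hd : dist y0 z0 = (D0 / R) * ‖w‖ := by
        rw [hz0, dist_eq_norm]
        rw [show y0 - (y0 + (D0/R) • w) = -((D0/R) • w) by abel]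
        rw [norm_neg, norm_smul, Real.norm_eq_abs, abs_of_nonneg (div_nonneg hD0n hRpos.le)]
      rw [hd, div_mul_eq_mul_div, le_div_iff₀ hRpos] at this
      nlinarith
  have hz1G : z1 ∈ G := by
    rcases eq_or_lt_of_le hD1n with h | h
    · have : z1 = y1 := by rw [hz1, ← h]; simp
      rw [this]; exact h1
    · by_contra hzc
      have : D1 ≤ dist y1 z1 := infDist_le_dist_of_mem (by simpa using hzc)
      have hd : dist y1 z1 = (D1 / R) * ‖w‖ := by
        rw [hz1, dist_eq_norm]
        rw [show y1 - (y1 + (D1/R) • w) = -((D1/R) • w) by abel]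
        rw [norm_neg, norm_smul, Real.norm_eq_abs, abs_of_nonneg (div_nonneg hD1n hRpos.le)]
      rw [hd, div_mul_eq_mul_div, le_div_iff₀ hRpos] at this
      nlinarith
  have hcomb : a • z0 + b • z1 = z := by
    rw [hz0, hz1]
    have : a • ((D0 / R) • w) + b • ((D1 / R) • w) = w := by
      rw [smul_smul, smul_smul, ← add_smul]
      have : a * (D0 / R) + b * (D1 / R) = 1 := by field_simp [hR]; linarith
      rw [this, one_smul]
    rw [smul_add, smul_add]
    rw [show a • y0 + a • ((D0/R) • w) + (b • y1 + b • ((D1/R) • w))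
        = (a • y0 + b • y1) + (a • ((D0/R) • w) + b • ((D1/R) • w)) by abel, this, hw]
    abel
  have : z ∈ G := hcomb ▸ hG hz0G hz1G ha hb hab
  exact hz this



open Classical in
/-- regularized distance to the complement of `G`. -/
noncomputable def dC (G : Set B) (y : B) : ℝ :=
  if Gᶜ.Nonempty then infDist y Gᶜ else 1

lemma dC_cont (G : Set B) : Continuous (dC G) := by
  unfold dC
  split
  · exact continuous_infDist_pt _
  · exact continuous_const

lemma dC_pos {G : Set B} (hG : IsOpen G) {y : B} (hy : y ∈ G) : 0 < dC G y := by
  unfold dC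
  split
  · next hc =>
    by_contra hle
    push_neg at hle
    have h0 : infDist y Gᶜ ≤ 0 := hle
    obtain ⟨ε, hε, hball⟩ := Metric.isOpen_iff.1 hG y hy
    have : infDist y Gᶜ < ε := lt_of_le_of_lt h0 hε
    obtain ⟨z, hzc, hzd⟩ := (infDist_lt_iff hc).1 this
    exact hzc (hball (by rwa [mem_ball, dist_comm]))
  · exact one_pos

lemma dC_lip (G : Set B) (a b : B) : dC G a ≤ dC G b + dist a b := by
  unfold dC
  split
  · exact infDist_le_infDist_add_dist
  · linarith [dist_nonneg (x := a) (y := b)]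

lemma dC_mem {G : Set B} {y w : B} (h : dist w y < dC G y) : w ∈ G := by
  unfold dC at h
  by_contra hw
  have hc : Gᶜ.Nonempty := ⟨w, hw⟩
  rw [if_pos hc] at h
  exact absurd (infDist_le_dist_of_mem (s := Gᶜ) (x := y) hw) (by rw [dist_comm] at h; linarith)

lemma dC_nonneg (G : Set B) (y : B) : 0 ≤ dC G y := by
  unfold dC
  split
  · exact infDist_nonneg
  · norm_num



/-- iterated minimum `min 1 (min (d 0 y) ... (d n y))`. -/
noncomputable def minAux (d : ℕ → B → ℝ) : ℕ → B → ℝ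
  | 0 => fun y => min 1 (d 0 y)
  | n+1 => fun y => min (minAux d n y) (d (n+1) y)

lemma minAux_cont {d : ℕ → B → ℝ} (hd : ∀ k, Continuous (d k)) (n : ℕ) :
    Continuous (minAux d n) := by
  induction n with
  | zero => exact continuous_const.min (hd 0)
  | succ k ih => exact ih.min (hd (k+1))

lemma minAux_pos {d : ℕ → B → ℝ} {y : B} (hd : ∀ k, 0 < d k y) (n : ℕ) :
    0 < minAux d n y := by
  induction n with
  | zero => exact lt_min one_pos (hd 0)
  | succ k ih => exact lt_min ih (hd (k+1))

lemma minAux_le_one {d : ℕ → B → ℝ} (y : B) (n : ℕ) : minAux d n y ≤ 1 := by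
  induction n with
  | zero => exact min_le_left _ _
  | succ k ih => exact le_trans (min_le_left _ _) ih

lemma minAux_le_d {d : ℕ → B → ℝ} (y : B) {k n : ℕ} (hkn : k ≤ n) :
    minAux d n y ≤ d k y := by
  induction n with
  | zero =>
    rw [Nat.le_zero] at hkn
    subst hkn
    exact min_le_right _ _
  | succ m ih =>
    rcases Nat.lt_or_ge k (m+1) with h | h
    · exact le_trans (min_le_left _ _) (ih (Nat.lt_succ_iff.1 h))
    · have : k = m + 1 := le_antisymm hkn h
      subst this
      exact min_le_right _ _

lemma minAux_conc {d : ℕ → B → ℝ} {Y : Set B}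
    (hd : ∀ k, ∀ y0 ∈ Y, ∀ y1 ∈ Y, ∀ a b : ℝ, 0 ≤ a → 0 ≤ b → a + b = 1 →
      a * d k y0 + b * d k y1 ≤ d k (a • y0 + b • y1))
    (n : ℕ) {y0 y1 : B} (h0 : y0 ∈ Y) (h1 : y1 ∈ Y) {a b : ℝ}
    (ha : 0 ≤ a) (hb : 0 ≤ b) (hab : a + b = 1) :
    a * minAux d n y0 + b * minAux d n y1 ≤ minAux d n (a • y0 + b • y1) := by
  induction n with
  | zero =>
    refine le_min ?_ ?_
    · have e0 : minAux d 0 y0 ≤ 1 := minAux_le_one y0 0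
      have e1 : minAux d 0 y1 ≤ 1 := minAux_le_one y1 0
      nlinarith
    · have e0 : minAux d 0 y0 ≤ d 0 y0 := minAux_le_d y0 le_rfl
      have e1 : minAux d 0 y1 ≤ d 0 y1 := minAux_le_d y1 le_rfl
      have := hd 0 y0 h0 y1 h1 a b ha hb hab
      nlinarith
  | succ m ih =>
    refine le_min ?_ ?_
    · have e0 : minAux d (m+1) y0 ≤ minAux d m y0 := min_le_left _ _
      have e1 : minAux d (m+1) y1 ≤ minAux d m y1 := min_le_left _ _
      nlinarith
    · have e0 : minAux d (m+1) y0 ≤ d (m+1) y0 := min_le_right _ _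
      have e1 : minAux d (m+1) y1 ≤ d (m+1) y1 := min_le_right _ _
      have := hd (m+1) y0 h0 y1 h1 a b ha hb hab
      nlinarith


end

section
variable {X B : Type*} [TopologicalSpace X]
  [NormedAddCommGroup B] [NormedSpace ℝ B]

/-- restriction of an LSC map to a variable open ball remains LSC. -/
lemma lsc_inter_ball {F : X → Set B}
    (hLSC : ∀ U : Set B, IsOpen U → IsOpen {x : X | (F x ∩ U).Nonempty})
    {g : X → B} (hg : Continuous g) {r : X → ℝ} (hr : Continuous r) :
    ∀ U : Set B, IsOpen U →
      IsOpen {x : X | ((F x ∩ Metric.ball (g x) (r x)) ∩ U).Nonempty} := by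
  intro U hU
  rw [isOpen_iff_mem_nhds]
  rintro x0 ⟨z, ⟨hzF, hzb⟩, hzU⟩
  rw [mem_ball] at hzb
  obtain ⟨δU, hδU, hballU⟩ := Metric.isOpen_iff.1 hU z hzU
  set δ : ℝ := min ((r x0 - dist z (g x0)) / 3) δU with hδ
  have hδpos : 0 < δ := lt_min (by linarith) hδU
  have h1 : IsOpen {x : X | (F x ∩ (U ∩ Metric.ball z δ)).Nonempty} :=
    hLSC _ (hU.inter isOpen_ball)
  have h2 : IsOpen {x : X | dist (g x) (g x0) < δ} := by
    have : Continuous fun x => dist (g x) (g x0) := (hg.dist continuous_const)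
    exact isOpen_lt this continuous_const
  have h3 : IsOpen {x : X | r x0 - δ < r x} := isOpen_lt continuous_const hr
  have hx0 : x0 ∈ {x : X | (F x ∩ (U ∩ Metric.ball z δ)).Nonempty}
      ∩ ({x : X | dist (g x) (g x0) < δ} ∩ {x : X | r x0 - δ < r x}) := by
    refine ⟨⟨z, hzF, hzU, by simp [hδpos]⟩, by simp [hδpos], by simp; linarith⟩
  refine Filter.mem_of_superset
    (((h1.inter (h2.inter h3))).mem_nhds hx0) ?_
  rintro x ⟨⟨w, hwF, hwU, hwb⟩, hgd, hrd⟩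
  refine ⟨w, ⟨hwF, ?_⟩, hwU⟩
  rw [mem_ball] at hwb ⊢
  have hdd : dist w (g x) ≤ dist w z + dist z (g x0) + dist (g x0) (g x) :=
    dist_triangle4 w z (g x0) (g x)
  have hδ3 : δ ≤ (r x0 - dist z (g x0)) / 3 := min_le_left _ _
  rw [dist_comm (g x0) (g x)] at hdd
  simp only [mem_setOf_eq] at hgd hrd
  calc dist w (g x) ≤ dist w z + dist z (g x0) + dist (g x) (g x0) := hdd
  _ < δ + dist z (g x0) + δ := by linarith
  _ ≤ r x0 - δ := by linarith
  _ < r x := hrd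
end

section
variable {X B : Type*} [TopologicalSpace X] [ParacompactSpace X] [T2Space X]
  [NormedAddCommGroup B] [NormedSpace ℝ B]

/-- Approximate selection with precision given by a continuous function `Φ`
which is positive on `Y` and concave on `Y`; the approximate selection takes
values in `Y` and is `Φ(f x)`-close to `F x`. -/
lemma approx_sel {Y : Set B} (hYconv : Convex ℝ Y) {F : X → Set B}
    (hLSC : ∀ U : Set B, IsOpen U → IsOpen {x : X | (F x ∩ U).Nonempty})
    (hne : ∀ x, (F x).Nonempty) (hconv : ∀ x, Convex ℝ (F x)) (hsub : ∀ x, F x ⊆ Y)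
    {Φ : B → ℝ} (hΦc : Continuous Φ) (hΦpos : ∀ y ∈ Y, 0 < Φ y)
    (hΦconc : ∀ y0 ∈ Y, ∀ y1 ∈ Y, ∀ a b : ℝ, 0 ≤ a → 0 ≤ b → a + b = 1 →
      a * Φ y0 + b * Φ y1 ≤ Φ (a • y0 + b • y1)) :
    ∃ f : X → B, Continuous f ∧ ∀ x, f x ∈ Y ∧ ∃ v ∈ F x, ‖f x - v‖ < Φ (f x) := by
  set t : X → Set B := fun x => {w | w ∈ Y ∧ ∃ v ∈ F x, ‖w - v‖ < Φ w} with ht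
  have htconv : ∀ x, Convex ℝ (t x) := by
    intro x
    rintro w0 ⟨hw0Y, v0, hv0, hd0⟩ w1 ⟨hw1Y, v1, hv1, hd1⟩ a b ha hb hab
    refine ⟨hYconv hw0Y hw1Y ha hb hab, a • v0 + b • v1, hconv x hv0 hv1 ha hb hab, ?_⟩
    have hnorm : ‖(a • w0 + b • w1) - (a • v0 + b • v1)‖
        ≤ a * ‖w0 - v0‖ + b * ‖w1 - v1‖ := by
      have : (a • w0 + b • w1) - (a • v0 + b • v1) = a • (w0 - v0) + b • (w1 - v1) := by
        rw [smul_sub, smul_sub]; abel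
      rw [this]
      calc ‖a • (w0 - v0) + b • (w1 - v1)‖ ≤ ‖a • (w0 - v0)‖ + ‖b • (w1 - v1)‖ :=
        norm_add_le _ _
      _ = a * ‖w0 - v0‖ + b * ‖w1 - v1‖ := by
        rw [norm_smul, norm_smul, Real.norm_eq_abs, Real.norm_eq_abs,
          abs_of_nonneg ha, abs_of_nonneg hb]
    have hstrict : a * ‖w0 - v0‖ + b * ‖w1 - v1‖ < a * Φ w0 + b * Φ w1 := by
      rcases lt_or_eq_of_le ha with ha' | ha'
      · have h1 : a * ‖w0 - v0‖ < a * Φ w0 := by exact mul_lt_mul_of_pos_left hd0 ha'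
        have h2 : b * ‖w1 - v1‖ ≤ b * Φ w1 := mul_le_mul_of_nonneg_left hd1.le hb
        linarith
      · have hb1 : b = 1 := by linarith
        have h2 : b * ‖w1 - v1‖ < b * Φ w1 := by
          rw [hb1, one_mul, one_mul]; exact hd1
        rw [← ha']; simpa using h2
    exact lt_of_le_of_lt hnorm
      (lt_of_lt_of_le hstrict (hΦconc w0 hw0Y w1 hw1Y a b ha hb hab))
  have hloc : ∀ x : X, ∃ c : B, ∀ᶠ y in 𝓝 x, c ∈ t y := by
    intro x
    obtain ⟨z, hz⟩ := hne x
    have hzY : z ∈ Y := hsub x hz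
    have hzpos : 0 < Φ z := hΦpos z hzY
    refine ⟨z, ?_⟩
    have hopen : IsOpen {y : X | (F y ∩ Metric.ball z (Φ z)).Nonempty} :=
      hLSC _ isOpen_ball
    have hxmem : x ∈ {y : X | (F y ∩ Metric.ball z (Φ z)).Nonempty} :=
      ⟨z, hz, by simp [hzpos]⟩
    filter_upwards [hopen.mem_nhds hxmem]
    rintro y ⟨v, hvF, hvb⟩
    refine ⟨hzY, v, hvF, ?_⟩
    rw [mem_ball, dist_comm] at hvb
    rwa [← dist_eq_norm]
  obtain ⟨g, hg⟩ := exists_continuous_forall_mem_convex_of_local_const htconv hloc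
  exact ⟨g, g.continuous, fun x => hg x⟩
end

section
variable {B : Type*} [NormedAddCommGroup B] [NormedSpace ℝ B]


variable {B : Type*} [NormedAddCommGroup B] [NormedSpace ℝ B]

lemma dC_conc {G : Set B} (hG : Convex ℝ G) {y0 y1 : B} (h0 : y0 ∈ G) (h1 : y1 ∈ G)
    {a b : ℝ} (ha : 0 ≤ a) (hb : 0 ≤ b) (hab : a + b = 1) :
    a * dC G y0 + b * dC G y1 ≤ dC G (a • y0 + b • y1) := by
  unfold dC
  split
  · exact infDist_compl_concave hG h0 h1 ha hb hab
  · nlinarith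


end

end MichaelSel

open MichaelSel

set_option maxHeartbeats 1000000 in
/-- Selection theorem for a countable intersection of open convex subsets of
a Banach space: every lower semicontinuous mapping of a paracompact Hausdorff
space with nonempty convex values lying in `Y = ⋂ₙ Gₙ` and closed in `Y`
admits a continuous singlevalued selection. -/
theorem selection_into_countable_intersection_of_open_convex
    {X B : Type*} [TopologicalSpace X] [ParacompactSpace X] [T2Space X]
    [NormedAddCommGroup B] [NormedSpace ℝ B] [CompleteSpace B]
    (G : ℕ → Set B) (hGopen : ∀ n, IsOpen (G n)) (hGconv : ∀ n, Convex ℝ (G n))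
    (Y : Set B) (hY : Y = ⋂ n, G n)
    (F : X → Set B)
    (hLSC : ∀ U : Set B, IsOpen U → IsOpen {x : X | (F x ∩ U).Nonempty})
    (hne : ∀ x : X, (F x).Nonempty)
    (hconv : ∀ x : X, Convex ℝ (F x))
    (hsub : ∀ x : X, F x ⊆ Y)
    (hclosed : ∀ x : X, F x = closure (F x) ∩ Y) :
    ∃ f : X → B, Continuous f ∧ ∀ x : X, f x ∈ F x := by
  classical
  set d : ℕ → B → ℝ := fun k => dC (G k) with hd
  have hYsub : ∀ k, Y ⊆ G k := fun k => hY ▸ iInter_subset G k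
  have hYconv : Convex ℝ Y := hY ▸ convex_iInter fun n => hGconv n
  have hd_cont : ∀ k, Continuous (d k) := fun k => dC_cont (G k)
  have hd_pos : ∀ k, ∀ y ∈ Y, 0 < d k y := fun k y hy => dC_pos (hGopen k) (hYsub k hy)
  have hd_conc : ∀ k, ∀ y0 ∈ Y, ∀ y1 ∈ Y, ∀ a b : ℝ, 0 ≤ a → 0 ≤ b → a + b = 1 →
      a * d k y0 + b * d k y1 ≤ d k (a • y0 + b • y1) := fun k y0 h0 y1 h1 a b ha hb hab =>
    dC_conc (hGconv k) (hYsub k h0) (hYsub k h1) ha hb hab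
  -- the precision functions
  set Φ : ℕ → B → ℝ := fun n y => (2⁻¹ : ℝ) ^ n / 8 * minAux d n y with hΦ
  have hΦc : ∀ n, Continuous (Φ n) :=
    fun n => continuous_const.mul (minAux_cont hd_cont n)
  have hΦpos : ∀ n, ∀ y ∈ Y, 0 < Φ n y := fun n y hy => by
    have := minAux_pos (fun k => hd_pos k y hy) n
    positivity
  have hΦle : ∀ n (y : B), Φ n y ≤ (2⁻¹ : ℝ) ^ n / 8 := by
    intro n y
    have h1 : minAux d n y ≤ 1 := minAux_le_one y n
    have h2 : (0:ℝ) < (2⁻¹ : ℝ) ^ n / 8 := by positivity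
    calc Φ n y ≤ (2⁻¹ : ℝ) ^ n / 8 * 1 := by
          exact mul_le_mul_of_nonneg_left h1 h2.le
    _ = (2⁻¹ : ℝ) ^ n / 8 := mul_one _
  have hΦled : ∀ (k n : ℕ), k ≤ n → ∀ y : B, Φ n y ≤ (2⁻¹ : ℝ) ^ n / 8 * d k y := by
    intro k n hkn y
    have h1 : minAux d n y ≤ d k y := minAux_le_d y hkn
    have h2 : (0:ℝ) < (2⁻¹ : ℝ) ^ n / 8 := by positivity
    exact mul_le_mul_of_nonneg_left h1 h2.le
  have hΦconc : ∀ n, ∀ y0 ∈ Y, ∀ y1 ∈ Y, ∀ a b : ℝ, 0 ≤ a → 0 ≤ b → a + b = 1 →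
      a * Φ n y0 + b * Φ n y1 ≤ Φ n (a • y0 + b • y1) := by
    intro n y0 h0 y1 h1 a b ha hb hab
    have := minAux_conc hd_conc n h0 h1 ha hb hab
    have h2 : (0:ℝ) < (2⁻¹ : ℝ) ^ n / 8 := by positivity
    calc a * Φ n y0 + b * Φ n y1
        = (2⁻¹ : ℝ) ^ n / 8 * (a * minAux d n y0 + b * minAux d n y1) := by ring
    _ ≤ (2⁻¹ : ℝ) ^ n / 8 * minAux d n (a • y0 + b • y1) :=
        mul_le_mul_of_nonneg_left this h2.le
    _ = Φ n (a • y0 + b • y1) := rfl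
  -- the invariant
  set Q : ℕ → (X → B) → Prop :=
    fun n g => Continuous g ∧ ∀ x, g x ∈ Y ∧ ∃ v ∈ F x, ‖g x - v‖ < Φ n (g x) with hQ
  have h0 : ∃ g, Q 0 g := by
    obtain ⟨f, hf, hfp⟩ := approx_sel hYconv hLSC hne hconv hsub (hΦc 0)
      (hΦpos 0) (hΦconc 0)
    exact ⟨f, hf, hfp⟩
  have hstep : ∀ n (g : X → B), Q n g →
      ∃ g', Q (n+1) g' ∧ ∀ x, dist (g' x) (g x) < Φ n (g x) + Φ (n+1) (g' x) := by
    intro n g hQg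
    obtain ⟨hgc, hginv⟩ := hQg
    set F' : X → Set B := fun x => F x ∩ Metric.ball (g x) (Φ n (g x)) with hF'
    have hF'LSC : ∀ U : Set B, IsOpen U → IsOpen {x : X | (F' x ∩ U).Nonempty} :=
      lsc_inter_ball hLSC hgc ((hΦc n).comp hgc)
    have hF'ne : ∀ x, (F' x).Nonempty := by
      intro x
      obtain ⟨-, v, hvF, hvd⟩ := hginv x
      exact ⟨v, hvF, by rw [mem_ball, dist_eq_norm, norm_sub_rev]; exact hvd⟩
    have hF'conv : ∀ x, Convex ℝ (F' x) := fun x => (hconv x).inter (convex_ball _ _)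
    have hF'sub : ∀ x, F' x ⊆ Y := fun x => (inter_subset_left).trans (hsub x)
    obtain ⟨f, hfc, hfp⟩ := approx_sel hYconv hF'LSC hF'ne hF'conv hF'sub (hΦc (n+1))
      (hΦpos (n+1)) (hΦconc (n+1))
    refine ⟨f, ⟨hfc, fun x => ?_⟩, fun x => ?_⟩
    · obtain ⟨hfY, v, hvF', hvd⟩ := hfp x
      exact ⟨hfY, v, hvF'.1, hvd⟩
    · obtain ⟨hfY, v, hvF', hvd⟩ := hfp x
      have h1 : dist (f x) v < Φ (n+1) (f x) := by rwa [dist_eq_norm]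
      have h2 : dist v (g x) < Φ n (g x) := hvF'.2
      calc dist (f x) (g x) ≤ dist (f x) v + dist v (g x) := dist_triangle _ _ _
      _ < Φ (n+1) (f x) + Φ n (g x) := by linarith
      _ = Φ n (g x) + Φ (n+1) (f x) := by ring
  -- build the sequence
  let chain : ∀ n : ℕ, {g : X → B // Q n g} := fun n =>
    Nat.rec ⟨h0.choose, h0.choose_spec⟩
      (fun k ih => ⟨(hstep k ih.1 ih.2).choose, (hstep k ih.1 ih.2).choose_spec.1⟩) n
  have hQn : ∀ n, Q n (chain n).1 := fun n => (chain n).2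
  have hclose : ∀ n x, dist ((chain (n+1)).1 x) ((chain n).1 x)
      < Φ n ((chain n).1 x) + Φ (n+1) ((chain (n+1)).1 x) :=
    fun n => (hstep n (chain n).1 (chain n).2).choose_spec.2
  obtain ⟨seq, hQn', hclose'⟩ :
      ∃ seq : ℕ → X → B, (∀ n, Q n (seq n)) ∧
        ∀ n x, dist (seq (n+1) x) (seq n x) < Φ n (seq n x) + Φ (n+1) (seq (n+1) x) :=
    ⟨fun n => (chain n).1, hQn, hclose⟩
  clear hclose hQn
  clear chain
  have hstep2 : ∀ n x, dist (seq n x) (seq (n+1) x) ≤ (1/4 : ℝ) * (2⁻¹)^n := by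
    intro n x
    have h1 := hclose' n x
    have h2 := hΦle n (seq n x)
    have h3 := hΦle (n+1) (seq (n+1) x)
    have h4 : (2⁻¹:ℝ)^(n+1) ≤ (2⁻¹)^n := by
      rw [pow_succ]
      nlinarith [pow_pos (by norm_num : (0:ℝ) < 2⁻¹) n]
    rw [dist_comm]
    nlinarith [dist_nonneg (x := (seq (n+1) x)) (y := (seq n x))]
  have hcauchy : ∀ x, CauchySeq (fun n => seq n x) :=
    fun x => cauchySeq_of_le_geometric 2⁻¹ (1/4) (by norm_num) (fun n => hstep2 n x)
  choose flim hflim using fun x => cauchySeq_tendsto_of_complete (hcauchy x)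
  have hdistlim : ∀ n x, dist (seq n x) (flim x) ≤ (2⁻¹:ℝ)^n / 2 := by
    intro n x
    have := dist_le_of_le_geometric_of_tendsto 2⁻¹ (1/4) (by norm_num)
      (fun m => hstep2 m x) (hflim x) n
    calc dist (seq n x) (flim x) ≤ 1/4 * (2⁻¹:ℝ)^n / (1 - 2⁻¹) := this
    _ = (2⁻¹:ℝ)^n / 2 := by ring
  -- continuity of the limit
  have huni : TendstoUniformly (fun n x => seq n x) flim atTop := by
    rw [Metric.tendstoUniformly_iff]
    intro ε hε
    obtain ⟨N, hN⟩ : ∃ N : ℕ, (2⁻¹:ℝ)^N < ε := by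
      obtain ⟨N, hN⟩ := exists_pow_lt_of_lt_one hε (by norm_num : (2⁻¹:ℝ) < 1)
      exact ⟨N, hN⟩
    filter_upwards [eventually_ge_atTop N] with n hn x
    have h1 := hdistlim n x
    have h2 : (2⁻¹:ℝ)^n ≤ (2⁻¹)^N :=
      pow_le_pow_of_le_one (by norm_num) (by norm_num) hn
    rw [dist_comm]
    calc dist (seq n x) (flim x) ≤ (2⁻¹:ℝ)^n / 2 := h1
    _ ≤ (2⁻¹:ℝ)^N / 2 := by linarith
    _ < ε := by linarith [pow_pos (by norm_num : (0:ℝ) < 2⁻¹) N]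
  have hflimc : Continuous flim :=
    huni.continuous (Eventually.of_forall fun n => (hQn' n).1).frequently
  -- the limit is in the closure of `F x`
  have hcl : ∀ x, flim x ∈ closure (F x) := by
    intro x
    rw [Metric.mem_closure_iff]
    intro ε hε
    obtain ⟨N, hN⟩ : ∃ N : ℕ, (2⁻¹:ℝ)^N < ε :=
      exists_pow_lt_of_lt_one hε (by norm_num : (2⁻¹:ℝ) < 1)
    obtain ⟨-, v, hvF, hvd⟩ := (hQn' N).2 x
    refine ⟨v, hvF, ?_⟩
    have h1 := hdistlim N x
    have h2 : dist (seq N x) v < (2⁻¹:ℝ)^N / 8 := by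
      rw [dist_eq_norm]
      exact lt_of_lt_of_le hvd (hΦle N _)
    calc dist (flim x) v ≤ dist (flim x) (seq N x) + dist (seq N x) v :=
      dist_triangle _ _ _
    _ < (2⁻¹:ℝ)^N / 2 + (2⁻¹:ℝ)^N / 8 := by
        rw [dist_comm (flim x)]
        linarith
    _ ≤ ε := by linarith [pow_pos (by norm_num : (0:ℝ) < 2⁻¹) N]
  -- the limit is in every `G k`
  have hGk : ∀ k x, flim x ∈ G k := by
    intro k x
    set a : ℕ → ℝ := fun n => d k (seq n x) with ha
    have hapos : ∀ n, 0 < a n := fun n => hd_pos k _ ((hQn' n).2 x).1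
    have hkey : ∀ n, k ≤ n → a n * (1 - (2⁻¹:ℝ)^n/4) ≤ a (n+1) := by
      intro n hkn
      have hlipest : a n ≤ a (n+1) + dist (seq n x) (seq (n+1) x) :=
        dC_lip (G k) _ _
      have hd1 := hclose' n x
      have hb1 : Φ n (seq n x) ≤ (2⁻¹:ℝ)^n/8 * a n := hΦled k n hkn _
      have hb2 : Φ (n+1) (seq (n+1) x) ≤ (2⁻¹:ℝ)^(n+1)/8 * a (n+1) :=
        hΦled k (n+1) (le_trans hkn (Nat.le_succ n)) _
      have hpow : (0:ℝ) < (2⁻¹:ℝ)^n := pow_pos (by norm_num) n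
      have hpow1 : (2⁻¹:ℝ)^n ≤ 1 := pow_le_one₀ (by norm_num) (by norm_num)
      have hdist' : dist (seq n x) (seq (n+1) x)
          < (2⁻¹:ℝ)^n/8 * a n + (2⁻¹:ℝ)^(n+1)/8 * a (n+1) := by
        rw [dist_comm]
        calc dist (seq (n+1) x) (seq n x)
            < Φ n (seq n x) + Φ (n+1) (seq (n+1) x) := hd1
        _ ≤ (2⁻¹:ℝ)^n/8 * a n + (2⁻¹:ℝ)^(n+1)/8 * a (n+1) := by linarith
      have hfin : a n ≤ a (n+1) + (2⁻¹:ℝ)^n/8 * a n + (2⁻¹:ℝ)^(n+1)/8 * a (n+1) := by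
        linarith
      have hpow2 : (2⁻¹:ℝ)^(n+1) = (2⁻¹:ℝ)^n * 2⁻¹ := pow_succ _ _
      set w : ℝ := (2⁻¹:ℝ)^n with hw
      rw [hpow2] at hfin
      have hfin' : a n * (1 - w/8) ≤ a (n+1) * (1 + w/16) := by nlinarith [hfin]
      have hpos16 : (0:ℝ) < 1 + w/16 := by nlinarith
      rw [← mul_le_mul_iff_of_pos_right hpos16]
      have hh1 : 0 ≤ a n * (w/16 + w^2/64) := by
        have : (0:ℝ) ≤ w/16 + w^2/64 := by nlinarith
        exact mul_nonneg (hapos n).le this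
      nlinarith [hfin', hh1]
    have hprod : ∀ n, k ≤ n → a k * (1 - ((2⁻¹:ℝ)^k - (2⁻¹:ℝ)^n)/2) ≤ a n := by
      intro n hkn
      induction n, hkn using Nat.le_induction with
      | base => simp
      | succ n hkn ih =>
        have h1 := hkey n hkn
        have hpk : (0:ℝ) < (2⁻¹:ℝ)^k := pow_pos (by norm_num) k
        have hpn : (0:ℝ) < (2⁻¹:ℝ)^n := pow_pos (by norm_num) n
        have hpk1 : (2⁻¹:ℝ)^k ≤ 1 := pow_le_one₀ (by norm_num) (by norm_num)
        have hmono : (2⁻¹:ℝ)^n ≤ (2⁻¹:ℝ)^k :=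
          pow_le_pow_of_le_one (by norm_num) (by norm_num) hkn
        have hpow2 : (2⁻¹:ℝ)^(n+1) = (2⁻¹:ℝ)^n * 2⁻¹ := pow_succ _ _
        have hfac : (0:ℝ) ≤ 1 - (2⁻¹:ℝ)^n/4 := by nlinarith
        have h2 : a k * (1 - ((2⁻¹:ℝ)^k - (2⁻¹:ℝ)^n)/2) * (1 - (2⁻¹:ℝ)^n/4)
            ≤ a n * (1 - (2⁻¹:ℝ)^n/4) := mul_le_mul_of_nonneg_right ih hfac
        have h3 : 0 ≤ a k * ((2⁻¹:ℝ)^n * ((2⁻¹:ℝ)^k - (2⁻¹:ℝ)^n)) :=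
          mul_nonneg (hapos k).le (mul_nonneg hpn.le (by linarith))
        rw [hpow2]
        nlinarith [h2, h3, h1]
    have halim : Tendsto (fun n => a n) atTop (𝓝 (d k (flim x))) :=
      ((hd_cont k).tendsto (flim x)).comp (hflim x)
    have hlb : a k / 2 ≤ d k (flim x) := by
      apply ge_of_tendsto halim
      filter_upwards [eventually_ge_atTop k] with n hn
      have h1 := hprod n hn
      have hpk1 : (2⁻¹:ℝ)^k ≤ 1 := pow_le_one₀ (by norm_num) (by norm_num)
      have hpn : (0:ℝ) < (2⁻¹:ℝ)^n := pow_pos (by norm_num) n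
      nlinarith [hapos k]
    have : (0:ℝ) < d k (flim x) := lt_of_lt_of_le (by linarith [hapos k]) hlb
    have hdd : dist (flim x) (flim x) < dC (G k) (flim x) := by
      rw [dist_self]; exact this
    exact dC_mem hdd
  refine ⟨flim, hflimc, fun x => ?_⟩
  have hYmem : flim x ∈ Y := hY ▸ mem_iInter.2 fun k => hGk k x
  rw [hclosed x]
  exact ⟨hcl x, hYmem⟩
end

section
/- Dobrowolski–van Mill selection theorem: let E be a real topological vector space whose topology is induced by a metric (not necessarily locally convex), Y ⊆ E a convex subset, and X a metrizable topological space. Let F be a lower semicontinuous multivalued mapping from X to Y such that every value F(x) is a nonempty compact convex subset of Y, and suppose there is N ∈ ℕ such that for every x ∈ X the linear span of the set of differences of points of F(x) (equivalently, the vector span of F(x)) has dimension at most N. Then F admits a continuous singlevalued selection f : X → E with f(x) ∈ F(x) for all x ∈ X. -/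
open Set Filter Topology

set_option linter.unusedSectionVars false
set_option maxHeartbeats 1000000

section Caratheodory

variable {E : Type*} [AddCommGroup E] [Module ℝ E]

lemma vectorSpan_le_submodule {S : Set E} {P : Submodule ℝ E} (h : S ⊆ (P : Set E)) :
    vectorSpan ℝ S ≤ P := by
  rw [vectorSpan_def]
  refine Submodule.span_le.2 ?_
  rintro v ⟨a, ha, b, hb, rfl⟩
  exact P.sub_mem (h ha) (h hb)

lemma carat_finset {D : Set E} {N : ℕ}
    (hrank : Module.rank ℝ (vectorSpan ℝ D) ≤ (N : Cardinal)) {p : E}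
    (hp : p ∈ convexHull ℝ D) :
    ∃ t : Finset E, ↑t ⊆ D ∧ t.card ≤ N + 1 ∧ p ∈ convexHull ℝ (t : Set E) := by
  have hfd : FiniteDimensional ℝ (vectorSpan ℝ D) :=
    Module.rank_lt_aleph0_iff.mp (lt_of_le_of_lt hrank (Cardinal.nat_lt_aleph0 N))
  have hfr : Module.finrank ℝ (vectorSpan ℝ D) ≤ N := Module.finrank_le_of_rank_le hrank
  rw [convexHull_eq_union] at hp
  simp only [Set.mem_iUnion, exists_prop] at hp
  obtain ⟨t, hts, hai, hpt⟩ := hp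
  refine ⟨t, hts, ?_, hpt⟩
  have h1 : Fintype.card ↥t ≤ Module.finrank ℝ (vectorSpan ℝ (Set.range ((↑) : ↥t → E))) + 1 :=
    hai.card_le_finrank_succ
  have h2 : vectorSpan ℝ (Set.range ((↑) : ↥t → E)) ≤ vectorSpan ℝ D := by
    rw [Subtype.range_coe]; exact vectorSpan_mono ℝ hts
  have h3 : Module.finrank ℝ (vectorSpan ℝ (Set.range ((↑) : ↥t → E))) ≤
      Module.finrank ℝ (vectorSpan ℝ D) := Submodule.finrank_mono h2
  calc t.card = Fintype.card ↥t := (Fintype.card_coe t).symm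
    _ ≤ _ + 1 := h1
    _ ≤ N + 1 := by omega

lemma carat_fin_aux {D : Set E} {N : ℕ} {t : Finset E} (htD : ↑t ⊆ D) (hcard : t.card ≤ N + 1)
    {p : E} (hp : p ∈ convexHull ℝ (t : Set E)) :
    ∃ (w : Fin (N + 1) → ℝ) (z : Fin (N + 1) → E),
      (∀ i, 0 ≤ w i) ∧ (∑ i, w i = 1) ∧ (∀ i, z i ∈ D) ∧ (∑ i, w i • z i = p) := by
  classical
  rw [Finset.convexHull_eq] at hp
  obtain ⟨w, hw0, hw1, hwp⟩ := hp
  have htne : t.Nonempty := by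
    rcases t.eq_empty_or_nonempty with rfl | h
    · simp at hw1
    · exact h
  obtain ⟨y₀, hy₀⟩ := htne
  have hcard' : Fintype.card ↥t ≤ Fintype.card (Fin (N + 1)) := by
    simpa [Fintype.card_coe] using hcard
  obtain ⟨e⟩ := Function.Embedding.nonempty_of_card_le hcard'
  set w' : Fin (N + 1) → ℝ := fun j => if h : ∃ i : ↥t, e i = j then w ↑h.choose else 0 with hw'
  set z' : Fin (N + 1) → E := fun j => if h : ∃ i : ↥t, e i = j then ↑h.choose else y₀ with hz'
  have keyR : ∀ (g : Fin (N+1) → ℝ),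
      (∀ j, (¬ ∃ i, e i = j) → g j = 0) → ∑ j, g j = ∑ i : ↥t, g (e i) := by
    intro g hg
    rw [← Finset.sum_image (f := g) (g := e)
      (by intro a _ b _ h; exact e.injective h) (s := Finset.univ)]
    refine (Finset.sum_subset (Finset.subset_univ _) ?_).symm
    intro j _ hj
    refine hg j ?_
    simp only [Finset.mem_image, Finset.mem_univ, true_and] at hj
    tauto
  have keyE : ∀ (g : Fin (N+1) → E),
      (∀ j, (¬ ∃ i, e i = j) → g j = 0) → ∑ j, g j = ∑ i : ↥t, g (e i) := by
    intro g hg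
    rw [← Finset.sum_image (f := g) (g := e)
      (by intro a _ b _ h; exact e.injective h) (s := Finset.univ)]
    refine (Finset.sum_subset (Finset.subset_univ _) ?_).symm
    intro j _ hj
    refine hg j ?_
    simp only [Finset.mem_image, Finset.mem_univ, true_and] at hj
    tauto
  have hchoose : ∀ i : ↥t, ∀ (h : ∃ i' : ↥t, e i' = e i), h.choose = i := by
    intro i h
    exact e.injective h.choose_spec
  have hw'0 : ∀ j, (¬ ∃ i : ↥t, e i = j) → w' j = 0 := by
    intro j hj; simp only [hw']; rw [dif_neg hj]
  refine ⟨w', z', ?_, ?_, ?_, ?_⟩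
  · intro j
    by_cases h : ∃ i : ↥t, e i = j
    · simp only [hw']; rw [dif_pos h]; exact hw0 _ h.choose.2
    · rw [hw'0 j h]
  · rw [keyR w' hw'0]
    have heq : ∀ i : ↥t, w' (e i) = w ↑i := by
      intro i
      have h : ∃ i' : ↥t, e i' = e i := ⟨i, rfl⟩
      simp only [hw']; rw [dif_pos h, hchoose i h]
    rw [Finset.sum_congr rfl (fun i _ => heq i), Finset.sum_coe_sort t w, hw1]
  · intro j
    by_cases h : ∃ i : ↥t, e i = j
    · simp only [hz']; rw [dif_pos h]; exact htD h.choose.2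
    · simp only [hz']; rw [dif_neg h]; exact htD hy₀
  · have hz0 : ∀ j, (¬ ∃ i : ↥t, e i = j) → w' j • z' j = 0 := by
      intro j hj; rw [hw'0 j hj, zero_smul]
    rw [keyE (fun j => w' j • z' j) hz0]
    have heq : ∀ i : ↥t, w' (e i) • z' (e i) = w ↑i • ↑i := by
      intro i
      have h : ∃ i' : ↥t, e i' = e i := ⟨i, rfl⟩
      simp only [hw', hz']; rw [dif_pos h, dif_pos h, hchoose i h]
    rw [Finset.sum_congr rfl (fun i _ => heq i), Finset.sum_coe_sort t (fun y => w y • y)]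
    rw [← Finset.centerMass_eq_of_sum_1 _ _ hw1] at *
    exact hwp

lemma carat_fin {D : Set E} {N : ℕ}
    (hrank : Module.rank ℝ (vectorSpan ℝ D) ≤ (N : Cardinal)) {p : E}
    (hp : p ∈ convexHull ℝ D) :
    ∃ (w : Fin (N + 1) → ℝ) (z : Fin (N + 1) → E),
      (∀ i, 0 ≤ w i) ∧ (∑ i, w i = 1) ∧ (∀ i, z i ∈ D) ∧ (∑ i, w i • z i = p) := by
  obtain ⟨t, htD, hcard, hpt⟩ := carat_finset hrank hp
  exact carat_fin_aux htD hcard hpt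

end Caratheodory

section TVS

variable {E : Type*} [AddCommGroup E] [Module ℝ E] [TopologicalSpace E]
  [IsTopologicalAddGroup E] [ContinuousSMul ℝ E]

/-- Convex hull of a compact set of bounded dimension is compact. -/
lemma isCompact_convexHull_rank {K : Set E} {N : ℕ} (hK : IsCompact K)
    (hrank : Module.rank ℝ (vectorSpan ℝ K) ≤ (N : Cardinal)) :
    IsCompact (convexHull ℝ K) := by
  have himage : convexHull ℝ K =
      (fun q : (Fin (N+1) → ℝ) × (Fin (N+1) → E) => ∑ i, q.1 i • q.2 i) ''
        (stdSimplex ℝ (Fin (N+1)) ×ˢ Set.univ.pi (fun _ : Fin (N+1) => K)) := by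
    apply Set.Subset.antisymm
    · intro p hp
      obtain ⟨w, z, hw0, hw1, hz, hsum⟩ := carat_fin hrank hp
      exact ⟨(w, z), ⟨⟨hw0, hw1⟩, fun i _ => hz i⟩, hsum⟩
    · rintro _ ⟨⟨w, z⟩, ⟨⟨hw0, hw1⟩, hz⟩, rfl⟩
      exact mem_convexHull_of_exists_fintype w z hw0 hw1 (fun i => hz i (Set.mem_univ i)) rfl
  rw [himage]
  refine IsCompact.image ?_ ?_
  · exact IsCompact.prod (isCompact_stdSimplex ℝ (Fin (N+1))) (isCompact_univ_pi fun _ => hK)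
  · exact continuous_finset_sum _ fun i _ =>
      ((continuous_apply i).comp continuous_fst).smul ((continuous_apply i).comp continuous_snd)


variable {X : Type*} [TopologicalSpace X]

/-- LSC is preserved by intersecting with an open set. -/
lemma lsc_inter {S : X → Set E} (h : ∀ U : Set E, IsOpen U → IsOpen {x | (S x ∩ U).Nonempty})
    {O : Set E} (hO : IsOpen O) :
    ∀ U : Set E, IsOpen U → IsOpen {x | ((S x ∩ O) ∩ U).Nonempty} := by
  intro U hU
  have : {x | ((S x ∩ O) ∩ U).Nonempty} = {x | (S x ∩ (O ∩ U)).Nonempty} := by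
    simp [Set.inter_assoc]
  rw [this]
  exact h _ (hO.inter hU)

/-- LSC is preserved by closure. -/
lemma lsc_closure {S : X → Set E} (h : ∀ U : Set E, IsOpen U → IsOpen {x | (S x ∩ U).Nonempty}) :
    ∀ U : Set E, IsOpen U → IsOpen {x | (closure (S x) ∩ U).Nonempty} := by
  intro U hU
  have : {x | (closure (S x) ∩ U).Nonempty} = {x | (S x ∩ U).Nonempty} := by
    ext x
    constructor
    · rintro ⟨v, hv, hvU⟩
      obtain ⟨u, hu, huS⟩ := mem_closure_iff.1 hv U hU hvU
      exact ⟨u, huS, hu⟩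
    · rintro ⟨v, hv, hvU⟩
      exact ⟨v, subset_closure hv, hvU⟩
  rw [this]; exact h U hU

/-- LSC is preserved by convex hull. -/
lemma lsc_convexHull {S : X → Set E}
    (h : ∀ U : Set E, IsOpen U → IsOpen {x | (S x ∩ U).Nonempty}) :
    ∀ U : Set E, IsOpen U → IsOpen {x | (convexHull ℝ (S x) ∩ U).Nonempty} := by
  intro U hU
  rw [isOpen_iff_mem_nhds]
  rintro x₀ ⟨v, hvhull, hvU⟩
  rw [mem_convexHull_iff_exists_fintype] at hvhull
  obtain ⟨ι, hfin, w, z, hw0, hw1, hz, hsum⟩ := hvhull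
  -- the summation map
  have hcont : Continuous (fun g : ι → E => ∑ i, w i • g i) :=
    continuous_finset_sum _ fun i _ => (continuous_apply i).const_smul (w i)
  have hzU : (fun g : ι → E => ∑ i, w i • g i) z ∈ U := by
    show ∑ i, w i • z i ∈ U
    rw [hsum]; exact hvU
  have hιne : Nonempty ι := by
    by_contra hempty
    rw [not_nonempty_iff] at hempty
    rw [Finset.univ_eq_empty, Finset.sum_empty] at hw1
    exact zero_ne_one hw1
  have hopen : IsOpen ((fun g : ι → E => ∑ i, w i • g i) ⁻¹' U) := hU.preimage hcont
  obtain ⟨I, u, hu, hsub⟩ := isOpen_pi_iff.1 hopen z hzU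
  -- neighborhood of x₀
  have hmem : ∀ i ∈ I, x₀ ∈ {x | (S x ∩ u i).Nonempty} := fun i hi => ⟨z i, hz i, (hu i hi).2⟩
  have hN : (⋂ i ∈ I, {x | (S x ∩ u i).Nonempty}) ∈ 𝓝 x₀ := by
    refine (Filter.biInter_finset_mem I).2 fun i hi => (h _ (hu i hi).1).mem_nhds (hmem i hi)
  have hN2 : {x | (S x ∩ Set.univ).Nonempty} ∈ 𝓝 x₀ :=
    (h Set.univ isOpen_univ).mem_nhds ⟨z (Classical.arbitrary ι),
      hz _, Set.mem_univ _⟩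
  refine Filter.mem_of_superset (Filter.inter_mem hN hN2) ?_
  rintro x ⟨hx, hxne⟩
  simp only [Set.mem_iInter] at hx
  classical
  obtain ⟨s₀, hs₀, -⟩ := hxne
  choose g hgS hgu using fun i (hi : i ∈ I) => hx i hi
  set g' : ι → E := fun i => if hi : i ∈ I then g i hi else s₀ with hg'
  refine ⟨∑ i, w i • g' i, ?_, ?_⟩
  · refine mem_convexHull_of_exists_fintype w g' hw0 hw1 ?_ rfl
    intro i
    by_cases hi : i ∈ I
    · simp only [hg', dif_pos hi]; exact hgS i hi
    · simp only [hg', dif_neg hi]; exact hs₀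
  · refine hsub ?_
    intro i hi
    show (if hi : i ∈ I then g i hi else s₀) ∈ u i
    rw [dif_pos (Finset.mem_coe.mp hi)]
    exact hgu i _



/-- Sums of `k` elements of a suitable neighborhood of zero lie in `V`. -/
lemma sumFin (k : ℕ) {V : Set E} (hV : V ∈ 𝓝 (0 : E)) :
    ∃ W ∈ 𝓝 (0 : E), ∀ f : Fin k → E, (∀ i, f i ∈ W) → ∑ i, f i ∈ V := by
  induction k generalizing V with
  | zero => exact ⟨V, hV, fun f _ => by simpa using mem_of_mem_nhds hV⟩
  | succ n ih =>
    obtain ⟨V₂, hV₂, hhalf⟩ := exists_nhds_zero_half hV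
    obtain ⟨W, hW, hsum⟩ := ih hV₂
    refine ⟨W ∩ V₂, inter_mem hW hV₂, fun f hf => ?_⟩
    rw [Fin.sum_univ_succ]
    exact hhalf _ (hf 0).2 _ (hsum (fun i => f i.succ) (fun i => (hf i.succ).1))

/-- A closed balanced neighborhood of zero inside a given one. -/
lemma closedBalanced {V : Set E} (hV : V ∈ 𝓝 (0 : E)) :
    ∃ B ∈ 𝓝 (0 : E), IsClosed B ∧ Balanced ℝ B ∧ B ⊆ V := by
  obtain ⟨C, ⟨hC, hCcl⟩, hCV⟩ := (closed_nhds_basis (0 : E)).mem_iff.mp hV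
  refine ⟨closure (balancedCore ℝ C), ?_, isClosed_closure,
    (balancedCore_balanced C).closure, ?_⟩
  · exact mem_of_superset (balancedCore_mem_nhds_zero hC) subset_closure
  · calc closure (balancedCore ℝ C) ⊆ closure C := closure_mono (balancedCore_subset C)
      _ = C := hCcl.closure_eq
      _ ⊆ V := hCV


end TVS

section Step
variable {X : Type*} [TopologicalSpace X] [NormalSpace X] [ParacompactSpace X]
  {E : Type*} [AddCommGroup E] [Module ℝ E] [TopologicalSpace E]
  [IsTopologicalAddGroup E] [ContinuousSMul ℝ E] [T2Space E]

lemma dvm_step {N : ℕ} {G : X → Set E}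
    (hLSC : ∀ U : Set E, IsOpen U → IsOpen {x | (G x ∩ U).Nonempty})
    (hne : ∀ x, (G x).Nonempty) (hcomp : ∀ x, IsCompact (G x))
    (hconv : ∀ x, Convex ℝ (G x))
    (hdim : ∀ x, Module.rank ℝ (vectorSpan ℝ (G x)) ≤ (N : Cardinal))
    {V : Set E} (hV : V ∈ 𝓝 (0 : E)) :
    ∃ G' : X → Set E,
      (∀ U : Set E, IsOpen U → IsOpen {x | (G' x ∩ U).Nonempty}) ∧
      (∀ x, (G' x).Nonempty) ∧ (∀ x, IsCompact (G' x)) ∧ (∀ x, Convex ℝ (G' x)) ∧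
      (∀ x, G' x ⊆ G x) ∧
      (∀ x, ∀ a ∈ G' x, ∀ b ∈ G' x, a - b ∈ V) := by
  classical
  -- the chain of neighborhoods
  obtain ⟨W₁, hW₁, hW₁sum⟩ := sumFin (N + 1) hV
  obtain ⟨B₁, hB₁, hB₁cl, hB₁bal, hB₁W₁⟩ := closedBalanced hW₁
  obtain ⟨W₂, hW₂, hW₂half⟩ := exists_nhds_zero_half hB₁
  have hW₂n : (fun v : E => -v) ⁻¹' W₂ ∈ 𝓝 (0 : E) := by
    refine continuous_neg.continuousAt.preimage_mem_nhds ?_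
    simpa using hW₂
  have hW₂' : W₂ ∩ (fun v : E => -v) ⁻¹' W₂ ∈ 𝓝 (0 : E) := inter_mem hW₂ hW₂n
  obtain ⟨W₃, hW₃, hW₃sum⟩ := sumFin (N + 1) hW₂'
  obtain ⟨Wb, hWb, hWbcl, hWbbal, hWbW₃⟩ := closedBalanced hW₃
  -- the cover
  set z : X → E := fun c => (hne c).choose with hz
  have hzG : ∀ c, z c ∈ G c := fun c => (hne c).choose_spec
  set O : X → Set E := fun c => (z c + ·) '' interior Wb with hO
  have hOopen : ∀ c, IsOpen (O c) := fun c => (isOpenMap_add_left (z c)) _ isOpen_interior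
  have hzO : ∀ c, z c ∈ O c :=
    fun c => ⟨0, mem_interior_iff_mem_nhds.2 hWb, add_zero _⟩
  set U : X → Set X := fun c => {y | (G y ∩ O c).Nonempty} with hU
  have hUopen : ∀ c, IsOpen (U c) := fun c => hLSC _ (hOopen c)
  have hUc : ∀ c, c ∈ U c := fun c => ⟨z c, hzG c, hzO c⟩
  obtain ⟨p, hsub⟩ := PartitionOfUnity.exists_isSubordinate isClosed_univ U hUopen
    (fun x _ => mem_iUnion.2 ⟨x, hUc x⟩)
  -- the local pieces
  set H : X → X → Set E := fun c y => convexHull ℝ (closure (G y ∩ O c)) with hH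
  have hclsub : ∀ c y, closure (G y ∩ O c) ⊆ G y :=
    fun c y => closure_minimal inter_subset_left (hcomp y).isClosed
  have hHG : ∀ c y, H c y ⊆ G y := fun c y => convexHull_min (hclsub c y) (hconv y)
  have hclrank : ∀ c y, Module.rank ℝ (vectorSpan ℝ (closure (G y ∩ O c))) ≤ (N : Cardinal) :=
    fun c y => le_trans (Submodule.rank_mono (vectorSpan_mono ℝ (hclsub c y))) (hdim y)
  have hHcomp : ∀ c y, IsCompact (H c y) := fun c y =>
    isCompact_convexHull_rank
      ((hcomp y).of_isClosed_subset isClosed_closure (hclsub c y)) (hclrank c y)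
  have hHconv : ∀ c y, Convex ℝ (H c y) := fun c y => convex_convexHull ℝ _
  have hHlsc : ∀ c, ∀ Uo : Set E, IsOpen Uo → IsOpen {y | (H c y ∩ Uo).Nonempty} :=
    fun c => lsc_convexHull (lsc_closure (lsc_inter hLSC (hOopen c)))
  have hHne : ∀ c y, y ∈ U c → (H c y).Nonempty := by
    rintro c y ⟨v, hv⟩
    exact ⟨v, subset_convexHull ℝ _ (subset_closure hv)⟩
  -- key estimate : each element of H c y is close to z c
  have hHsmall : ∀ c y, ∀ σ ∈ H c y, σ - z c ∈ W₂ ∧ -(σ - z c) ∈ W₂ := by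
    intro c y σ hσ
    obtain ⟨w, u, hw0, hw1, hu, husum⟩ := carat_fin (hclrank c y) hσ
    have hterm : ∀ i, w i • (u i - z c) ∈ Wb := by
      intro i
      have hui : u i - z c ∈ Wb := by
        have h1 : u i - z c ∈ closure ((· - z c) '' (G y ∩ O c)) := by
          refine image_closure_subset_closure_image (continuous_sub_right (z c)) ?_
          exact ⟨u i, hu i, rfl⟩
        have h2 : (· - z c) '' (G y ∩ O c) ⊆ interior Wb := by
          rintro - ⟨v, ⟨-, ⟨wv, hwv, rfl⟩⟩, rfl⟩
          simpa using hwv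
        exact hWbcl.closure_subset_iff.2 (h2.trans interior_subset) h1
      have hw1i : ‖w i‖ ≤ 1 := by
        rw [Real.norm_eq_abs, abs_of_nonneg (hw0 i)]
        calc w i ≤ ∑ j, w j := Finset.single_le_sum (fun j _ => hw0 j) (Finset.mem_univ i)
          _ = 1 := hw1
      exact hWbbal.smul_mem hw1i hui
    have hsum : σ - z c = ∑ i, w i • (u i - z c) := by
      simp only [smul_sub]
      rw [Finset.sum_sub_distrib, husum, ← Finset.sum_smul, hw1, one_smul]
    have := hW₃sum (fun i => w i • (u i - z c)) (fun i => hWbW₃ (hterm i))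
    rw [← hsum] at this
    exact ⟨this.1, this.2⟩
  -- the glued multivalued map
  set G' : X → Set E := fun x =>
    {v | ∃ σ : X → E, (∀ c, p c x ≠ 0 → σ c ∈ H c x) ∧ v = ∑ᶠ c, p c x • σ c} with hG'
  have hfinsumE : ∀ (x : X) (σ : X → E),
      ∑ᶠ c, p c x • σ c = ∑ c ∈ p.finsupport x, p c x • σ c :=
    fun x σ => (p.sum_finsupport_smul_eq_finsum (fun c _ => σ c)).symm
  have hmem_s : ∀ {x c : X}, c ∈ p.finsupport x ↔ p c x ≠ 0 := by
    intro x c; rw [p.mem_finsupport]; exact Iff.rfl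
  have hsum1 : ∀ x : X, ∑ c ∈ p.finsupport x, p c x = 1 :=
    fun x => p.sum_finsupport (mem_univ x)
  have hHxne : ∀ (x c : X), p c x ≠ 0 → (H c x).Nonempty := fun x c h =>
    hHne c x (hsub c (subset_closure (Function.mem_support.2 h)))
  -- G' is a subset of G
  have hG'sub : ∀ x, G' x ⊆ G x := by
    rintro x v ⟨σ, hσ, rfl⟩
    rw [hfinsumE x σ]
    exact (hconv x).sum_mem (fun c _ => p.nonneg c x) (hsum1 x)
      (fun c hc => hHG c x (hσ c (hmem_s.1 hc)))
  -- G' is nonempty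
  have hG'ne : ∀ x, (G' x).Nonempty := by
    intro x
    set σ : X → E := fun c => if h : (H c x).Nonempty then h.choose else 0 with hσdef
    refine ⟨∑ᶠ c, p c x • σ c, σ, ?_, rfl⟩
    intro c hc
    have hne' := hHxne x c hc
    simp only [hσdef, dif_pos hne']
    exact hne'.choose_spec
  -- G' is convex
  have hG'conv : ∀ x, Convex ℝ (G' x) := by
    rintro x a ⟨σ, hσ, rfl⟩ b ⟨τ, hτ, rfl⟩ θ₁ θ₂ h1 h2 h12
    refine ⟨fun c => θ₁ • σ c + θ₂ • τ c, fun c hc => (hHconv c x) (hσ c hc) (hτ c hc) h1 h2 h12, ?_⟩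
    rw [hfinsumE, hfinsumE, hfinsumE, Finset.smul_sum, Finset.smul_sum,
      ← Finset.sum_add_distrib]
    refine Finset.sum_congr rfl fun c _ => ?_
    rw [smul_add, smul_comm (p c x) θ₁, smul_comm (p c x) θ₂]
  -- G' is compact
  have hG'eq : ∀ x, G' x = (fun g : (↥(p.finsupport x) → E) =>
      ∑ c : ↥(p.finsupport x), p (↑c) x • g c) ''
      (Set.univ.pi fun c : ↥(p.finsupport x) => H (↑c) x) := by
    intro x
    apply Set.Subset.antisymm
    · rintro v ⟨σ, hσ, rfl⟩
      refine ⟨fun c => σ ↑c, fun c _ => hσ _ (hmem_s.1 c.2), ?_⟩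
      show (∑ c : ↥(p.finsupport x), p (↑c) x • σ ↑c) = ∑ᶠ c, p c x • σ c
      rw [hfinsumE x σ]
      exact Finset.sum_coe_sort (p.finsupport x) (fun c => p c x • σ c)
    · rintro - ⟨g, hg, rfl⟩
      set σ : X → E := fun c => if h : c ∈ p.finsupport x then g ⟨c, h⟩ else 0 with hσdef
      refine ⟨σ, ?_, ?_⟩
      · intro c hc
        have h' : c ∈ p.finsupport x := hmem_s.2 hc
        simp only [hσdef, dif_pos h']
        exact hg ⟨c, h'⟩ (mem_univ _)
      · show (∑ c : ↥(p.finsupport x), p (↑c) x • g c) = ∑ᶠ c, p c x • σ c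
        rw [hfinsumE x σ, ← Finset.sum_coe_sort (p.finsupport x) (fun c => p c x • σ c)]
        refine Finset.sum_congr rfl fun c _ => ?_
        congr 1
        simp only [hσdef, dif_pos c.2]
  have hG'comp : ∀ x, IsCompact (G' x) := by
    intro x
    rw [hG'eq x]
    refine IsCompact.image (isCompact_univ_pi fun c => hHcomp _ x) ?_
    exact continuous_finset_sum _ fun c _ => (continuous_apply c).const_smul _
  -- G' is small
  have hG'small : ∀ x, ∀ a ∈ G' x, ∀ b ∈ G' x, a - b ∈ V := by
    rintro x - ⟨σ, hσ, rfl⟩ - ⟨τ, hτ, rfl⟩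
    set d : X → E := fun c => σ c - τ c with hd
    have hdmem : ∀ c ∈ p.finsupport x, d c ∈ B₁ := by
      intro c hc
      obtain ⟨h1, -⟩ := hHsmall c x (σ c) (hσ c (hmem_s.1 hc))
      obtain ⟨-, h2⟩ := hHsmall c x (τ c) (hτ c (hmem_s.1 hc))
      have heq : d c = (σ c - z c) + -(τ c - z c) := by simp only [hd]; abel
      rw [heq]
      exact hW₂half _ h1 _ h2
    have hdspan : ∀ c ∈ p.finsupport x, d c ∈ vectorSpan ℝ (G x) := fun c hc =>
      vsub_mem_vectorSpan ℝ (hHG c x (hσ c (hmem_s.1 hc))) (hHG c x (hτ c (hmem_s.1 hc)))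
    have habd : (∑ᶠ c, p c x • σ c) - (∑ᶠ c, p c x • τ c) ∈
        convexHull ℝ (d '' ↑(p.finsupport x)) := by
      rw [hfinsumE x σ, hfinsumE x τ, ← Finset.sum_sub_distrib]
      have heq : ∀ c ∈ p.finsupport x, p c x • σ c - p c x • τ c = p c x • d c :=
        fun c _ => (smul_sub _ _ _).symm
      rw [Finset.sum_congr rfl heq, ← Finset.centerMass_eq_of_sum_1 _ _ (hsum1 x)]
      exact Finset.centerMass_mem_convexHull _ (fun c _ => p.nonneg c x)
        (by rw [hsum1 x]; exact zero_lt_one)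
        (fun c hc => mem_image_of_mem d (Finset.mem_coe.2 hc))
    have hrankd : Module.rank ℝ (vectorSpan ℝ (d '' ↑(p.finsupport x))) ≤ (N : Cardinal) := by
      have hle : vectorSpan ℝ (d '' ↑(p.finsupport x)) ≤ vectorSpan ℝ (G x) :=
        vectorSpan_le_submodule (by rintro - ⟨c, hc, rfl⟩; exact hdspan c (Finset.mem_coe.1 hc))
      exact le_trans (Submodule.rank_mono hle) (hdim x)
    obtain ⟨w, dd, hw0, hw1, hdd, hddsum⟩ := carat_fin hrankd habd
    rw [← hddsum]
    refine hW₁sum _ fun j => hB₁W₁ ?_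
    have hwj : ‖w j‖ ≤ 1 := by
      rw [Real.norm_eq_abs, abs_of_nonneg (hw0 j)]
      calc w j ≤ ∑ i, w i := Finset.single_le_sum (fun i _ => hw0 i) (Finset.mem_univ j)
        _ = 1 := hw1
    obtain ⟨c, hc, hceq⟩ := hdd j
    rw [← hceq]
    exact hB₁bal.smul_mem hwj (hdmem c (Finset.mem_coe.1 hc))
  -- G' is lower semicontinuous
  have hG'lsc : ∀ Uo : Set E, IsOpen Uo → IsOpen {x | (G' x ∩ Uo).Nonempty} := by
    intro Uo hUo
    rw [isOpen_iff_mem_nhds]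
    rintro x₀ ⟨v, ⟨σ, hσ, rfl⟩, hvU⟩
    set s₀ : Finset X := p.fintsupport x₀ with hs₀
    have hev : ∀ᶠ y in 𝓝 x₀, p.finsupport y ⊆ s₀ := p.eventually_finsupport_subset x₀
    -- extend σ to all of s₀
    set σ' : X → E := fun c => if h : p c x₀ ≠ 0 then σ c else
      (if h2 : (H c x₀).Nonempty then h2.choose else 0) with hσ'
    have hσ'mem : ∀ c ∈ s₀, σ' c ∈ H c x₀ := by
      intro c hc
      by_cases h : p c x₀ ≠ 0
      · simp only [hσ', dif_pos h]; exact hσ c h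
      · have hts : x₀ ∈ tsupport (p c) := (p.mem_fintsupport_iff x₀ c).1 hc
        have hne' : (H c x₀).Nonempty := hHne c x₀ (hsub c hts)
        simp only [hσ', dif_neg h, dif_pos hne']
        exact hne'.choose_spec
    have hsupsub : p.finsupport x₀ ⊆ s₀ := p.finsupport_subset_fintsupport x₀
    have hveq : (∑ᶠ c, p c x₀ • σ c) = ∑ c ∈ s₀, p c x₀ • σ' c := by
      rw [hfinsumE x₀ σ]
      rw [← Finset.sum_subset hsupsub (fun c _ hc => by
        have : p c x₀ = 0 := by_contra fun h => hc (hmem_s.2 h)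
        rw [this, zero_smul])]
      refine Finset.sum_congr rfl fun c hc => ?_
      have h : p c x₀ ≠ 0 := hmem_s.1 hc
      simp only [hσ', dif_pos h]
    -- continuity setup
    set Φ : X × (↥s₀ → E) → E := fun q => ∑ c : ↥s₀, p (↑c) q.1 • q.2 c with hΦ
    have hΦcont : Continuous Φ := continuous_finset_sum _ fun c _ =>
      (((p (↑c)).continuous).comp continuous_fst).smul ((continuous_apply c).comp continuous_snd)
    set g₀ : ↥s₀ → E := fun c => σ' ↑c with hg₀
    have hΦU : Φ (x₀, g₀) ∈ Uo := by
      have : Φ (x₀, g₀) = ∑ c ∈ s₀, p c x₀ • σ' c :=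
        Finset.sum_coe_sort s₀ (fun c => p c x₀ • σ' c)
      rw [this, ← hveq]
      exact hvU
    have hpre : Φ ⁻¹' Uo ∈ 𝓝 (x₀, g₀) := hΦcont.continuousAt.preimage_mem_nhds (hUo.mem_nhds hΦU)
    rw [nhds_prod_eq, Filter.mem_prod_iff] at hpre
    obtain ⟨A, hA, B, hB, hAB⟩ := hpre
    rw [nhds_pi, Filter.mem_pi] at hB
    obtain ⟨I, hIfin, tset, htset, htsub⟩ := hB
    have hopens : ∀ c : ↥s₀, ∃ Oc : Set E, IsOpen Oc ∧ g₀ c ∈ Oc ∧ Oc ⊆ tset c := by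
      intro c
      obtain ⟨Oc, hOc1, hOc2, hOc3⟩ := mem_nhds_iff.1 (htset c)
      exact ⟨Oc, hOc2, hOc3, hOc1⟩
    choose Oc hOcopen hOcmem hOcsub using hopens
    have hT : ({y | p.finsupport y ⊆ s₀} ∩ A ∩
        (⋂ c : ↥s₀, {x | (H (↑c) x ∩ Oc c).Nonempty})) ∈ 𝓝 x₀ := by
      refine inter_mem (inter_mem hev hA) ((Filter.iInter_mem).2 fun c => ?_)
      exact (hHlsc (↑c) _ (hOcopen c)).mem_nhds ⟨g₀ c, hσ'mem ↑c c.2, hOcmem c⟩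
    refine Filter.mem_of_superset hT ?_
    rintro x ⟨⟨hxev, hxA⟩, hxH⟩
    simp only [mem_iInter] at hxH
    have hxH' : ∀ c : ↥s₀, ∃ e, e ∈ H (↑c) x ∧ e ∈ Oc c := fun c => hxH c
    choose e he hOce using hxH'
    have hxactive : ∀ c : X, p c x ≠ 0 → c ∈ s₀ := fun c hc => hxev (hmem_s.2 hc)
    refine ⟨Φ (x, e), ?_, ?_⟩
    · set σ'' : X → E := fun c => if h : c ∈ s₀ then e ⟨c, h⟩ else 0 with hσ''
      refine ⟨σ'', fun c hc => ?_, ?_⟩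
      · have hc₀ : c ∈ s₀ := hxactive c hc
        simp only [hσ'', dif_pos hc₀]
        exact he ⟨c, hc₀⟩
      · calc Φ (x, e) = ∑ c : ↥s₀, p (↑c) x • e c := rfl
          _ = ∑ c ∈ s₀, p c x • σ'' c := by
              rw [← Finset.sum_coe_sort s₀ (fun c => p c x • σ'' c)]
              refine Finset.sum_congr rfl fun c _ => ?_
              congr 1
              simp only [hσ'', dif_pos c.2]
              
          _ = ∑ c ∈ p.finsupport x, p c x • σ'' c :=
              (Finset.sum_subset hxev (fun c _ hc => by
                have : p c x = 0 := by_contra fun h => hc (hmem_s.2 h)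
                rw [this, zero_smul])).symm
          _ = ∑ᶠ c, p c x • σ'' c := (hfinsumE x σ'').symm
    · refine hAB ⟨hxA, htsub ?_⟩
      intro c _
      exact hOcsub c (hOce c)
  exact ⟨G', hG'lsc, hG'ne, hG'comp, hG'conv, hG'sub, hG'small⟩

end Step


/-- The Dobrowolski–van Mill selection theorem: a LSC mapping from a metrizable
space into a convex subset of a metrizable topological vector space, with
nonempty compact convex values of uniformly bounded dimension, admits a
continuous singlevalued selection. -/
theorem dobrowolski_vanMill_selection
    {X E : Type*} [TopologicalSpace X] [TopologicalSpace.MetrizableSpace X]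
    [AddCommGroup E] [Module ℝ E] [TopologicalSpace E]
    [IsTopologicalAddGroup E] [ContinuousSMul ℝ E] [TopologicalSpace.MetrizableSpace E]
    (Y : Set E) (hYconv : Convex ℝ Y)
    (F : X → Set E)
    (hLSC : ∀ U : Set E, IsOpen U → IsOpen {x : X | (F x ∩ U).Nonempty})
    (hsub : ∀ x : X, F x ⊆ Y)
    (hne : ∀ x : X, (F x).Nonempty)
    (hcomp : ∀ x : X, IsCompact (F x))
    (hconv : ∀ x : X, Convex ℝ (F x))
    (N : ℕ) (hdim : ∀ x : X, Module.rank ℝ (vectorSpan ℝ (F x)) ≤ N) :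
    ∃ f : X → E, Continuous f ∧ ∀ x : X, f x ∈ F x := by
  classical
  letI : MetricSpace X := TopologicalSpace.metrizableSpaceMetric X
  letI : MetricSpace E := TopologicalSpace.metrizableSpaceMetric E
  obtain ⟨V, hVbasis⟩ := (𝓝 (0 : E)).exists_antitone_basis
  set P : (X → Set E) → Prop := fun G =>
    (∀ U : Set E, IsOpen U → IsOpen {x | (G x ∩ U).Nonempty}) ∧
    (∀ x, (G x).Nonempty) ∧ (∀ x, IsCompact (G x)) ∧ (∀ x, Convex ℝ (G x)) ∧
    (∀ x, Module.rank ℝ (vectorSpan ℝ (G x)) ≤ (N : Cardinal)) with hP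
  have hstep : ∀ (n : ℕ) (G : X → Set E), P G → ∃ G' : X → Set E, P G' ∧
      (∀ x, G' x ⊆ G x) ∧ (∀ x, ∀ a ∈ G' x, ∀ b ∈ G' x, a - b ∈ V n) := by
    intro n G hG
    obtain ⟨G', h1, h2, h3, h4, h5, h6⟩ :=
      dvm_step hG.1 hG.2.1 hG.2.2.1 hG.2.2.2.1 hG.2.2.2.2
        (hVbasis.toHasBasis.mem_of_mem (by trivial) : V n ∈ 𝓝 (0 : E))
    exact ⟨G', ⟨h1, h2, h3, h4, fun x =>
      le_trans (Submodule.rank_mono (vectorSpan_mono ℝ (h5 x))) (hG.2.2.2.2 x)⟩, h5, h6⟩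
  have hPF : P F := ⟨hLSC, hne, hcomp, hconv, hdim⟩
  set seq : ℕ → {G : X → Set E // P G} := fun n => Nat.rec ⟨F, hPF⟩
    (fun n Gp => ⟨Classical.choose (hstep n Gp.1 Gp.2),
      (Classical.choose_spec (hstep n Gp.1 Gp.2)).1⟩) n with hseq
  have hchain : ∀ n x, (seq (n + 1)).1 x ⊆ (seq n).1 x :=
    fun n => (Classical.choose_spec (hstep n (seq n).1 (seq n).2)).2.1
  have hsmall : ∀ n x, ∀ a ∈ (seq (n + 1)).1 x, ∀ b ∈ (seq (n + 1)).1 x, a - b ∈ V n :=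
    fun n => (Classical.choose_spec (hstep n (seq n).1 (seq n).2)).2.2
  have hne' : ∀ x, (⋂ n, (seq n).1 x).Nonempty := by
    intro x
    refine IsCompact.nonempty_iInter_of_sequence_nonempty_isCompact_isClosed _
      (fun n => hchain n x) (fun n => (seq n).2.2.1 x) ((seq 0).2.2.2.1 x) ?_
    exact fun n => ((seq n).2.2.2.1 x).isClosed
  choose f hf using hne'
  have hfmem : ∀ x n, f x ∈ (seq n).1 x := by
    intro x n
    have := hf x
    rw [mem_iInter] at this
    exact this n
  refine ⟨f, ?_, fun x => hfmem x 0⟩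
  rw [continuous_iff_continuousAt]
  intro x₀
  rw [ContinuousAt, Filter.tendsto_def]
  intro S hS
  rw [← nhds_translation_sub (f x₀)] at hS
  obtain ⟨V', hV', hV'sub⟩ := Filter.mem_comap.1 hS
  obtain ⟨W', hW', hW'half⟩ := exists_nhds_zero_half hV'
  obtain ⟨n, -, hVn⟩ := hVbasis.toHasBasis.mem_iff.1 hW'
  set O : Set E := (f x₀ + ·) '' interior W' with hO
  have hOopen : IsOpen O := (isOpenMap_add_left (f x₀)) _ isOpen_interior
  have hfO : f x₀ ∈ O := ⟨0, mem_interior_iff_mem_nhds.2 hW', add_zero _⟩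
  have hT : IsOpen {x | ((seq (n + 1)).1 x ∩ O).Nonempty} := (seq (n + 1)).2.1 O hOopen
  have hx₀T : x₀ ∈ {x | ((seq (n + 1)).1 x ∩ O).Nonempty} := ⟨f x₀, hfmem x₀ (n + 1), hfO⟩
  refine Filter.mem_of_superset (hT.mem_nhds hx₀T) ?_
  rintro x ⟨q, hq, w', hw', hq'⟩
  have h1 : f x - q ∈ V n := hsmall n x _ (hfmem x (n + 1)) _ hq
  have h2 : f x - f x₀ = (f x - q) + w' := by rw [← hq']; beta_reduce; abel
  refine hV'sub ?_
  show f x - f x₀ ∈ V'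
  rw [h2]
  exact hW'half _ (hVn h1) _ (interior_subset hw')
end

section
/- Arvanitakis' theorem: let X be a paracompact Hausdorff space which is a k-space (compactly generated), (Y,d) a complete metric space, and E a Hausdorff locally convex real topological vector space in which the closure of the convex hull of every compact set is compact. Let F be a lower semicontinuous multivalued mapping from X to Y with nonempty closed values. Then there exists a continuous linear operator S : C(Y,E) → C(X,E), where both spaces of continuous maps carry the topology of uniform convergence on compact subsets (the compact-open topology), such that S(f)(x) ∈ closure(convexHull(f(F(x)))) for every f ∈ C(Y,E) and every x ∈ X. -/
open Function Set Filter Topology Pointwise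

set_option linter.unusedSectionVars false

section EHelpers

variable {E : Type*} [AddCommGroup E] [Module ℝ E] [TopologicalSpace E]
    [IsTopologicalAddGroup E] [ContinuousSMul ℝ E] [T2Space E]

/-- closure of a set is contained in s + V for any nbhd V of 0 -/
theorem arv_closure_subset_add {s : Set E} {V : Set E} (hV : V ∈ 𝓝 (0:E)) :
    closure s ⊆ s + V := by
  intro z hz
  have h1 : {w : E | z - w ∈ V} ∈ 𝓝 z := by
    have hc : Continuous fun w : E => z - w := continuous_const.sub continuous_id
    have := hc.continuousAt (x := z)
    rw [ContinuousAt] at this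
    exact this (by simpa using hV)
  rcases mem_closure_iff_nhds.1 hz _ h1 with ⟨a, ha, has⟩
  exact ⟨a, has, z - a, ha, by show a + (z - a) = z; abel⟩

/-- uniform continuity of a continuous map on a compact subset of a metric space,
with values in a topological add group -/
theorem arv_unifCont {Y : Type*} [MetricSpace Y] {f : Y → E} (hf : Continuous f)
    {K : Set Y} (hK : IsCompact K) {V : Set E} (hV : V ∈ 𝓝 (0:E)) :
    ∃ δ > (0:ℝ), ∀ u ∈ K, ∀ v ∈ K, dist u v < δ → f u - f v ∈ V := by
  rcases K.eq_empty_or_nonempty with rfl | hKne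
  · exact ⟨1, one_pos, by simp⟩
  -- W with W - W ⊆ V
  obtain ⟨V₁, hV₁, hadd⟩ := exists_nhds_zero_half hV
  set W : Set E := V₁ ∩ (fun a => -a) ⁻¹' V₁ with hWdef
  have hW : W ∈ 𝓝 (0:E) := by
    refine Filter.inter_mem hV₁ ?_
    have : Continuous fun a : E => -a := continuous_neg
    have := this.continuousAt (x := (0:E))
    rw [ContinuousAt] at this
    exact this (by simpa using hV₁)
  have hWV : ∀ a ∈ W, ∀ b ∈ W, a - b ∈ V := by
    intro a ha b hb
    have : a + -b ∈ V := hadd a ha.1 (-b) hb.2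
    simpa [sub_eq_add_neg] using this
  -- for each u a delta
  have hdel : ∀ u : Y, ∃ δ > (0:ℝ), ∀ v, dist v u < δ → f v - f u ∈ W := by
    intro u
    have hc : Continuous fun v => f v - f u := hf.sub continuous_const
    have h2 : {v | f v - f u ∈ W} ∈ 𝓝 u := by
      have := hc.continuousAt (x := u)
      rw [ContinuousAt] at this
      exact this (by simpa using hW)
    rcases Metric.mem_nhds_iff.1 h2 with ⟨δ, hδ, hball⟩
    exact ⟨δ, hδ, fun v hv => hball (by simpa [Metric.mem_ball] using hv)⟩
  choose δ hδpos hδ using hdel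
  -- finite subcover
  obtain ⟨t, htK, hcov⟩ := hK.elim_nhds_subcover (fun u => Metric.ball u (δ u / 2))
    (fun u _ => Metric.ball_mem_nhds u (half_pos (hδpos u)))
  rcases t.eq_empty_or_nonempty with rfl | htne
  · obtain ⟨u, hu⟩ := hKne
    exact absurd (hcov hu) (by simp)
  set δ₀ := t.inf' htne (fun u => δ u / 2) with hδ₀
  have hδ₀pos : 0 < δ₀ := by
    rw [hδ₀, Finset.lt_inf'_iff]
    exact fun u _ => half_pos (hδpos u)
  refine ⟨δ₀, hδ₀pos, ?_⟩
  intro u hu v hv huv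
  rcases mem_iUnion₂.1 (hcov hu) with ⟨u₀, hu₀t, hu₀⟩
  have hd2 : dist u u₀ < δ u₀ / 2 := by simpa [Metric.mem_ball] using hu₀
  have h1 : f u - f u₀ ∈ W := hδ u₀ u (by linarith [hδpos u₀])
  have hδ₀le : δ₀ ≤ δ u₀ / 2 := Finset.inf'_le _ hu₀t
  have h2 : f v - f u₀ ∈ W := by
    apply hδ u₀ v
    calc dist v u₀ ≤ dist v u + dist u u₀ := dist_triangle _ _ _
      _ < δ₀ + δ u₀ / 2 := by
          have : dist v u < δ₀ := by rwa [dist_comm]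
          linarith
      _ ≤ δ u₀ := by linarith
  have := hWV _ h1 _ h2
  simpa using this

/-- a "Cauchy" sequence inside a compact subset of `E` converges -/
theorem arv_tendsto_of_cauchy {C : Set E} (hC : IsCompact C) (s : ℕ → E)
    (hs : ∀ n, s n ∈ C)
    (hcau : ∀ V ∈ 𝓝 (0:E), ∃ N, ∀ m ≥ N, ∀ n ≥ N, s m - s n ∈ V) :
    ∃ z, Tendsto s atTop (𝓝 z) := by
  obtain ⟨z, _, hz⟩ := hC.exists_mapClusterPt (f := atTop) (u := s)
    (le_principal_iff.2 (mem_map.2 (by filter_upwards with n using hs n)))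
  refine ⟨z, ?_⟩
  rw [← tendsto_sub_nhds_zero_iff]
  intro U hU
  rw [mem_map]
  obtain ⟨V, hV, hadd⟩ := exists_nhds_zero_half hU
  obtain ⟨N, hN⟩ := hcau V hV
  have hO : {w : E | w - z ∈ V} ∈ 𝓝 z := by
    have hc : Continuous fun w : E => w - z := continuous_id.sub continuous_const
    have := hc.continuousAt (x := z)
    rw [ContinuousAt] at this
    exact this (by simpa using hV)
  have hfreq : ∃ᶠ n in atTop, s n ∈ {w | w - z ∈ V} :=
    mapClusterPt_iff_frequently.1 hz _ hO
  obtain ⟨m, hmN, hm⟩ := (frequently_atTop.1 hfreq) N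
  refine mem_of_superset (mem_atTop N) ?_
  intro n hn
  have h1 : s n - s m ∈ V := hN n hn m hmN
  have : (s n - s m) + (s m - z) ∈ U := hadd _ h1 _ hm
  simpa using this

end EHelpers

section YHelpers

variable {Y : Type*} [MetricSpace Y] [CompleteSpace Y]

/-- a chained union of finite sets is totally bounded, hence has compact closure -/
theorem arv_isCompact_closure_chain (G : ℕ → Set Y) (hfin : ∀ n, (G n).Finite)
    (hchain : ∀ n, ∀ z ∈ G (n+1), ∃ w ∈ G n, dist z w ≤ 2 * (1/2:ℝ)^n) :
    IsCompact (closure (⋃ n, G n)) := by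
  have key : ∀ N k, ∀ z ∈ G (N + k), ∃ w ∈ G N, dist z w ≤ 4 * ((1/2:ℝ)^N - (1/2:ℝ)^(N+k)) := by
    intro N k
    induction k with
    | zero => intro z hz; exact ⟨z, hz, by simp⟩
    | succ k ih =>
      intro z hz
      obtain ⟨w', hw', hd'⟩ := hchain (N + k) z hz
      obtain ⟨w, hw, hd⟩ := ih w' hw'
      refine ⟨w, hw, ?_⟩
      calc dist z w ≤ dist z w' + dist w' w := dist_triangle _ _ _
        _ ≤ 2 * (1/2:ℝ)^(N+k) + 4 * ((1/2:ℝ)^N - (1/2:ℝ)^(N+k)) := by linarith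
        _ ≤ 4 * ((1/2:ℝ)^N - (1/2:ℝ)^(N+(k+1))) := by
            have hp : ((1/2:ℝ))^(N+(k+1)) = (1/2)^(N+k) * (1/2) := pow_succ _ _
            rw [hp]; linarith
  have htb : TotallyBounded (⋃ n, G n) := by
    rw [Metric.totallyBounded_iff]
    intro ε hε
    obtain ⟨N, hN⟩ := exists_pow_lt_of_lt_one (by linarith : (0:ℝ) < ε/5) (by norm_num : (1/2:ℝ) < 1)
    refine ⟨⋃ n ∈ Finset.range (N+1), G n, ?_, ?_⟩
    · apply Set.Finite.biUnion (Finset.finite_toSet _) (fun n _ => hfin n)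
    · intro z hz
      rcases mem_iUnion.1 hz with ⟨m, hm⟩
      rcases le_or_gt m N with hmN | hmN
      · refine mem_iUnion₂.2 ⟨z, ?_, Metric.mem_ball_self hε⟩
        exact mem_iUnion₂.2 ⟨m, Finset.mem_range.2 (by omega), hm⟩
      · obtain ⟨k, rfl⟩ : ∃ k, m = N + k := ⟨m - N, by omega⟩
        obtain ⟨w, hw, hd⟩ := key N k z hm
        refine mem_iUnion₂.2 ⟨w, mem_iUnion₂.2 ⟨N, Finset.mem_range.2 (by omega), hw⟩, ?_⟩
        rw [Metric.mem_ball]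
        have h4 : 4 * ((1/2:ℝ)^N - (1/2:ℝ)^(N+k)) ≤ 4 * (1/2:ℝ)^N := by
          have : (0:ℝ) ≤ (1/2:ℝ)^(N+k) := by positivity
          linarith
        have : (1/2:ℝ)^N < ε/5 := hN
        calc dist z w ≤ 4 * (1/2:ℝ)^N := le_trans hd h4
          _ < ε := by linarith
  exact TotallyBounded.isCompact_of_isClosed (totallyBounded_closure.2 htb) isClosed_closure

end YHelpers

open Function Set Filter Topology Pointwise

section Tower

variable {X Y : Type*} [TopologicalSpace X] [ParacompactSpace X] [T2Space X]
    [MetricSpace Y]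
variable (F : X → Set Y)

/-- base partition of unity -/
theorem arv_base
    (hLSC : ∀ U : Set Y, IsOpen U → IsOpen {x : X | (F x ∩ U).Nonempty})
    (hne : ∀ x : X, (F x).Nonempty) :
    ∃ P : PartitionOfUnity Y X univ,
      ∀ a, tsupport (P a) ⊆ {x | (F x ∩ Metric.ball a ((1/2:ℝ)^0)).Nonempty} := by
  have hop : ∀ y : Y, IsOpen {x : X | (F x ∩ Metric.ball y ((1/2:ℝ)^0)).Nonempty} :=
    fun y => hLSC _ Metric.isOpen_ball
  have hcov : (univ : Set X) ⊆ ⋃ y : Y, {x : X | (F x ∩ Metric.ball y ((1/2:ℝ)^0)).Nonempty} := by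
    intro x _
    obtain ⟨z, hz⟩ := hne x
    exact mem_iUnion.2 ⟨z, ⟨z, hz, by simp⟩⟩
  obtain ⟨P, hP⟩ := PartitionOfUnity.exists_isSubordinate isClosed_univ _ hop hcov
  exact ⟨P, hP⟩

/-- refinement step -/
theorem arv_step
    (hLSC : ∀ U : Set Y, IsOpen U → IsOpen {x : X | (F x ∩ U).Nonempty})
    {ι : Type*} (n : ℕ) (pt : ι → Y) (P : PartitionOfUnity ι X univ)
    (hP : ∀ a, tsupport (P a) ⊆ {x | (F x ∩ Metric.ball (pt a) ((1/2:ℝ)^n)).Nonempty}) :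
    ∃ P' : PartitionOfUnity (ι × Y) X univ,
      (∀ b, tsupport (P' b) ⊆ {x | (F x ∩ Metric.ball b.2 ((1/2:ℝ)^(n+1))).Nonempty}) ∧
      (∀ b x, P' b x ≠ 0 → P b.1 x ≠ 0 ∧ dist b.2 (pt b.1) < (1/2:ℝ)^n) ∧
      (∀ a x, ∑ᶠ y : Y, P' (a, y) x = P a x) := by
  classical
  -- the refined cover
  set W : ι → Y → Set X := fun a y =>
    {x | dist y (pt a) < (1/2:ℝ)^n ∧ (F x ∩ Metric.ball y ((1/2:ℝ)^(n+1))).Nonempty} with hW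
  have hWop : ∀ a y, IsOpen (W a y) := by
    intro a y
    by_cases h : dist y (pt a) < (1/2:ℝ)^n
    · have : W a y = {x | (F x ∩ Metric.ball y ((1/2:ℝ)^(n+1))).Nonempty} :=
        Set.ext fun x => and_iff_right h
      rw [this]; exact hLSC _ Metric.isOpen_ball
    · have : W a y = ∅ := Set.eq_empty_iff_forall_notMem.2 fun x hx => h hx.1
      rw [this]; exact isOpen_empty
  have hWcov : ∀ a, tsupport (P a) ⊆ ⋃ y : Y, W a y := by
    intro a x hx
    obtain ⟨z, hzF, hzd⟩ := hP a hx
    refine mem_iUnion.2 ⟨z, ?_⟩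
    exact ⟨by simpa [Metric.mem_ball] using hzd, ⟨z, hzF, Metric.mem_ball_self (by positivity)⟩⟩
  -- subordinate partitions on the supports
  have hex : ∀ a : ι, ∃ σ : PartitionOfUnity Y X (tsupport (P a)), σ.IsSubordinate (W a) :=
    fun a => PartitionOfUnity.exists_isSubordinate (isClosed_tsupport _) _ (hWop a) (hWcov a)
  choose σ hσ using hex
  -- the new family of functions
  set g : ι × Y → C(X, ℝ) := fun b => P b.1 * σ b.1 b.2 with hg
  have hgsupp : ∀ b : ι × Y, support (g b : X → ℝ) ⊆ support (P b.1 : X → ℝ) ∩ support (σ b.1 b.2 : X → ℝ) := by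
    intro b x hx
    simp only [hg, ContinuousMap.mul_apply, mem_support] at hx
    exact ⟨fun h => hx (by simp [h]), fun h => hx (by simp [h])⟩
  -- local finiteness
  have hLF : LocallyFinite fun b : ι × Y => support (g b : X → ℝ) := by
    intro x
    obtain ⟨N₁, hN₁, hfin₁⟩ := P.locallyFinite x
    have hex2 : ∀ a : ι, ∃ Na ∈ 𝓝 x, {y : Y | (support ((σ a) y : X → ℝ) ∩ Na).Nonempty}.Finite :=
      fun a => (σ a).locallyFinite x
    choose Na hNa hNafin using hex2
    set s₁ := {a : ι | (support (P a : X → ℝ) ∩ N₁).Nonempty}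
    refine ⟨N₁ ∩ ⋂ a ∈ hfin₁.toFinset, Na a, inter_mem hN₁ ?_, ?_⟩
    · exact (biInter_mem (Finset.finite_toSet _)).2 fun a _ => hNa a
    · apply Set.Finite.subset
        (Set.Finite.biUnion hfin₁ (fun a _ => (hNafin a).image (Prod.mk a)))
      rintro ⟨a, y⟩ ⟨x', hx', hx'N⟩
      have hxP : x' ∈ support (P a : X → ℝ) := (hgsupp (a, y) hx').1
      have hxσ : x' ∈ support ((σ a) y : X → ℝ) := (hgsupp (a, y) hx').2
      have hN : x' ∈ N₁ := hx'N.1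
      have haS : a ∈ s₁ := ⟨x', hxP, hN⟩
      refine mem_iUnion₂.2 ⟨a, haS, ?_⟩
      refine ⟨y, ⟨x', hxσ, ?_⟩, rfl⟩
      have := hx'N.2
      rw [mem_iInter₂] at this
      exact this a (by simpa using haS)
  -- pointwise finiteness helpers
  have hptfin : ∀ x, {b : ι × Y | (g b) x ≠ 0}.Finite := by
    intro x
    have := hLF.point_finite x
    simpa [mem_support] using this
  have hσfin : ∀ (a : ι) (x : X), (support fun y => ((σ a) y : X → ℝ) x).Finite := by
    intro a x
    have := (σ a).locallyFinite.point_finite x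
    exact this
  -- key pointwise computation
  have claim1 : ∀ (a : ι) (x : X), ∑ᶠ y : Y, (g (a, y)) x = P a x := by
    intro a x
    by_cases h : P a x = 0
    · have : ∀ y : Y, (g (a, y)) x = 0 := by intro y; simp [hg, h]
      simp only [this, finsum_zero, h]
    · have hmem : x ∈ tsupport (P a) := subset_closure (by simpa [mem_support] using h)
      have hsum1 : ∑ᶠ y : Y, ((σ a) y) x = 1 := (σ a).sum_eq_one hmem
      have : ∑ᶠ y : Y, (g (a, y)) x = P a x * ∑ᶠ y : Y, ((σ a) y) x := by
        rw [mul_finsum' _ _ (hσfin a x)]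
        simp [hg]
      rw [this, hsum1, mul_one]
  have hsum_all : ∀ x : X, ∑ᶠ b : ι × Y, (g b) x = ∑ᶠ a : ι, P a x := by
    intro x
    rw [finsum_curry _ (hptfin x)]
    exact finsum_congr fun a => claim1 a x
  -- build P'
  refine ⟨⟨g, hLF, fun b x => mul_nonneg (P.nonneg b.1 x) ((σ b.1).nonneg b.2 x), ?_, ?_⟩, ?_, ?_, ?_⟩
  · intro x _
    rw [hsum_all x]
    exact P.sum_eq_one (mem_univ x)
  · intro x
    rw [hsum_all x]
    exact P.sum_le_one x
  · -- support property
    rintro ⟨a, y⟩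
    have h1 : tsupport (g (a, y) : X → ℝ) ⊆ tsupport ((σ a) y : X → ℝ) :=
      closure_mono (fun x hx => (hgsupp (a, y) hx).2)
    refine h1.trans ((hσ a y).trans ?_)
    intro x hx
    exact hx.2
  · -- distance property
    rintro ⟨a, y⟩ x hx
    have hxg : x ∈ support (g (a, y) : X → ℝ) := by exact hx
    constructor
    · have := (hgsupp (a, y) hxg).1
      simpa [mem_support] using this
    · have hxσ : x ∈ tsupport ((σ a) y : X → ℝ) := subset_closure (hgsupp (a, y) hxg).2
      exact ((hσ a y) hxσ).1
  · exact fun a x => claim1 a x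

end Tower

section Idx

universe v

/-- index types of the tower -/
def ArvIdx (Y : Type v) : ℕ → Type v := fun n => Nat.rec Y (fun _ T => T × Y) n

/-- the point associated to an index -/
def ArvPt {Y : Type v} : ∀ n : ℕ, ArvIdx Y n → Y
  | 0, a => a
  | (_+1), b => b.2

/-- `k`-fold ancestor -/
def ArvDown {Y : Type v} : ∀ (n k : ℕ), ArvIdx Y (n + k) → ArvIdx Y n
  | _, 0, b => b
  | n, (k+1), b => ArvDown n k b.1

end Idx

section TowerRec

variable {X Y : Type*} [TopologicalSpace X] [ParacompactSpace X] [T2Space X]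
    [MetricSpace Y]
variable (F : X → Set Y)
    (hLSC : ∀ U : Set Y, IsOpen U → IsOpen {x : X | (F x ∩ U).Nonempty})
    (hne : ∀ x : X, (F x).Nonempty)

/-- predicate packaging the level invariant -/
def ArvGood (n : ℕ) (P : PartitionOfUnity (ArvIdx Y n) X univ) : Prop :=
  ∀ b, tsupport (P b) ⊆ {x | (F x ∩ Metric.ball (ArvPt n b) ((1/2:ℝ)^n)).Nonempty}

/-- the tower of partitions of unity -/
noncomputable def arvTower :
    ∀ n : ℕ, {P : PartitionOfUnity (ArvIdx Y n) X univ // ArvGood F n P} := fun n =>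
  Nat.rec
    ⟨(arv_base F hLSC hne).choose, (arv_base F hLSC hne).choose_spec⟩
    (fun n Pp =>
      ⟨(arv_step F hLSC n (ArvPt n) Pp.1 Pp.2).choose,
        (arv_step F hLSC n (ArvPt n) Pp.1 Pp.2).choose_spec.1⟩)
    n

/-- the weights -/
noncomputable def arvW (n : ℕ) (b : ArvIdx Y n) : X → ℝ :=
  ((arvTower F hLSC hne n).1 b : X → ℝ)

variable {F}

namespace ArvAux

variable (hLSC' : ∀ U : Set Y, IsOpen U → IsOpen {x : X | (F x ∩ U).Nonempty})

-- abbreviations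
local notation "w" => arvW F hLSC hne

theorem w_nonneg (n : ℕ) (b : ArvIdx Y n) (x : X) : 0 ≤ w n b x :=
  (arvTower F hLSC hne n).1.nonneg b x

theorem w_cont (n : ℕ) (b : ArvIdx Y n) : Continuous (w n b) :=
  ((arvTower F hLSC hne n).1 b).continuous

theorem w_lf (n : ℕ) : LocallyFinite fun b : ArvIdx Y n => support (w n b) :=
  (arvTower F hLSC hne n).1.locallyFinite

theorem w_sum (n : ℕ) (x : X) : ∑ᶠ b : ArvIdx Y n, w n b x = 1 :=
  (arvTower F hLSC hne n).1.sum_eq_one (mem_univ x)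

theorem w_supp (n : ℕ) (b : ArvIdx Y n) (x : X) (hx : w n b x ≠ 0) :
    (F x ∩ Metric.ball (ArvPt n b) ((1/2:ℝ)^n)).Nonempty :=
  (arvTower F hLSC hne n).2 b (subset_closure (by exact hx))

theorem tower_succ (n : ℕ) :
    (arvTower F hLSC hne (n+1)).1 =
      (arv_step F hLSC n (ArvPt n) (arvTower F hLSC hne n).1
        (arvTower F hLSC hne n).2).choose := rfl

theorem w_par (n : ℕ) (b : ArvIdx Y (n+1)) (x : X) (hx : w (n+1) b x ≠ 0) :
    w n b.1 x ≠ 0 ∧ dist (ArvPt (n+1) b) (ArvPt n b.1) < (1/2:ℝ)^n := by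
  have h := (arv_step F hLSC n (ArvPt n) (arvTower F hLSC hne n).1
        (arvTower F hLSC hne n).2).choose_spec.2.1 b x
  exact h (by exact hx)

theorem w_refine (n : ℕ) (a : ArvIdx Y n) (x : X) :
    ∑ᶠ y : Y, w (n+1) (a, y) x = w n a x := by
  have h := (arv_step F hLSC n (ArvPt n) (arvTower F hLSC hne n).1
        (arvTower F hLSC hne n).2).choose_spec.2.2 a x
  exact h

theorem w_ptfin (n : ℕ) (x : X) : {b : ArvIdx Y n | w n b x ≠ 0}.Finite := by
  have := (w_lf (F := F) hLSC hne n).point_finite x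
  simpa [mem_support] using this

theorem w_down_ne (n k : ℕ) (b : ArvIdx Y (n + k)) (x : X) (hx : w (n+k) b x ≠ 0) :
    w n (ArvDown n k b) x ≠ 0 := by
  induction k with
  | zero => exact hx
  | succ k ih => exact ih b.1 ((w_par hLSC hne (n+k) b x hx).1)

theorem w_down_dist (n k : ℕ) (b : ArvIdx Y (n + k)) (x : X) (hx : w (n+k) b x ≠ 0) :
    dist (ArvPt (n+k) b) (ArvPt n (ArvDown n k b)) ≤ 2 * ((1/2:ℝ)^n - (1/2:ℝ)^(n+k)) := by
  induction k with
  | zero => simp [ArvDown]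
  | succ k ih =>
    have h1 := w_par hLSC hne (n+k) b x hx
    have h2 := ih b.1 h1.1
    have hp : ((1/2:ℝ))^(n+(k+1)) = (1/2)^(n+k) * (1/2) := pow_succ _ _
    calc dist (ArvPt (n+(k+1)) b) (ArvPt n (ArvDown n (k+1) b))
        ≤ dist (ArvPt (n+(k+1)) b) (ArvPt (n+k) b.1)
            + dist (ArvPt (n+k) b.1) (ArvPt n (ArvDown n k b.1)) := dist_triangle _ _ _
      _ ≤ (1/2:ℝ)^(n+k) + 2 * ((1/2:ℝ)^n - (1/2:ℝ)^(n+k)) := by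
          have := h1.2
          exact add_le_add (le_of_lt this) h2
      _ ≤ 2 * ((1/2:ℝ)^n - (1/2:ℝ)^(n+(k+1))) := by rw [hp]; linarith

section Emod

variable {E : Type*} [AddCommGroup E] [Module ℝ E]

theorem w_step_sum (m : ℕ) (x : X) (g : ArvIdx Y m → E) :
    ∑ᶠ b : ArvIdx Y (m+1), w (m+1) b x • g b.1 = ∑ᶠ a : ArvIdx Y m, w m a x • g a := by
  have hfin : (support fun b : ArvIdx Y (m+1) => w (m+1) b x • g b.1).Finite := by
    apply (w_ptfin hLSC hne (m+1) x).subset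
    intro b hb
    simp only [mem_support] at hb
    intro h0
    exact hb (by rw [h0, zero_smul])
  have hcur : ∑ᶠ b : ArvIdx Y (m+1), w (m+1) b x • g b.1
      = ∑ᶠ (a : ArvIdx Y m) (y : Y), w (m+1) (a, y) x • g (a, y).1 := finsum_curry _ hfin
  refine hcur.trans ?_
  apply finsum_congr
  intro a
  have hfin2 : (support fun y : Y => w (m+1) (a, y) x).Finite := by
    have : (fun y : Y => (a, y)) '' (support fun y : Y => w (m+1) (a, y) x)
        ⊆ {b : ArvIdx Y (m+1) | w (m+1) b x ≠ 0} := by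
      rintro _ ⟨y, hy, rfl⟩
      exact hy
    have hfin3 := (w_ptfin hLSC hne (m+1) x).subset this
    exact Set.Finite.of_finite_image hfin3 (fun y _ y' _ h => by
      simpa using congrArg Prod.snd h)
  calc ∑ᶠ y : Y, w (m+1) (a, y) x • g a
      = (∑ᶠ y : Y, w (m+1) (a, y) x) • g a := (finsum_smul' hfin2 _).symm
    _ = w m a x • g a := by rw [w_refine hLSC hne m a x]

theorem w_down_sum (n k : ℕ) (x : X) (g : ArvIdx Y n → E) :
    ∑ᶠ b : ArvIdx Y (n+k), w (n+k) b x • g (ArvDown n k b)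
      = ∑ᶠ a : ArvIdx Y n, w n a x • g a := by
  induction k with
  | zero => rfl
  | succ k ih =>
    have := w_step_sum hLSC hne (n+k) x (fun a => g (ArvDown n k a))
    exact this.trans ih

theorem finsum_smul_mem (n : ℕ) (x : X) (g : ArvIdx Y n → E) (D : Set E)
    (hD : ∀ b, w n b x ≠ 0 → g b ∈ D) :
    (∑ᶠ b : ArvIdx Y n, w n b x • g b) ∈ convexHull ℝ D := by
  classical
  set t := (w_ptfin (F := F) hLSC hne n x).toFinset with ht
  have hsub : support (fun b : ArvIdx Y n => w n b x • g b) ⊆ (t : Set (ArvIdx Y n)) := by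
    intro b hb
    simp only [mem_support] at hb
    have : w n b x ≠ 0 := fun h0 => hb (by rw [h0, zero_smul])
    simp [ht, Set.Finite.mem_toFinset, this]
  have hsub2 : support (fun b : ArvIdx Y n => w n b x) ⊆ (t : Set (ArvIdx Y n)) := by
    intro b hb
    simp only [mem_support] at hb
    simp [ht, Set.Finite.mem_toFinset, hb]
  rw [finsum_eq_sum_of_support_subset _ hsub]
  have hw1 : ∑ b ∈ t, w n b x = 1 := by
    rw [← finsum_eq_sum_of_support_subset _ hsub2]
    exact w_sum hLSC hne n x
  have hmem : ∀ b ∈ t, w n b x ≠ 0 := by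
    intro b hb
    simpa [ht, Set.Finite.mem_toFinset] using hb
  have hmm := t.centerMass_mem_convexHull
    (fun b _ => w_nonneg hLSC hne n b x) (by rw [hw1]; norm_num)
    (fun b hb => hD b (hmem b hb))
  rwa [Finset.centerMass_eq_of_sum_1 _ _ hw1] at hmm

end Emod

end ArvAux

end TowerRec

section Sets

variable {X Y : Type*} [TopologicalSpace X] [ParacompactSpace X] [T2Space X]
    [MetricSpace Y] [CompleteSpace Y]
variable {F : X → Set Y}
    (hLSC : ∀ U : Set Y, IsOpen U → IsOpen {x : X | (F x ∩ U).Nonempty})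
    (hne : ∀ x : X, (F x).Nonempty)

namespace ArvAux

local notation "w" => arvW F hLSC hne

open Classical in
/-- a choice of a point of `F x` close to the point of an index -/
noncomputable def arvZ (n : ℕ) (b : ArvIdx Y n) (x : X) : Y :=
  if h : (F x ∩ Metric.ball (ArvPt n b) ((1/2:ℝ)^n)).Nonempty then h.some else (hne x).some

theorem arvZ_memF (n : ℕ) (b : ArvIdx Y n) (x : X) : arvZ hne n b x ∈ F x := by
  rw [arvZ]
  split
  · next h => exact h.some_mem.1
  · exact (hne x).some_mem

theorem arvZ_dist (n : ℕ) (b : ArvIdx Y n) (x : X) (hx : w n b x ≠ 0) :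
    dist (ArvPt n b) (arvZ hne n b x) < (1/2:ℝ)^n := by
  have h := w_supp hLSC hne n b x hx
  rw [arvZ, dif_pos h]
  have := h.some_mem.2
  rw [Metric.mem_ball] at this
  rwa [dist_comm]

/-- points used over a set `L` at level `n` -/
def arvTset (L : Set X) (n : ℕ) : Set Y :=
  ArvPt n '' {b : ArvIdx Y n | ∃ x ∈ L, w n b x ≠ 0}

/-- points used at `x` at level `n`, together with chosen nearby points of `F x` -/
def arvG (x : X) (n : ℕ) : Set Y :=
  arvTset hLSC hne {x} n ∪ (fun b => arvZ hne n b x) '' {b : ArvIdx Y n | w n b x ≠ 0}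

/-- the compact set associated to a point -/
def arvQ (x : X) : Set Y := closure (⋃ n, arvG hLSC hne x n)

/-- the compact set associated to a compact set of `X` -/
def arvQL (L : Set X) : Set Y := closure (⋃ n, arvTset hLSC hne L n)

theorem arvTset_finite {L : Set X} (hL : IsCompact L) (n : ℕ) :
    (arvTset hLSC hne L n).Finite := by
  apply Set.Finite.image
  have h1 : {b : ArvIdx Y n | ∃ x ∈ L, w n b x ≠ 0}
      = {b : ArvIdx Y n | (support (w n b) ∩ L).Nonempty} := by
    ext b
    constructor
    · rintro ⟨x, hx, hw⟩; exact ⟨x, mem_support.2 hw, hx⟩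
    · rintro ⟨x, hw, hx⟩; exact ⟨x, hx, mem_support.1 hw⟩
  rw [h1]
  exact (w_lf hLSC hne n).finite_nonempty_inter_compact hL

theorem arvG_finite (x : X) (n : ℕ) : (arvG hLSC hne x n).Finite := by
  apply Set.Finite.union
  · exact arvTset_finite hLSC hne isCompact_singleton n
  · exact ((w_ptfin hLSC hne n x).image _)

theorem pow_le_two_pow (n : ℕ) : ((1:ℝ)/2)^n ≤ 2 * (1/2:ℝ)^n := by
  have : (0:ℝ) ≤ (1/2:ℝ)^n := by positivity
  linarith

theorem arvQL_isCompact {L : Set X} (hL : IsCompact L) : IsCompact (arvQL hLSC hne L) := by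
  apply arv_isCompact_closure_chain
  · exact fun n => arvTset_finite hLSC hne hL n
  · rintro n z ⟨b, ⟨x, hxL, hw⟩, rfl⟩
    have h := w_par hLSC hne n b x hw
    refine ⟨ArvPt n b.1, ⟨b.1, ⟨x, hxL, h.1⟩, rfl⟩, ?_⟩
    exact le_trans (le_of_lt h.2) (pow_le_two_pow n)

theorem arvQ_isCompact (x : X) : IsCompact (arvQ hLSC hne x) := by
  apply arv_isCompact_closure_chain
  · exact fun n => arvG_finite hLSC hne x n
  · rintro n z (⟨b, ⟨x', hx', hw⟩, rfl⟩ | ⟨b, hw, rfl⟩)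
    · obtain rfl : x = x' := Eq.symm hx'
      have h := w_par hLSC hne n b x hw
      refine ⟨ArvPt n b.1, Or.inl ⟨b.1, ⟨x, rfl, h.1⟩, rfl⟩, ?_⟩
      exact le_trans (le_of_lt h.2) (pow_le_two_pow n)
    · have h := w_par hLSC hne n b x hw
      refine ⟨ArvPt n b.1, Or.inl ⟨b.1, ⟨x, rfl, h.1⟩, rfl⟩, ?_⟩
      have hz := arvZ_dist hLSC hne (n+1) b x hw
      calc dist (arvZ hne (n+1) b x) (ArvPt n b.1)
          ≤ dist (arvZ hne (n+1) b x) (ArvPt (n+1) b) + dist (ArvPt (n+1) b) (ArvPt n b.1) :=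
            dist_triangle _ _ _
        _ ≤ (1/2:ℝ)^(n+1) + (1/2:ℝ)^n := by
            rw [dist_comm]
            exact add_le_add (le_of_lt hz) (le_of_lt h.2)
        _ ≤ 2 * (1/2:ℝ)^n := by
            have hp : ((1/2:ℝ))^(n+1) = (1/2)^n * (1/2) := pow_succ _ _
            rw [hp]
            have hnn : (0:ℝ) ≤ (1/2:ℝ)^n := by positivity
            linarith

theorem pt_mem_arvQ (n : ℕ) (b : ArvIdx Y n) (x : X) (hx : w n b x ≠ 0) :
    ArvPt n b ∈ arvQ hLSC hne x :=
  subset_closure (mem_iUnion.2 ⟨n, Or.inl ⟨b, ⟨x, rfl, hx⟩, rfl⟩⟩)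

theorem z_mem_arvQ (n : ℕ) (b : ArvIdx Y n) (x : X) (hx : w n b x ≠ 0) :
    arvZ hne n b x ∈ arvQ hLSC hne x :=
  subset_closure (mem_iUnion.2 ⟨n, Or.inr ⟨b, hx, rfl⟩⟩)

theorem pt_mem_arvQL (L : Set X) (n : ℕ) (b : ArvIdx Y n) (x : X) (hxL : x ∈ L)
    (hx : w n b x ≠ 0) : ArvPt n b ∈ arvQL hLSC hne L :=
  subset_closure (mem_iUnion.2 ⟨n, ⟨b, ⟨x, hxL, hx⟩, rfl⟩⟩)

end ArvAux

end Sets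

section Limit

variable {X Y E : Type*} [TopologicalSpace X] [ParacompactSpace X] [T2Space X]
    [MetricSpace Y] [CompleteSpace Y]
    [AddCommGroup E] [Module ℝ E] [TopologicalSpace E]
    [IsTopologicalAddGroup E] [ContinuousSMul ℝ E] [LocallyConvexSpace ℝ E] [T2Space E]
variable {F : X → Set Y}
    (hLSC : ∀ U : Set Y, IsOpen U → IsOpen {x : X | (F x ∩ U).Nonempty})
    (hne : ∀ x : X, (F x).Nonempty)

namespace ArvAux

local notation "w" => arvW F hLSC hne

/-- a symmetric convex neighborhood of zero inside a given one -/
theorem arv_symm_conv {V : Set E} (hV : V ∈ 𝓝 (0:E)) :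
    ∃ W ∈ 𝓝 (0:E), Convex ℝ W ∧ -W = W ∧ W ⊆ V := by
  obtain ⟨W₀, ⟨hW₀, hW₀c⟩, hW₀V⟩ := (LocallyConvexSpace.convex_basis (𝕜 := ℝ) (0:E)).mem_iff.1 hV
  refine ⟨W₀ ∩ -W₀, ?_, hW₀c.inter hW₀c.neg, ?_, fun z hz => hW₀V hz.1⟩
  · refine inter_mem hW₀ ?_
    have hc : Continuous fun a : E => -a := continuous_neg
    have h2 := hc.continuousAt (x := (0:E))
    rw [ContinuousAt] at h2
    have : (fun a : E => -a) ⁻¹' W₀ ∈ 𝓝 (0:E) := h2 (by simpa using hW₀)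
    have he : -W₀ = (fun a : E => -a) ⁻¹' W₀ := by
      ext z; simp [Set.mem_neg]
    rwa [he]
  · ext z
    simp only [Set.mem_neg, Set.mem_inter_iff]
    constructor
    · rintro ⟨h1, h2⟩; exact ⟨by simpa using h2, by simpa using h1⟩
    · rintro ⟨h1, h2⟩; exact ⟨by simpa using h2, by simpa using h1⟩

/-- six-term smallness helper -/
theorem arv_sixW {U : Set E} (hU : U ∈ 𝓝 (0:E)) :
    ∃ W ∈ 𝓝 (0:E), Convex ℝ W ∧ -W = W ∧
      ∀ a ∈ W, ∀ b ∈ W, ∀ c ∈ W, ∀ d ∈ W, ∀ e ∈ W, ∀ g ∈ W, a+b+c+d+e+g ∈ U := by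
  obtain ⟨V₁, hV₁, h1⟩ := exists_nhds_zero_half hU
  obtain ⟨V₂, hV₂, h2⟩ := exists_nhds_zero_half hV₁
  obtain ⟨V₃, hV₃, h3⟩ := exists_nhds_zero_half hV₂
  obtain ⟨W, hW, hWc, hWs, hWV⟩ := arv_symm_conv (V := V₃) hV₃
  have h0₃ : (0:E) ∈ V₃ := mem_of_mem_nhds hV₃
  refine ⟨W, hW, hWc, hWs, ?_⟩
  intro a ha b hb c hc d hd e he g hg
  have hab : a + b ∈ V₂ := h3 a (hWV ha) b (hWV hb)
  have hcd : c + d ∈ V₂ := h3 c (hWV hc) d (hWV hd)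
  have heg : e + g ∈ V₂ := h3 e (hWV he) g (hWV hg)
  have habcd : (a + b) + (c + d) ∈ V₁ := h2 _ hab _ hcd
  have heg2 : e + g ∈ V₁ := by
    have := h2 _ heg 0 (mem_of_mem_nhds hV₂)
    simpa using this
  have : a+b+c+d+e+g = ((a+b)+(c+d))+(e+g) := by abel
  rw [this]
  exact h1 _ habcd _ heg2

/-- the approximating sums -/
noncomputable def arvS (f : C(Y, E)) (n : ℕ) (x : X) : E :=
  ∑ᶠ b : ArvIdx Y n, w n b x • f (ArvPt n b)

theorem arvS_supfin (f : C(Y, E)) (n : ℕ) (x : X) :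
    (support fun b : ArvIdx Y n => w n b x • f (ArvPt n b)).Finite := by
  apply (w_ptfin hLSC hne n x).subset
  intro b hb
  simp only [mem_support] at hb
  exact fun h0 => hb (by rw [h0, zero_smul])

theorem arvS_cont (f : C(Y, E)) (n : ℕ) : Continuous (arvS hLSC hne f n) := by
  apply continuous_finsum
  · exact fun b => ((w_cont hLSC hne n b).smul continuous_const)
  · apply (w_lf hLSC hne n).subset
    intro b x hx
    simp only [mem_support] at hx ⊢
    exact fun h0 => hx (by rw [h0, zero_smul])

theorem arvS_mem (f : C(Y, E)) (n : ℕ) (x : X) (D : Set E)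
    (hD : ∀ b : ArvIdx Y n, w n b x ≠ 0 → f (ArvPt n b) ∈ D) :
    arvS hLSC hne f n x ∈ convexHull ℝ D :=
  finsum_smul_mem hLSC hne n x _ D hD

/-- the key Cauchy-type estimate -/
theorem arv_diff_mem (f : C(Y, E)) {K : Set Y} (x : X)
    (hxK : ∀ m (b : ArvIdx Y m), w m b x ≠ 0 → ArvPt m b ∈ K)
    (n k : ℕ) {V : Set E} (hVc : Convex ℝ V)
    (hV : ∀ u v : Y, u ∈ K → v ∈ K → dist u v ≤ 2 * (1/2:ℝ)^n → f u - f v ∈ V) :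
    arvS hLSC hne f (n+k) x - arvS hLSC hne f n x ∈ V := by
  have h1 : arvS hLSC hne f n x
      = ∑ᶠ b : ArvIdx Y (n+k), w (n+k) b x • f (ArvPt n (ArvDown n k b)) :=
    (w_down_sum hLSC hne n k x (fun a => f (ArvPt n a))).symm
  have hfin1 : (support fun b : ArvIdx Y (n+k) => w (n+k) b x • f (ArvPt (n+k) b)).Finite :=
    arvS_supfin hLSC hne f (n+k) x
  have hfin2 : (support fun b : ArvIdx Y (n+k) => w (n+k) b x • f (ArvPt n (ArvDown n k b))).Finite := by
    apply (w_ptfin hLSC hne (n+k) x).subset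
    intro b hb
    simp only [mem_support] at hb
    exact fun h0 => hb (by rw [h0, zero_smul])
  have h2 : arvS hLSC hne f (n+k) x - arvS hLSC hne f n x
      = ∑ᶠ b : ArvIdx Y (n+k), w (n+k) b x • (f (ArvPt (n+k) b) - f (ArvPt n (ArvDown n k b))) := by
    rw [h1, arvS]
    rw [← finsum_sub_distrib hfin1 hfin2]
    apply finsum_congr
    intro b
    rw [smul_sub]
  rw [h2]
  have := finsum_smul_mem hLSC hne (n+k) x
    (fun b => f (ArvPt (n+k) b) - f (ArvPt n (ArvDown n k b))) V ?_
  · rwa [hVc.convexHull_eq] at this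
  · intro b hb
    apply hV
    · exact hxK (n+k) b hb
    · exact hxK n (ArvDown n k b) (w_down_ne hLSC hne n k b x hb)
    · have := w_down_dist hLSC hne n k b x hb
      have hnn : (0:ℝ) ≤ (1/2:ℝ)^(n+k) := by positivity
      linarith

variable (hE : ∀ K : Set E, IsCompact K → IsCompact (closure (convexHull ℝ K)))

include hE in
/-- existence of the limit -/
theorem arv_exists_lim (f : C(Y, E)) (x : X) :
    ∃ z : E, Tendsto (fun n => arvS hLSC hne f n x) atTop (𝓝 z) := by
  have hQ : IsCompact (arvQ hLSC hne x) := arvQ_isCompact hLSC hne x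
  have hfQ : IsCompact (f '' arvQ hLSC hne x) := hQ.image f.continuous
  have hC : IsCompact (closure (convexHull ℝ (f '' arvQ hLSC hne x))) := hE _ hfQ
  apply arv_tendsto_of_cauchy hC
  · intro n
    apply subset_closure
    apply arvS_mem hLSC hne f n x
    intro b hb
    exact mem_image_of_mem f (pt_mem_arvQ hLSC hne n b x hb)
  · intro V hV
    obtain ⟨W, hW, hWc, hWs, hWV⟩ := arv_symm_conv (V := V) hV
    obtain ⟨δ, hδpos, hδ⟩ := arv_unifCont f.continuous hQ hW
    obtain ⟨N, hN⟩ := exists_pow_lt_of_lt_one (by linarith : (0:ℝ) < δ/2) (by norm_num : (1/2:ℝ) < 1)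
    refine ⟨N, ?_⟩
    have key : ∀ n ≥ N, ∀ k, arvS hLSC hne f (n+k) x - arvS hLSC hne f n x ∈ W := by
      intro n hn k
      apply arv_diff_mem hLSC hne f x (fun m b hb => pt_mem_arvQ hLSC hne m b x hb) n k hWc
      intro u v hu hv hd
      apply hδ u hu v hv
      have hmon : ((1:ℝ)/2)^n ≤ (1/2:ℝ)^N :=
        pow_le_pow_of_le_one (by norm_num) (by norm_num) hn
      have : (1/2:ℝ)^N < δ/2 := hN
      linarith
    intro m hm n hn
    rcases le_total n m with h | h
    · obtain ⟨k, rfl⟩ : ∃ k, m = n + k := ⟨m - n, by omega⟩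
      exact hWV (key n hn k)
    · obtain ⟨k, rfl⟩ : ∃ k, n = m + k := ⟨n - m, by omega⟩
      have := key m hm k
      have hneg : -(arvS hLSC hne f (m+k) x - arvS hLSC hne f m x) ∈ -W :=
        Set.neg_mem_neg.2 this
      rw [hWs] at hneg
      have heq : -(arvS hLSC hne f (m+k) x - arvS hLSC hne f m x)
          = arvS hLSC hne f m x - arvS hLSC hne f (m+k) x := by abel
      rw [heq] at hneg
      exact hWV hneg

/-- the limit operator, pointwise -/
noncomputable def arvLim (f : C(Y, E)) (x : X) : E :=
  (arv_exists_lim hLSC hne hE f x).choose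

theorem arvLim_tendsto (f : C(Y, E)) (x : X) :
    Tendsto (fun n => arvS hLSC hne f n x) atTop (𝓝 (arvLim hLSC hne hE f x)) :=
  (arv_exists_lim hLSC hne hE f x).choose_spec

include hE in
/-- membership of the limit in the closed convex hull -/
theorem arvLim_mem (f : C(Y, E)) (x : X) :
    arvLim hLSC hne hE f x ∈ closure (convexHull ℝ (f '' F x)) := by
  rw [mem_closure_iff_nhds]
  intro U hU
  set z := arvLim hLSC hne hE f x with hz
  have hU₀ : (fun v : E => z + v) ⁻¹' U ∈ 𝓝 (0:E) := by
    have hc : Continuous fun v : E => z + v := continuous_const.add continuous_id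
    have h2 := hc.continuousAt (x := (0:E))
    rw [ContinuousAt] at h2
    exact h2 (by simpa using hU)
  obtain ⟨W, hW, hWc, hWs, h6⟩ := arv_sixW (U := (fun v : E => z + v) ⁻¹' U) hU₀
  have hQ : IsCompact (arvQ hLSC hne x) := arvQ_isCompact hLSC hne x
  obtain ⟨δ, hδpos, hδ⟩ := arv_unifCont f.continuous hQ hW
  obtain ⟨N₁, hN₁⟩ := exists_pow_lt_of_lt_one hδpos (by norm_num : (1/2:ℝ) < 1)
  have hev : ∀ᶠ n in atTop, arvS hLSC hne f n x - z ∈ W := by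
    have hc : Continuous fun v : E => v - z := continuous_id.sub continuous_const
    have h2 := hc.continuousAt (x := z)
    rw [ContinuousAt] at h2
    exact (arvLim_tendsto hLSC hne hE f x) (h2 (by simpa using hW))
  obtain ⟨n, hn, hnN⟩ := (hev.and (eventually_ge_atTop N₁)).exists
  -- the convex combination of values on F x
  set a := ∑ᶠ b : ArvIdx Y n, w n b x • f (arvZ hne n b x) with ha
  have haA : a ∈ convexHull ℝ (f '' F x) := by
    apply finsum_smul_mem hLSC hne n x
    intro b _
    exact mem_image_of_mem f (arvZ_memF hne n b x)
  have hfin1 : (support fun b : ArvIdx Y n => w n b x • f (ArvPt n b)).Finite :=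
    arvS_supfin hLSC hne f n x
  have hfin2 : (support fun b : ArvIdx Y n => w n b x • f (arvZ hne n b x)).Finite := by
    apply (w_ptfin hLSC hne n x).subset
    intro b hb
    simp only [mem_support] at hb
    exact fun h0 => hb (by rw [h0, zero_smul])
  have hdiff : arvS hLSC hne f n x - a
      = ∑ᶠ b : ArvIdx Y n, w n b x • (f (ArvPt n b) - f (arvZ hne n b x)) := by
    rw [ha, arvS, ← finsum_sub_distrib hfin1 hfin2]
    apply finsum_congr
    intro b
    rw [smul_sub]
  have hdW : arvS hLSC hne f n x - a ∈ W := by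
    rw [hdiff]
    have hmm := finsum_smul_mem hLSC hne n x
      (fun b => f (ArvPt n b) - f (arvZ hne n b x)) W ?_
    · rwa [hWc.convexHull_eq] at hmm
    · intro b hb
      apply hδ _ (pt_mem_arvQ hLSC hne n b x hb) _ (z_mem_arvQ hLSC hne n b x hb)
      have h3 := arvZ_dist hLSC hne n b x hb
      have hmon : ((1:ℝ)/2)^n ≤ (1/2:ℝ)^N₁ :=
        pow_le_pow_of_le_one (by norm_num) (by norm_num) hnN
      linarith
  -- conclude : a ∈ U
  refine ⟨a, ?_, haA⟩
  have hmemW : ∀ v ∈ W, -v ∈ W := by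
    intro v hv
    have : -v ∈ -W := Set.neg_mem_neg.2 hv
    rwa [hWs] at this
  have h0W : (0:E) ∈ W := mem_of_mem_nhds hW
  have key := h6 _ (hmemW _ hdW) _ hn _ h0W _ h0W _ h0W _ h0W
  have heq : z + (-(arvS hLSC hne f n x - a) + (arvS hLSC hne f n x - z) + 0 + 0 + 0 + 0) = a := by
    abel
  rw [mem_preimage, heq] at key
  exact key

include hE in
/-- uniform tail bound over a compact set -/
theorem arv_tail (f : C(Y, E)) {L : Set X} (hL : IsCompact L) {V : Set E}
    (hV : V ∈ 𝓝 (0:E)) (hVc : Convex ℝ V) :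
    ∃ N, ∀ n ≥ N, ∀ x ∈ L, arvLim hLSC hne hE f x - arvS hLSC hne f n x ∈ closure V := by
  have hQ : IsCompact (arvQL hLSC hne L) := arvQL_isCompact hLSC hne hL
  obtain ⟨δ, hδpos, hδ⟩ := arv_unifCont f.continuous hQ hV
  obtain ⟨N, hN⟩ := exists_pow_lt_of_lt_one (by linarith : (0:ℝ) < δ/2) (by norm_num : (1/2:ℝ) < 1)
  refine ⟨N, ?_⟩
  intro n hn x hx
  have hdm : ∀ k, arvS hLSC hne f (n+k) x - arvS hLSC hne f n x ∈ V := by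
    intro k
    apply arv_diff_mem hLSC hne f x
      (fun m b hb => pt_mem_arvQL hLSC hne L m b x hx hb) n k hVc
    intro u v hu hv hd
    apply hδ u hu v hv
    have hmon : ((1:ℝ)/2)^n ≤ (1/2:ℝ)^N :=
      pow_le_pow_of_le_one (by norm_num) (by norm_num) hn
    have : (1/2:ℝ)^N < δ/2 := hN
    linarith
  have hcomp : Tendsto (fun k : ℕ => n + k) atTop atTop := by
    have heq : (fun k : ℕ => n + k) = fun k : ℕ => k + n := funext fun k => Nat.add_comm n k
    rw [heq]
    exact tendsto_add_atTop_nat n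
  have htd : Tendsto (fun k => arvS hLSC hne f (n+k) x - arvS hLSC hne f n x) atTop
      (𝓝 (arvLim hLSC hne hE f x - arvS hLSC hne f n x)) :=
    Tendsto.sub ((arvLim_tendsto hLSC hne hE f x).comp hcomp) tendsto_const_nhds
  exact mem_closure_of_tendsto htd (Filter.Eventually.of_forall hdm)

variable (hk : ∀ A : Set X, (∀ K : Set X, IsCompact K → IsClosed (A ∩ K)) → IsClosed A)

include hE hk in
/-- continuity of the limit function -/
theorem arvLim_continuous (f : C(Y, E)) : Continuous (arvLim hLSC hne hE f) := by
  have hco : ∀ K : Set X, IsCompact K → ContinuousOn (arvLim hLSC hne hE f) K := by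
    intro K hK
    intro x₀ hx₀
    rw [ContinuousWithinAt, ← tendsto_sub_nhds_zero_iff, Filter.tendsto_def]
    intro U hU
    obtain ⟨W, hW, hWc, hWs, h6⟩ := arv_sixW hU
    obtain ⟨N, hN⟩ := arv_tail hLSC hne hE f hK hW hWc
    have htail : ∀ x ∈ K, arvLim hLSC hne hE f x - arvS hLSC hne f N x ∈ closure W :=
      fun x hx => hN N le_rfl x hx
    have hclW : closure W ⊆ W + W := arv_closure_subset_add hW
    have hmemW : ∀ v ∈ W, -v ∈ W := by
      intro v hv
      have : -v ∈ -W := Set.neg_mem_neg.2 hv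
      rwa [hWs] at this
    have hE₁ : {x : X | arvS hLSC hne f N x - arvS hLSC hne f N x₀ ∈ W} ∈ 𝓝 x₀ := by
      have hc : Continuous fun x => arvS hLSC hne f N x - arvS hLSC hne f N x₀ :=
        (arvS_cont hLSC hne f N).sub continuous_const
      have h2 := hc.continuousAt (x := x₀)
      rw [ContinuousAt] at h2
      exact h2 (by simpa using hW)
    have hmem : {x : X | arvS hLSC hne f N x - arvS hLSC hne f N x₀ ∈ W} ∩ K ∈ 𝓝[K] x₀ :=
      inter_mem (mem_nhdsWithin_of_mem_nhds hE₁) self_mem_nhdsWithin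
    apply Filter.mem_of_superset hmem
    rintro x ⟨hxW, hxK⟩
    obtain ⟨w₁, hw₁, w₂, hw₂, he12⟩ := Set.mem_add.1 (hclW (htail x hxK))
    obtain ⟨w₃, hw₃, w₄, hw₄, he34⟩ := Set.mem_add.1 (hclW (htail x₀ hx₀))
    have key := h6 _ hw₁ _ hw₂ _ hxW _ (hmemW _ hw₃) _ (hmemW _ hw₄) _ (mem_of_mem_nhds hW)
    have heq : w₁ + w₂ + (arvS hLSC hne f N x - arvS hLSC hne f N x₀) + -w₃ + -w₄ + 0
        = arvLim hLSC hne hE f x - arvLim hLSC hne hE f x₀ := by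
      have h' : w₁ + w₂ + (arvS hLSC hne f N x - arvS hLSC hne f N x₀) + -w₃ + -w₄ + 0
          = (w₁ + w₂) + (arvS hLSC hne f N x - arvS hLSC hne f N x₀) - (w₃ + w₄) := by abel
      rw [h', he12, he34]
      abel
    rw [heq] at key
    exact key
  rw [continuous_iff_isClosed]
  intro C hC
  apply hk
  intro K hK
  have h2 := (hco K hK).preimage_isClosed_of_isClosed hK.isClosed hC
  rwa [Set.inter_comm] at h2

theorem arvS_add (f g : C(Y, E)) (n : ℕ) (x : X) :
    arvS hLSC hne (f + g) n x = arvS hLSC hne f n x + arvS hLSC hne g n x := by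
  rw [arvS, arvS, arvS, ← finsum_add_distrib (arvS_supfin hLSC hne f n x) (arvS_supfin hLSC hne g n x)]
  apply finsum_congr
  intro b
  rw [ContinuousMap.add_apply, smul_add]

theorem arvS_smul (c : ℝ) (f : C(Y, E)) (n : ℕ) (x : X) :
    arvS hLSC hne (c • f) n x = c • arvS hLSC hne f n x := by
  rw [arvS, arvS, smul_finsum' c (arvS_supfin hLSC hne f n x)]
  apply finsum_congr
  intro b
  rw [ContinuousMap.smul_apply, smul_comm]

include hE in
theorem arvLim_add (f g : C(Y, E)) (x : X) :
    arvLim hLSC hne hE (f + g) x = arvLim hLSC hne hE f x + arvLim hLSC hne hE g x := by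
  have h1 := (arvLim_tendsto hLSC hne hE f x).add (arvLim_tendsto hLSC hne hE g x)
  have heq : (fun n => arvS hLSC hne f n x + arvS hLSC hne g n x)
      = fun n => arvS hLSC hne (f + g) n x := funext fun n => (arvS_add hLSC hne f g n x).symm
  rw [heq] at h1
  exact tendsto_nhds_unique (arvLim_tendsto hLSC hne hE (f + g) x) h1

include hE in
theorem arvLim_smul (c : ℝ) (f : C(Y, E)) (x : X) :
    arvLim hLSC hne hE (c • f) x = c • arvLim hLSC hne hE f x := by
  have h1 := (arvLim_tendsto hLSC hne hE f x).const_smul c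
  have heq : (fun n => c • arvS hLSC hne f n x)
      = fun n => arvS hLSC hne (c • f) n x := funext fun n => (arvS_smul hLSC hne c f n x).symm
  rw [heq] at h1
  exact tendsto_nhds_unique (arvLim_tendsto hLSC hne hE (c • f) x) h1

include hE in
theorem arvLim_small (h : C(Y, E)) {L : Set X} (hL : IsCompact L) {W : Set E}
    (hWc : Convex ℝ W) (hmap : ∀ y ∈ arvQL hLSC hne L, h y ∈ W) (x : X) (hx : x ∈ L) :
    arvLim hLSC hne hE h x ∈ closure W := by
  apply mem_closure_of_tendsto (arvLim_tendsto hLSC hne hE h x)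
  apply Filter.Eventually.of_forall
  intro n
  have hmm := arvS_mem hLSC hne h n x W (fun b hb => hmap _ (pt_mem_arvQL hLSC hne L n b x hx hb))
  rwa [hWc.convexHull_eq] at hmm

end ArvAux

end Limit

open ArvAux in
/-- Arvanitakis' theorem: for a LSC closedvalued mapping `F` from a paracompact
Hausdorff k-space `X` into a complete metric space `Y`, and a Hausdorff locally
convex space `E` in which closed convex hulls of compacta are compact, there is
a continuous linear operator `S : C(Y,E) → C(X,E)` (compact-open topologies)
with `S f x ∈ closure (convexHull (f '' F x))` for all `f` and `x`. -/
theorem arvanitakis_selection_extension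
    {X Y E : Type*} [TopologicalSpace X] [ParacompactSpace X] [T2Space X]
    [MetricSpace Y] [CompleteSpace Y]
    [AddCommGroup E] [Module ℝ E] [TopologicalSpace E]
    [IsTopologicalAddGroup E] [ContinuousSMul ℝ E] [LocallyConvexSpace ℝ E] [T2Space E]
    (hk : ∀ A : Set X, (∀ K : Set X, IsCompact K → IsClosed (A ∩ K)) → IsClosed A)
    (hE : ∀ K : Set E, IsCompact K → IsCompact (closure (convexHull ℝ K)))
    (F : X → Set Y)
    (hLSC : ∀ U : Set Y, IsOpen U → IsOpen {x : X | (F x ∩ U).Nonempty})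
    (hne : ∀ x : X, (F x).Nonempty)
    (hclosed : ∀ x : X, IsClosed (F x)) :
    ∃ S : C(Y, E) →L[ℝ] C(X, E),
      ∀ (f : C(Y, E)) (x : X), S f x ∈ closure (convexHull ℝ (f '' F x)) := by
  classical
  -- the underlying linear map
  set Tlin : C(Y, E) →ₗ[ℝ] C(X, E) :=
    { toFun := fun f => ⟨arvLim hLSC hne hE f, arvLim_continuous hLSC hne hE hk f⟩
      map_add' := fun f g => ContinuousMap.ext fun x => arvLim_add hLSC hne hE f g x
      map_smul' := fun c f => ContinuousMap.ext fun x => arvLim_smul hLSC hne hE c f x }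
    with hTlin
  have hTcont : Continuous Tlin := by
    rw [ContinuousMap.continuous_compactOpen]
    intro L hL U hU
    rw [isOpen_iff_forall_mem_open]
    intro f₀ hf₀
    have hTf₀ : MapsTo (Tlin f₀ : X → E) L U := hf₀
    have hC₀ : IsCompact ((Tlin f₀ : X → E) '' L) := hL.image (Tlin f₀).continuous
    obtain ⟨V₀, hV₀, hCV⟩ := compact_open_separated_add_right hC₀ hU (hTf₀.image_subset)
    obtain ⟨V₁, hV₁, h1⟩ := exists_nhds_zero_half hV₀
    obtain ⟨W, hW, hWc, hWs, hWV⟩ := arv_symm_conv (V := V₁) hV₁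
    have hQL : IsCompact (arvQL hLSC hne L) := arvQL_isCompact hLSC hne hL
    refine ⟨(fun g : C(Y, E) => g - f₀) ⁻¹' {h : C(Y, E) | MapsTo h (arvQL hLSC hne L) (interior W)},
      ?_, ?_, ?_⟩
    · -- contained in the target set
      intro g hg
      simp only [mem_preimage, mem_setOf_eq] at hg
      show MapsTo (Tlin g : X → E) L U
      intro x hx
      have hgdecomp : g = f₀ + (g - f₀) := by abel
      have hval : Tlin g x = Tlin f₀ x + arvLim hLSC hne hE (g - f₀) x := by
        conv_lhs => rw [hgdecomp]
        exact arvLim_add hLSC hne hE f₀ (g - f₀) x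
      have hsmall : arvLim hLSC hne hE (g - f₀) x ∈ closure W := by
        apply arvLim_small hLSC hne hE (g - f₀) hL hWc ?_ x hx
        intro y hy
        exact interior_subset (hg hy)
      have hWV₀ : closure W ⊆ V₀ := by
        intro v hv
        obtain ⟨v₁, hv₁, v₂, hv₂, hv12⟩ := Set.mem_add.1 (arv_closure_subset_add hW hv)
        rw [← hv12]
        exact h1 _ (hWV hv₁) _ (hWV hv₂)
      have : Tlin g x ∈ (Tlin f₀ : X → E) '' L + V₀ := by
        rw [hval]
        exact Set.add_mem_add (mem_image_of_mem _ hx) (hWV₀ hsmall)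
      exact hCV this
    · -- openness
      apply IsOpen.preimage
      · exact continuous_id.sub continuous_const
      · exact ContinuousMap.isOpen_setOf_mapsTo hQL isOpen_interior
    · -- contains f₀
      simp only [mem_preimage, sub_self, mem_setOf_eq]
      intro y _
      show (0 : C(Y, E)) y ∈ interior W
      rw [ContinuousMap.zero_apply]
      exact mem_interior_iff_mem_nhds.2 hW
  refine ⟨⟨Tlin, hTcont⟩, ?_⟩
  intro f x
  exact arvLim_mem hLSC hne hE f x
end

section
/- Shishkov's reduction to bounded mappings: let X be a countably paracompact topological space, i.e. every countable open cover of X admits a locally finite open refinement, and let Y be a real normed space. Then the following are equivalent: (1) every lower semicontinuous multivalued mapping F from X to Y with nonempty closed convex values admits a continuous singlevalued selection; (2) every lower semicontinuous multivalued mapping F from X to Y with nonempty closed convex values whose total image F(X) = ⋃_{x∈X} F(x) is a bounded subset of Y admits a continuous singlevalued selection. -/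
open Set Metric Pointwise

private lemma closure_inter_open_nonempty' {Y : Type*} [TopologicalSpace Y]
    {s U : Set Y} (hU : IsOpen U) :
    (closure s ∩ U).Nonempty ↔ (s ∩ U).Nonempty := by
  constructor
  · rintro ⟨y, hyc, hyU⟩
    obtain ⟨z, hzU, hzs⟩ := mem_closure_iff.mp hyc U hU hyU
    exact ⟨z, hzs, hzU⟩
  · rintro ⟨y, hys, hyU⟩
    exact ⟨y, subset_closure hys, hyU⟩

/-- Lower semicontinuity of the rescaled truncation `x ↦ (r x)⁻¹ • (F x ∩ ball 0 (r x))`. -/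
private lemma lsc_rescaled {X Y : Type*} [TopologicalSpace X]
    [NormedAddCommGroup Y] [NormedSpace ℝ Y]
    (F : X → Set Y) (hF : ∀ U : Set Y, IsOpen U → IsOpen {x | (F x ∩ U).Nonempty})
    (r : X → ℝ) (hrc : Continuous r) (hrpos : ∀ x, 0 < r x)
    (U : Set Y) (hU : IsOpen U) :
    IsOpen {x | (((r x)⁻¹ • (F x ∩ ball (0:Y) (r x))) ∩ U).Nonempty} := by
  rw [isOpen_iff_mem_nhds]
  intro x hx
  obtain ⟨y, hy1, hyU⟩ := hx
  obtain ⟨z, ⟨hzF, hzb⟩, rfl⟩ := hy1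
  have hzn : ‖z‖ < r x := by simpa using hzb
  -- the continuous map φ(x', z') = (r x')⁻¹ • z'
  have hφ : Continuous fun p : X × Y => (r p.1)⁻¹ • p.2 :=
    ((hrc.comp continuous_fst).inv₀ fun p => (hrpos p.1).ne').smul continuous_snd
  have hmem : ((fun p : X × Y => (r p.1)⁻¹ • p.2) ⁻¹' U) ∈ nhds (x, z) :=
    (hU.preimage hφ).mem_nhds (by simpa using hyU)
  rw [nhds_prod_eq, Filter.mem_prod_iff] at hmem
  obtain ⟨u, hu, v, hv, huv⟩ := hmem
  obtain ⟨u', hu'sub, hu'open, hxu'⟩ := _root_.mem_nhds_iff.mp hu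
  obtain ⟨v', hv'sub, hv'open, hzv'⟩ := _root_.mem_nhds_iff.mp hv
  set c : ℝ := (‖z‖ + r x) / 2 with hc
  have hzc : ‖z‖ < c := by simp only [hc]; linarith
  have hcr : c < r x := by simp only [hc]; linarith
  set W : Set Y := v' ∩ ball (0:Y) c with hW
  have hWopen : IsOpen W := hv'open.inter isOpen_ball
  refine Filter.mem_of_superset
    (((hF W hWopen).inter ((isOpen_lt continuous_const hrc).inter hu'open)).mem_nhds
      ⟨⟨z, hzF, hzv', by simpa using hzc⟩, hcr, hxu'⟩) ?_
  rintro x' ⟨⟨z', hz'F, hz'v, hz'c⟩, hcx', hx'u⟩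
  have hz'n : ‖z'‖ < c := by simpa using hz'c
  refine ⟨(r x')⁻¹ • z', ⟨z', ⟨hz'F, ?_⟩, rfl⟩, ?_⟩
  · simp only [mem_ball, dist_zero_right]
    exact hz'n.trans hcx'
  · have hp : ((x', z') : X × Y) ∈ u ×ˢ v := ⟨hu'sub hx'u, hv'sub hz'v⟩
    exact huv hp

/-- Shishkov's reduction to bounded mappings: over a countably paracompact domain,
all LSC closed-convex-valued mappings into a normed space admit continuous selections
if and only if all such mappings with bounded total image do. -/
theorem shishkov_reduction_to_bounded
    {X Y : Type*} [TopologicalSpace X]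
    [NormedAddCommGroup Y] [NormedSpace ℝ Y]
    (hcp : ∀ U : ℕ → Set X, (∀ n, IsOpen (U n)) → (⋃ n, U n) = Set.univ →
      ∃ 𝒱 : Set (Set X), (∀ V ∈ 𝒱, IsOpen V) ∧ ⋃₀ 𝒱 = Set.univ ∧
        (∀ V ∈ 𝒱, ∃ n, V ⊆ U n) ∧
        ∀ x : X, ∃ N ∈ nhds x, {V ∈ 𝒱 | (V ∩ N).Nonempty}.Finite) :
    ((∀ F : X → Set Y,
        (∀ U : Set Y, IsOpen U → IsOpen {x : X | (F x ∩ U).Nonempty}) →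
        (∀ x : X, (F x).Nonempty) → (∀ x : X, IsClosed (F x)) →
        (∀ x : X, Convex ℝ (F x)) →
        ∃ f : X → Y, Continuous f ∧ ∀ x : X, f x ∈ F x) ↔
      (∀ F : X → Set Y,
        (∀ U : Set Y, IsOpen U → IsOpen {x : X | (F x ∩ U).Nonempty}) →
        (∀ x : X, (F x).Nonempty) → (∀ x : X, IsClosed (F x)) →
        (∀ x : X, Convex ℝ (F x)) →
        Bornology.IsBounded (⋃ x : X, F x) →
        ∃ f : X → Y, Continuous f ∧ ∀ x : X, f x ∈ F x)) := by
  constructor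
  · intro h F h1 h2 h3 h4 _
    exact h F h1 h2 h3 h4
  · intro hb F hLSC hne hcl hconv
    -- trivial case: Y has only 0
    by_cases hY : ∃ y : Y, y ≠ 0
    swap
    · push_neg at hY
      refine ⟨fun _ => 0, continuous_const, fun x => ?_⟩
      obtain ⟨y, hy⟩ := hne x
      rw [← hY y]; exact hy
    obtain ⟨y₁, hy₁⟩ := hY
    set y₀ : Y := ‖y₁‖⁻¹ • y₁ with hy₀def
    have hy₀ : ‖y₀‖ = 1 := by
      rw [hy₀def, norm_smul, norm_inv, norm_norm,
        inv_mul_cancel₀ (norm_ne_zero_iff.mpr hy₁)]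
    -- the countable open cover U n
    set U : ℕ → Set X := fun n => {x | (F x ∩ ball (0:Y) (n + 1)).Nonempty} with hUdef
    have hUopen : ∀ n, IsOpen (U n) := fun n => hLSC _ isOpen_ball
    have hUcover : (⋃ n, U n) = Set.univ := by
      rw [eq_univ_iff_forall]
      intro x
      obtain ⟨y, hy⟩ := hne x
      refine mem_iUnion.mpr ⟨⌈‖y‖⌉₊, y, hy, ?_⟩
      simp only [mem_ball, dist_zero_right]
      exact lt_of_le_of_lt (Nat.le_ceil _) (by linarith)
    obtain ⟨𝒱, h𝒱open, h𝒱cover, h𝒱ref, h𝒱lf⟩ := hcp U hUopen hUcover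
    -- choice of index for each member of the refinement
    set nV : Set X → ℕ := fun V => sInf {n | V ⊆ U n} with hnVdef
    have hnV : ∀ V ∈ 𝒱, V ⊆ U (nV V) := by
      intro V hV
      have h := h𝒱ref V hV
      exact Nat.sInf_mem h
    set t : Set X → ℝ := fun V => (2:ℝ) ^ (-(nV V : ℤ)) with htdef
    have htpos : ∀ V, 0 < t V := fun V => zpow_pos (by norm_num) _
    have htle1 : ∀ V, t V ≤ 1 := fun V =>
      zpow_le_one_of_nonpos₀ (by norm_num) (by simp)
    have htlogb : ∀ V, Real.logb 2 (t V) = -(nV V : ℝ) := by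
      intro V
      rw [htdef]
      simp only [Real.logb, Real.log_zpow]
      rw [mul_div_assoc, div_self (Real.log_ne_zero_of_pos_of_ne_one (by norm_num) (by norm_num)),
        mul_one]
      push_cast
      ring
    -- family of members containing x : finite & nonempty
    have hFx : ∀ x : X, {V | V ∈ 𝒱 ∧ x ∈ V}.Finite ∧ {V | V ∈ 𝒱 ∧ x ∈ V}.Nonempty := by
      intro x
      obtain ⟨N, hN, hNfin⟩ := h𝒱lf x
      constructor
      · refine hNfin.subset ?_
        rintro V ⟨hV, hxV⟩
        exact ⟨hV, x, hxV, mem_of_mem_nhds hN⟩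
      · have : x ∈ ⋃₀ 𝒱 := h𝒱cover ▸ mem_univ x
        obtain ⟨V, hV, hxV⟩ := this
        exact ⟨V, hV, hxV⟩
    -- auxiliary bounded LSC mapping along the ray through y₀
    set Φ : X → Set Y := fun x =>
      closure (convexHull ℝ ((fun V => t V • y₀) '' {V | V ∈ 𝒱 ∧ x ∈ V})) with hΦdef
    have hΦmono : ∀ x : X, ∃ O : Set X, IsOpen O ∧ x ∈ O ∧ ∀ x' ∈ O, Φ x ⊆ Φ x' := by
      intro x
      refine ⟨⋂ V ∈ {V | V ∈ 𝒱 ∧ x ∈ V}, V,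
        (hFx x).1.isOpen_biInter fun V hV => h𝒱open V hV.1, ?_, ?_⟩
      · exact mem_biInter fun V hV => hV.2
      · intro x' hx'
        refine closure_mono (convexHull_mono (image_mono (f := fun V => t V • y₀) ?_))
        rintro V ⟨hV, hxV⟩
        exact ⟨hV, mem_iInter₂.mp hx' V ⟨hV, hxV⟩⟩
    have hΦLSC : ∀ U' : Set Y, IsOpen U' → IsOpen {x | (Φ x ∩ U').Nonempty} := by
      intro U' hU'
      rw [isOpen_iff_mem_nhds]
      intro x hx
      obtain ⟨O, hOopen, hxO, hOsub⟩ := hΦmono x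
      refine Filter.mem_of_superset (hOopen.mem_nhds hxO) fun x' hx' => ?_
      obtain ⟨y, hy1, hy2⟩ := hx
      exact ⟨y, hOsub x' hx' hy1, hy2⟩
    have hΦne : ∀ x, (Φ x).Nonempty := by
      intro x
      obtain ⟨V, hV⟩ := (hFx x).2
      exact ⟨t V • y₀, subset_closure (subset_convexHull ℝ _ ⟨V, hV, rfl⟩)⟩
    have hΦcl : ∀ x, IsClosed (Φ x) := fun x => isClosed_closure
    have hΦconv : ∀ x, Convex ℝ (Φ x) := fun x => (convex_convexHull ℝ _).closure
    have hΦbdd : Bornology.IsBounded (⋃ x : X, Φ x) := by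
      refine (isBounded_closedBall (x := (0:Y)) (r := 1)).subset ?_
      refine iUnion_subset fun x => ?_
      refine closure_minimal (convexHull_min ?_ (convex_closedBall _ _)) isClosed_closedBall
      rintro y ⟨V, hV, rfl⟩
      simp only [mem_closedBall, dist_zero_right, norm_smul, hy₀, mul_one,
        Real.norm_eq_abs, abs_of_pos (htpos V)]
      exact htle1 V
    obtain ⟨f₀, hf₀c, hf₀⟩ := hb Φ hΦLSC hΦne hΦcl hΦconv hΦbdd
    -- bounds on ‖f₀ x‖
    have hbound : ∀ x : X, 0 < ‖f₀ x‖ ∧ ‖f₀ x‖ ≤ 1 ∧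
        ∃ V, V ∈ 𝒱 ∧ x ∈ V ∧ ‖f₀ x‖ ≤ t V := by
      intro x
      obtain ⟨hfin, hnon⟩ := hFx x
      set s : Finset (Set X) := hfin.toFinset with hs
      have hsne : s.Nonempty := by
        rw [hs, Set.Finite.toFinset_nonempty]; exact hnon
      set c : ℝ := s.inf' hsne t with hcdef
      set b : ℝ := s.sup' hsne t with hbdef
      -- Φ x ⊆ image of [c,b] under (· • y₀)
      have hsub : Φ x ⊆ (fun u : ℝ => u • y₀) '' Icc c b := by
        have hconvS : Convex ℝ ((fun u : ℝ => u • y₀) '' Icc c b) := by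
          have := (convex_Icc c b).linear_image (LinearMap.toSpanSingleton ℝ Y y₀)
          simpa [LinearMap.toSpanSingleton_apply] using this
        have hclS : IsClosed ((fun u : ℝ => u • y₀) '' Icc c b) :=
          (isCompact_Icc.image (continuous_id.smul continuous_const)).isClosed
        refine closure_minimal (convexHull_min ?_ hconvS) hclS
        rintro y ⟨V, hV, rfl⟩
        have hVs : V ∈ s := by rw [hs, Set.Finite.mem_toFinset]; exact hV
        exact ⟨t V, ⟨Finset.inf'_le _ hVs, Finset.le_sup' _ hVs⟩, rfl⟩
      obtain ⟨u, ⟨hcu, hub⟩, hu⟩ := hsub (hf₀ x)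
      have hcpos : 0 < c := by
        rw [hcdef, Finset.lt_inf'_iff]
        exact fun V _ => htpos V
      have hnorm : ‖f₀ x‖ = u := by
        rw [← hu, norm_smul, hy₀, mul_one, Real.norm_eq_abs,
          abs_of_pos (lt_of_lt_of_le hcpos hcu)]
      obtain ⟨V, hVs, hVb⟩ := Finset.exists_mem_eq_sup' hsne t
      have hVmem : V ∈ 𝒱 ∧ x ∈ V := by
        rw [hs, Set.Finite.mem_toFinset] at hVs; exact hVs
      refine ⟨?_, ?_, V, hVmem.1, hVmem.2, ?_⟩
      · rw [hnorm]; exact lt_of_lt_of_le hcpos hcu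
      · rw [hnorm]
        refine le_trans hub ?_
        rw [hbdef, hVb] -- b = t V ≤ 1
        exact htle1 V
      · rw [hnorm]
        refine le_trans hub ?_
        rw [hbdef, hVb]
    have hρpos : ∀ x, 0 < ‖f₀ x‖ := fun x => (hbound x).1
    have hρle1 : ∀ x, ‖f₀ x‖ ≤ 1 := fun x => (hbound x).2.1
    -- the continuous radius function
    set r : X → ℝ := fun x => 2 - Real.logb 2 ‖f₀ x‖ with hrdef
    have hrc : Continuous r := by
      have hlog : Continuous fun x => Real.log ‖f₀ x‖ :=
        Continuous.log (continuous_norm.comp hf₀c) fun x => (hρpos x).ne'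
      have : Continuous fun x => Real.logb 2 ‖f₀ x‖ := by
        simp only [Real.logb]
        exact hlog.div_const _
      exact (continuous_const.sub this)
    have hr2 : ∀ x, 2 ≤ r x := by
      intro x
      have : Real.logb 2 ‖f₀ x‖ ≤ 0 :=
        Real.logb_nonpos (by norm_num) (norm_nonneg _) (hρle1 x)
      rw [hrdef]; dsimp only; linarith
    have hrpos : ∀ x, 0 < r x := fun x => lt_of_lt_of_le (by norm_num) (hr2 x)
    -- key estimate : F x meets ball 0 (r x)
    have hrmem : ∀ x, (F x ∩ ball (0:Y) (r x)).Nonempty := by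
      intro x
      obtain ⟨_, _, V, hV𝒱, hxV, hle⟩ := hbound x
      have hxU : x ∈ U (nV V) := hnV V hV𝒱 hxV
      obtain ⟨y, hyF, hyb⟩ := hxU
      have hyn : ‖y‖ < (nV V : ℝ) + 1 := by simpa using hyb
      have hlogle : Real.logb 2 ‖f₀ x‖ ≤ -(nV V : ℝ) := by
        have := Real.logb_le_logb_of_le (b := 2) (by norm_num) (hρpos x) hle
        rw [htlogb V] at this
        simpa using this
      have hrge : (nV V : ℝ) + 1 ≤ r x := by
        rw [hrdef]; dsimp only; linarith
      exact ⟨y, hyF, by simp only [mem_ball, dist_zero_right]; linarith⟩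
    -- the rescaled bounded mapping
    set G : X → Set Y := fun x => closure ((r x)⁻¹ • (F x ∩ ball (0:Y) (r x))) with hGdef
    have hGLSC : ∀ U' : Set Y, IsOpen U' → IsOpen {x | (G x ∩ U').Nonempty} := by
      intro U' hU'
      have : {x | (G x ∩ U').Nonempty}
          = {x | (((r x)⁻¹ • (F x ∩ ball (0:Y) (r x))) ∩ U').Nonempty} := by
        ext x; exact closure_inter_open_nonempty' hU'
      rw [this]
      exact lsc_rescaled F hLSC r hrc hrpos U' hU'
    have hGne : ∀ x, (G x).Nonempty := by
      intro x
      obtain ⟨y, hy⟩ := hrmem x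
      exact ⟨(r x)⁻¹ • y, subset_closure ⟨y, hy, rfl⟩⟩
    have hGcl : ∀ x, IsClosed (G x) := fun x => isClosed_closure
    have hGconv : ∀ x, Convex ℝ (G x) := fun x =>
      (((hconv x).inter (convex_ball _ _)).smul _).closure
    have hGbdd : Bornology.IsBounded (⋃ x : X, G x) := by
      refine (isBounded_closedBall (x := (0:Y)) (r := 1)).subset ?_
      refine iUnion_subset fun x => ?_
      refine closure_minimal ?_ isClosed_closedBall
      rintro y ⟨z, ⟨hzF, hzb⟩, rfl⟩
      have hzn : ‖z‖ < r x := by simpa using hzb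
      simp only [mem_closedBall, dist_zero_right, norm_smul, norm_inv,
        Real.norm_eq_abs, abs_of_pos (hrpos x)]
      rw [inv_mul_le_iff₀ (hrpos x), mul_one]
      exact hzn.le
    obtain ⟨g, hgc, hg⟩ := hb G hGLSC hGne hGcl hGconv hGbdd
    -- final selection
    refine ⟨fun x => r x • g x, hrc.smul hgc, fun x => ?_⟩
    have h1 : r x • g x ∈ (fun y => r x • y) '' closure ((r x)⁻¹ • (F x ∩ ball (0:Y) (r x))) :=
      mem_image_of_mem _ (hg x)
    have h2 : (fun y => r x • y) '' closure ((r x)⁻¹ • (F x ∩ ball (0:Y) (r x)))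
        ⊆ closure ((fun y => r x • y) '' ((r x)⁻¹ • (F x ∩ ball (0:Y) (r x)))) :=
      image_closure_subset_closure_image (continuous_const.smul continuous_id)
    have h3 : (fun y => r x • y) '' ((r x)⁻¹ • (F x ∩ ball (0:Y) (r x)))
        = F x ∩ ball (0:Y) (r x) := by
      ext z
      constructor
      · rintro ⟨w, ⟨v, hv, rfl⟩, rfl⟩
        simpa [smul_inv_smul₀ (hrpos x).ne'] using hv
      · intro hz
        exact ⟨(r x)⁻¹ • z, ⟨z, hz, rfl⟩, by simp [smul_inv_smul₀ (hrpos x).ne']⟩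
    have h4 : r x • g x ∈ closure (F x ∩ ball (0:Y) (r x)) := by
      rw [← h3]; exact h2 h1
    have h5 : closure (F x ∩ ball (0:Y) (r x)) ⊆ F x :=
      closure_minimal inter_subset_left (hcl x)
    exact h5 h4
end
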